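/- arXiv:2504.13464 — 10 statements merged into one kernel-verified Lean document; each statement's English description precedes it below -/
import Mathlib

section
/- Let X be a Banach space over 𝕂 (= ℝ or ℂ), let x, y ∈ X with ‖x‖ = ‖y‖ = 1, let ε ∈ [0,1), and let C ⊆ B_{X*} be a set whose weak*-closed convex hull equals B_{X*} (i.e. B_{X*} is the weak*-closure of the convex hull of C). Then x ⊥_B^ε y if and only if the convex hull of the set { L ∈ 𝕂 : there exists a sequence (x_n*) in C with x_n*(x) → 1 and x_n*(y) → L } has nonempty intersection with the disc D(ε) = { z ∈ 𝕂 : |z| ≤ ε }. -/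
open Filter Topology Metric NormedSpace

private lemma aux_sum_extend {ι M : Type*} [Fintype ι] [AddCommMonoid M] {n : ℕ}
    (e : ι ↪ Fin n) (F : ι → M) (F' : Fin n → M)
    (h1 : ∀ i, F' (e i) = F i) (h2 : ∀ j, (¬∃ i, e i = j) → F' j = 0) :
    ∑ j, F' j = ∑ i, F i := by
  rw [← Finset.sum_subset (Finset.subset_univ (Finset.univ.map e))
    (fun j _ hj => h2 j (fun ⟨i, hi⟩ => hj (Finset.mem_map.2 ⟨i, Finset.mem_univ i, hi⟩))),
    Finset.sum_map]
  exact Finset.sum_congr rfl fun i _ => h1 i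

private lemma aux_isCompact_convexHull {E : Type*} [NormedAddCommGroup E] [NormedSpace ℝ E]
    [FiniteDimensional ℝ E] {Q : Set E} (hQ : IsCompact Q) : IsCompact (convexHull ℝ Q) := by
  rcases Q.eq_empty_or_nonempty with rfl | ⟨q0, hq0⟩
  · simp
  · set n := Module.finrank ℝ E + 1 with hn
    have hmap : convexHull ℝ Q =
        (fun p : (Fin n → ℝ) × (Fin n → E) => ∑ i, p.1 i • p.2 i) ''
          (stdSimplex ℝ (Fin n) ×ˢ Set.univ.pi fun _ => Q) := by
      apply Set.Subset.antisymm
      · intro u hu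
        obtain ⟨ι, hfin, z, wt, hrange, haff, hpos, hsum, hcomb⟩ :=
          eq_pos_convex_span_of_mem_convexHull hu
        have hcard : Fintype.card ι ≤ n := by
          refine le_trans haff.card_le_finrank_succ ?_
          exact Nat.add_le_add_right (Submodule.finrank_le (R := ℝ) (M := E) _) 1
        obtain ⟨e⟩ : Nonempty (ι ↪ Fin n) :=
          Function.Embedding.nonempty_of_card_le (by simpa using hcard)
        classical
        set wt' : Fin n → ℝ := Function.extend e wt 0 with hwt'
        set z' : Fin n → E := Function.extend e z fun _ => q0 with hz'
        have hwe : ∀ i, wt' (e i) = wt i := fun i => e.injective.extend_apply _ _ i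
        have hze : ∀ i, z' (e i) = z i := fun i => e.injective.extend_apply _ _ i
        have hw0 : ∀ j, (¬∃ i, e i = j) → wt' j = 0 := fun j h =>
          Function.extend_apply' _ _ _ h
        have hzq : ∀ j, (¬∃ i, e i = j) → z' j = q0 := fun j h =>
          Function.extend_apply' _ _ _ h
        refine ⟨(wt', z'), ⟨⟨fun j => ?_, ?_⟩, fun j _ => ?_⟩, ?_⟩
        · by_cases h : ∃ i, e i = j
          · obtain ⟨i, rfl⟩ := h
            rw [show (Function.extend (⇑e) wt 0, z').1 = wt' from rfl, hwe]
            exact (hpos i).le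
          · rw [show (Function.extend (⇑e) wt 0, z').1 = wt' from rfl, hw0 j h]
        · show ∑ j, wt' j = 1
          rw [aux_sum_extend e wt wt' hwe hw0]
          exact hsum
        · show z' j ∈ Q
          by_cases h : ∃ i, e i = j
          · obtain ⟨i, rfl⟩ := h
            rw [hze]
            exact hrange (Set.mem_range_self i)
          · rw [hzq j h]
            exact hq0
        · show ∑ j, wt' j • z' j = u
          rw [aux_sum_extend e (fun i => wt i • z i) (fun j => wt' j • z' j)
            (fun i => by show wt' (e i) • z' (e i) = wt i • z i; rw [hwe, hze])
            (fun j h => by show wt' j • z' j = 0; rw [hw0 j h, zero_smul])]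
          exact hcomb
      · rintro _ ⟨⟨wt, z⟩, ⟨hw, hz⟩, rfl⟩
        exact mem_convexHull_of_exists_fintype wt z hw.1 hw.2 (fun i => hz i (Set.mem_univ i)) rfl
    rw [hmap]
    exact (IsCompact.prod (isCompact_stdSimplex (𝕜 := ℝ) (ι := Fin n)) (isCompact_univ_pi fun _ => hQ)).image
      (continuous_finset_sum _ fun i _ => ((continuous_apply i).comp continuous_fst).smul
        ((continuous_apply i).comp continuous_snd))


/-- Let `X` be a Banach space over `𝕜` (= ℝ or ℂ), `x, y` unit vectors,
`ε ∈ [0,1)`, and `C ⊆ B_{X*}` with weak*-closed convex hull equal to `B_{X*}`.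
Then `x ⊥_B^ε y` iff the convex hull of the set of limits `L = lim xₙ*(y)` over sequences
`(xₙ*)` in `C` with `xₙ*(x) → 1` meets the disc `D(ε)`. -/
theorem approx_BJ_orthogonality_via_weakStar_dense_subset
    {𝕜 X : Type*} [RCLike 𝕜] [NormedAddCommGroup X] [NormedSpace 𝕜 X] [CompleteSpace X]
    (x y : X) (hx : ‖x‖ = 1) (hy : ‖y‖ = 1)
    (ε : ℝ) (hε0 : 0 ≤ ε) (hε1 : ε < 1)
    (C : Set (StrongDual 𝕜 X)) (hC : C ⊆ closedBall (0 : StrongDual 𝕜 X) 1)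
    (hCball : closure ((fun φ => StrongDual.toWeakDual φ) '' (convexHull ℝ C)) =
      (fun φ => StrongDual.toWeakDual φ) '' (closedBall (0 : StrongDual 𝕜 X) 1)) :
    (∀ lam : 𝕜, ‖x‖ - ε * ‖lam • y‖ ≤ ‖x + lam • y‖) ↔
      (convexHull ℝ {L : 𝕜 | ∃ φ : ℕ → StrongDual 𝕜 X, (∀ n, φ n ∈ C) ∧
            Tendsto (fun n => φ n x) atTop (𝓝 (1 : 𝕜)) ∧
            Tendsto (fun n => φ n y) atTop (𝓝 L)} ∩
          {z : 𝕜 | ‖z‖ ≤ ε}).Nonempty := by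
  classical
  set Sset : Set 𝕜 := {L : 𝕜 | ∃ φ : ℕ → StrongDual 𝕜 X, (∀ n, φ n ∈ C) ∧
      Tendsto (fun n => φ n x) atTop (𝓝 (1 : 𝕜)) ∧
      Tendsto (fun n => φ n y) atTop (𝓝 L)} with hSset
  constructor
  · intro h
    set A : Set (𝕜 × 𝕜) := (fun φ : StrongDual 𝕜 X => (φ x, φ y)) '' C with hA
    set Q : Set (𝕜 × 𝕜) := closure A with hQdef
    -- C is nonempty
    have hCne : C.Nonempty := by
      rw [← convexHull_nonempty_iff (𝕜 := ℝ)]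
      by_contra hne
      rw [Set.not_nonempty_iff_eq_empty] at hne
      have h0 : StrongDual.toWeakDual (0 : StrongDual 𝕜 X) ∈
          (fun φ => StrongDual.toWeakDual φ) '' (closedBall (0 : StrongDual 𝕜 X) 1) :=
        ⟨0, mem_closedBall_self zero_le_one, rfl⟩
      rw [← hCball, hne] at h0
      simpa using h0
    -- Lemma A : approximate norming by elements of C
    have normC : ∀ (z : X) (δ : ℝ), 0 < δ → ∃ φ ∈ C, ‖z‖ - δ < RCLike.re (φ z) := by
      intro z δ hδ
      have hex : ∃ g ∈ convexHull ℝ C, ‖z‖ - δ < RCLike.re (g z) := by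
        rcases eq_or_ne z 0 with rfl | hz
        · obtain ⟨φ0, hφ0⟩ := hCne
          exact ⟨φ0, subset_convexHull ℝ C hφ0, by simp [hδ]⟩
        · obtain ⟨f0, hf0norm, hf0z⟩ := exists_dual_vector 𝕜 z (norm_ne_zero_iff.2 hz)
          have hf0mem : StrongDual.toWeakDual f0 ∈
              closure ((fun φ => StrongDual.toWeakDual φ) '' (convexHull ℝ C)) := by
            rw [hCball]
            exact ⟨f0, mem_closedBall_zero_iff.2 hf0norm.le, rfl⟩
          have hopen : IsOpen {ψ : WeakDual 𝕜 X | ‖z‖ - δ < RCLike.re (ψ z)} :=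
            isOpen_lt continuous_const (RCLike.continuous_re.comp (WeakDual.eval_continuous z))
          have hmem : StrongDual.toWeakDual f0 ∈ {ψ : WeakDual 𝕜 X | ‖z‖ - δ < RCLike.re (ψ z)} := by
            have : (StrongDual.toWeakDual f0) z = f0 z := rfl
            simp only [Set.mem_setOf_eq, this, hf0z, RCLike.ofReal_re]
            linarith
          obtain ⟨ψ, hψU, hψmem⟩ := _root_.mem_closure_iff.1 hf0mem _ hopen hmem
          obtain ⟨g, hgC, rfl⟩ := hψmem
          exact ⟨g, hgC, hψU⟩
      obtain ⟨g, hgC, hgz⟩ := hex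
      by_contra hcon
      push_neg at hcon
      have hconv : Convex ℝ {φ : StrongDual 𝕜 X | RCLike.re (φ z) ≤ ‖z‖ - δ} := by
        intro φ₁ h₁ φ₂ h₂ a b ha hb hab
        show RCLike.re ((a • φ₁ + b • φ₂) z) ≤ ‖z‖ - δ
        have heval : (a • φ₁ + b • φ₂) z = a • (φ₁ z) + b • (φ₂ z) := by
          simp [ContinuousLinearMap.add_apply, ContinuousLinearMap.smul_apply]
        rw [heval, map_add, RCLike.smul_re, RCLike.smul_re]
        calc a * RCLike.re (φ₁ z) + b * RCLike.re (φ₂ z)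
            ≤ a * (‖z‖ - δ) + b * (‖z‖ - δ) :=
              add_le_add (mul_le_mul_of_nonneg_left h₁ ha) (mul_le_mul_of_nonneg_left h₂ hb)
          _ = ‖z‖ - δ := by rw [← add_mul, hab, one_mul]
      exact absurd (convexHull_min hcon hconv hgC) (not_le.2 hgz)
    -- bounds on Q
    have hQ1 : ∀ p ∈ Q, ‖(p : 𝕜 × 𝕜).1‖ ≤ 1 ∧ ‖(p : 𝕜 × 𝕜).2‖ ≤ 1 := by
      have hsub : Q ⊆ {p : 𝕜 × 𝕜 | ‖p.1‖ ≤ 1 ∧ ‖p.2‖ ≤ 1} := by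
        apply closure_minimal
        · rintro _ ⟨φ, hφ, rfl⟩
          have hφn : ‖φ‖ ≤ 1 := mem_closedBall_zero_iff.1 (hC hφ)
          constructor
          · calc ‖φ x‖ ≤ ‖φ‖ * ‖x‖ := φ.le_opNorm x
              _ ≤ 1 := by rw [hx, mul_one]; exact hφn
          · calc ‖φ y‖ ≤ ‖φ‖ * ‖y‖ := φ.le_opNorm y
              _ ≤ 1 := by rw [hy, mul_one]; exact hφn
        · exact (isClosed_le continuous_fst.norm continuous_const).inter
            (isClosed_le continuous_snd.norm continuous_const)
      exact fun p hp => hsub hp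
    have hQcomp : IsCompact Q := by
      have hbound : Q ⊆ closedBall (0 : 𝕜 × 𝕜) 1 := by
        intro p hp
        rw [mem_closedBall_zero_iff]
        exact max_le (hQ1 p hp).1 (hQ1 p hp).2
      exact (isCompact_closedBall _ _).of_isClosed_subset isClosed_closure hbound
    have hKcomp : IsCompact (convexHull ℝ Q) := aux_isCompact_convexHull hQcomp
    -- separation step
    have hsep : ((convexHull ℝ Q) ∩ ({(1 : 𝕜)} ×ˢ closedBall (0 : 𝕜) ε)).Nonempty := by
      by_contra hdisj
      rw [Set.not_nonempty_iff_eq_empty] at hdisj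
      obtain ⟨f, u, v, hKlt, huv, hTgt⟩ :=
        RCLike.geometric_hahn_banach_compact_closed (𝕜 := 𝕜)
          (convex_convexHull ℝ Q) hKcomp
          ((convex_singleton _).prod (convex_closedBall _ _))
          (isClosed_singleton.prod isClosed_closedBall)
          (Set.disjoint_iff_inter_eq_empty.2 hdisj)
      set α := f ((1 : 𝕜), (0 : 𝕜)) with hα
      set β := f ((0 : 𝕜), (1 : 𝕜)) with hβ
      have hfab : ∀ a b : 𝕜, f (a, b) = a * α + b * β := by
        intro a b
        have hdecomp : ((a, b) : 𝕜 × 𝕜) = a • ((1 : 𝕜), (0 : 𝕜)) + b • ((0 : 𝕜), (1 : 𝕜)) := by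
          simp [Prod.ext_iff]
        rw [hdecomp, map_add, map_smul, map_smul, smul_eq_mul, smul_eq_mul]
      set z : X := α • x + β • y with hzdef
      have hCz : ∀ φ ∈ C, RCLike.re (φ z) < u := by
        intro φ hφ
        have hmem : ((φ x, φ y) : 𝕜 × 𝕜) ∈ convexHull ℝ Q :=
          subset_convexHull ℝ Q (subset_closure ⟨φ, hφ, rfl⟩)
        have hval := hKlt _ hmem
        rw [hfab] at hval
        have heq : φ z = φ x * α + φ y * β := by
          rw [hzdef, map_add, map_smul, map_smul, smul_eq_mul, smul_eq_mul]; ring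
        rw [heq]
        exact hval
      have hzu : ‖z‖ ≤ u := by
        by_contra hlt
        push_neg at hlt
        obtain ⟨φ, hφ, hφz⟩ := normC z (‖z‖ - u) (by linarith)
        have := hCz φ hφ
        linarith
      set b : 𝕜 := -((ε * ‖β‖⁻¹ : ℝ) • (starRingEnd 𝕜) β) with hb
      have hbmem : ((1 : 𝕜), b) ∈ ({(1 : 𝕜)} ×ˢ closedBall (0 : 𝕜) ε) := by
        refine Set.mem_prod.2 ⟨rfl, ?_⟩
        rw [mem_closedBall_zero_iff, hb, norm_neg, norm_smul, RCLike.norm_conj,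
          Real.norm_of_nonneg (mul_nonneg hε0 (inv_nonneg.2 (norm_nonneg β)))]
        rcases eq_or_ne (‖β‖) 0 with h0 | h0
        · rw [h0, mul_zero]
          exact hε0
        · rw [mul_assoc, inv_mul_cancel₀ h0, mul_one]
      have hvb := hTgt _ hbmem
      rw [hfab] at hvb
      have hre : RCLike.re ((1 : 𝕜) * α + b * β) = RCLike.re α - ε * ‖β‖ := by
        have h1 : RCLike.re (b * β) = -(ε * ‖β‖) := by
          rw [hb, neg_mul, map_neg, smul_mul_assoc, RCLike.smul_re, RCLike.conj_mul,
            ← RCLike.ofReal_pow, RCLike.ofReal_re]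
          rcases eq_or_ne (‖β‖) 0 with h0 | h0
          · rw [h0]
            ring
          · field_simp
        rw [one_mul, map_add, h1]
        ring
      rw [hre] at hvb
      have hαle : RCLike.re α ≤ ‖α‖ :=
        le_trans (le_abs_self _) (RCLike.abs_re_le_norm α)
      have hlower : ‖α‖ - ε * ‖β‖ ≤ ‖z‖ := by
        rcases eq_or_ne α 0 with hα0 | hα0
        · rw [hα0, norm_zero]
          have h1 := norm_nonneg z
          have h2 : 0 ≤ ε * ‖β‖ := mul_nonneg hε0 (norm_nonneg β)
          linarith
        · have h1 := h (β / α)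
          rw [hx] at h1
          have e1 : ‖(β / α) • y‖ = ‖β‖ / ‖α‖ := by rw [norm_smul, hy, mul_one, norm_div]
          have e2 : ‖z‖ = ‖α‖ * ‖x + (β / α) • y‖ := by
            have heq : α • (x + (β / α) • y) = z := by
              rw [hzdef, smul_add, smul_smul, mul_comm α (β / α), div_mul_cancel₀ _ hα0]
            rw [← heq, norm_smul]
          rw [e1] at h1
          have hαn : (0 : ℝ) < ‖α‖ := norm_pos_iff.2 hα0
          rw [e2]
          have h3 := mul_le_mul_of_nonneg_left h1 hαn.le
          have e3 : ‖α‖ * (1 - ε * (‖β‖ / ‖α‖)) = ‖α‖ - ε * ‖β‖ := by field_simp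
          linarith
      linarith
    obtain ⟨p, hpK, hpT⟩ := hsep
    rw [Set.mem_prod, Set.mem_singleton_iff, mem_closedBall_zero_iff] at hpT
    -- decomposition step
    obtain ⟨ι, hfin, wt, pts, hwt0, hwt1, hpts, hsum⟩ := mem_convexHull_iff_exists_fintype.1 hpK
    have hfst : ∑ i, wt i • (pts i).1 = (1 : 𝕜) := by
      have h1 := congrArg Prod.fst hsum
      rw [hpT.1] at h1
      rw [← h1, Prod.fst_sum]
      exact Finset.sum_congr rfl fun i _ => (Prod.smul_fst _ _).symm
    have hresum : ∑ i, wt i * RCLike.re (pts i).1 = 1 := by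
      have h2 := congrArg RCLike.re hfst
      rw [map_sum] at h2
      simpa [RCLike.smul_re] using h2
    have hkey : ∀ i, wt i ≠ 0 → (pts i).1 = 1 := by
      intro i hi
      have hall : ∀ j ∈ Finset.univ, 0 ≤ wt j * (1 - RCLike.re (pts j).1) := by
        intro j _
        have hrej : RCLike.re (pts j).1 ≤ 1 :=
          le_trans (le_trans (le_abs_self _) (RCLike.abs_re_le_norm _)) (hQ1 _ (hpts j)).1
        exact mul_nonneg (hwt0 j) (by linarith)
      have hzero : ∑ j, wt j * (1 - RCLike.re (pts j).1) = 0 := by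
        simp only [mul_sub, mul_one, Finset.sum_sub_distrib, hwt1, hresum]
        ring
      have hterm := (Finset.sum_eq_zero_iff_of_nonneg hall).1 hzero i (Finset.mem_univ i)
      have hre1 : RCLike.re (pts i).1 = 1 := by
        rcases mul_eq_zero.1 hterm with hcase | hcase
        · exact absurd hcase hi
        · linarith
      have hnorm : ‖(pts i).1‖ ≤ 1 := (hQ1 _ (hpts i)).1
      have hsq : ‖(pts i).1‖ ^ 2 ≤ 1 := by nlinarith [norm_nonneg (pts i).1]
      rw [RCLike.norm_sq_eq_def, hre1] at hsq
      have him : RCLike.im (pts i).1 = 0 := by nlinarith [sq_nonneg (RCLike.im (pts i).1)]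
      apply RCLike.ext
      · rw [hre1, RCLike.one_re]
      · rw [him, RCLike.one_im]
    have hS : ∀ i, wt i ≠ 0 → (pts i).2 ∈ Sset := by
      intro i hi
      obtain ⟨q, hqA, hqlim⟩ := mem_closure_iff_seq_limit.1 (hpts i)
      choose φ hφC hφeq using hqA
      refine ⟨φ, hφC, ?_, ?_⟩
      · have h1 : Tendsto (fun n => (q n).1) atTop (𝓝 (pts i).1) :=
          ((continuous_fst.tendsto _).comp hqlim)
        rw [hkey i hi] at h1
        exact h1.congr fun n => by rw [← hφeq n]
      · have h2 : Tendsto (fun n => (q n).2) atTop (𝓝 (pts i).2) :=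
          ((continuous_snd.tendsto _).comp hqlim)
        exact h2.congr fun n => by rw [← hφeq n]
    refine ⟨p.2, ?_, hpT.2⟩
    rw [convexHull_eq]
    refine ⟨ι, Finset.univ.filter (fun i => wt i ≠ 0), wt, fun i => (pts i).2,
      fun i _ => hwt0 i, ?_, ?_, ?_⟩
    · rw [Finset.sum_filter_ne_zero]
      exact hwt1
    · intro i hi
      exact hS i (Finset.mem_filter.1 hi).2
    · rw [Finset.centerMass_eq_of_sum_1 _ _ (by rw [Finset.sum_filter_ne_zero]; exact hwt1)]
      have hsnd : ∑ i, wt i • (pts i).2 = p.2 := by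
        have h2 := congrArg Prod.snd hsum
        rw [← h2, Prod.snd_sum]
        exact Finset.sum_congr rfl fun i _ => (Prod.smul_snd _ _).symm
      rw [← hsnd]
      exact Finset.sum_filter_of_ne fun i _ hne => fun h0 => hne (by rw [h0, zero_smul])
  · rintro ⟨w, hwS, hwD⟩ lam
    have hwD' : ‖w‖ ≤ ε := hwD
    set Aset : Set 𝕜 := {L : 𝕜 | ‖(1 : 𝕜) + lam * L‖ ≤ ‖x + lam • y‖} with hAset
    have hSsub : Sset ⊆ Aset := by
      rintro L ⟨φ, hφC, hφx, hφy⟩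
      have hlim : Tendsto (fun n => (φ n) x + lam * (φ n) y) atTop (𝓝 ((1 : 𝕜) + lam * L)) :=
        hφx.add (hφy.const_mul lam)
      refine le_of_tendsto hlim.norm (Eventually.of_forall fun n => ?_)
      have heq : (φ n) x + lam * (φ n) y = (φ n) (x + lam • y) := by
        rw [map_add, map_smul, smul_eq_mul]
      rw [heq]
      calc ‖(φ n) (x + lam • y)‖ ≤ ‖φ n‖ * ‖x + lam • y‖ := (φ n).le_opNorm _
        _ ≤ 1 * ‖x + lam • y‖ :=
            mul_le_mul_of_nonneg_right (mem_closedBall_zero_iff.1 (hC (hφC n))) (norm_nonneg _)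
        _ = ‖x + lam • y‖ := one_mul _
    have hconv : Convex ℝ Aset := by
      intro L₁ h₁ L₂ h₂ a c ha hc hac
      show ‖(1 : 𝕜) + lam * (a • L₁ + c • L₂)‖ ≤ ‖x + lam • y‖
      have hac' : ((a : 𝕜) + (c : 𝕜)) = 1 := by
        rw [← RCLike.ofReal_add, hac, RCLike.ofReal_one]
      have hsplit : (1 : 𝕜) + lam * (a • L₁ + c • L₂) =
          a • ((1 : 𝕜) + lam * L₁) + c • ((1 : 𝕜) + lam * L₂) := by
        simp only [RCLike.real_smul_eq_coe_mul]
        linear_combination -hac'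
      rw [hsplit]
      calc ‖a • ((1 : 𝕜) + lam * L₁) + c • ((1 : 𝕜) + lam * L₂)‖
          ≤ ‖a • ((1 : 𝕜) + lam * L₁)‖ + ‖c • ((1 : 𝕜) + lam * L₂)‖ := norm_add_le _ _
        _ = a * ‖(1 : 𝕜) + lam * L₁‖ + c * ‖(1 : 𝕜) + lam * L₂‖ := by
            rw [norm_smul, norm_smul, Real.norm_of_nonneg ha, Real.norm_of_nonneg hc]
        _ ≤ a * ‖x + lam • y‖ + c * ‖x + lam • y‖ :=
            add_le_add (mul_le_mul_of_nonneg_left h₁ ha) (mul_le_mul_of_nonneg_left h₂ hc)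
        _ = ‖x + lam • y‖ := by rw [← add_mul, hac, one_mul]
    have hwA : w ∈ Aset := convexHull_min hSsub hconv hwS
    have h1 : (1 : ℝ) - ‖lam‖ * ‖w‖ ≤ ‖(1 : 𝕜) + lam * w‖ := by
      have h2 := norm_add_le ((1 : 𝕜) + lam * w) (-(lam * w))
      simp only [add_neg_cancel_right, norm_one, norm_neg, norm_mul] at h2
      linarith
    have h3 : ε * ‖lam • y‖ = ε * ‖lam‖ := by rw [norm_smul, hy, mul_one]
    rw [hx, h3]
    have h4 : ‖lam‖ * ‖w‖ ≤ ε * ‖lam‖ := by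
      calc ‖lam‖ * ‖w‖ ≤ ‖lam‖ * ε := mul_le_mul_of_nonneg_left hwD' (norm_nonneg _)
        _ = ε * ‖lam‖ := mul_comm _ _
    have h5 : ‖(1 : 𝕜) + lam * w‖ ≤ ‖x + lam • y‖ := hwA
    linarith
end

section
/- Let Y be a closed proper linear subspace of a Banach space X. If the weak*-closure of the linear span of 𝒥_Y equals X*, then Y is anti-coproximinal in X. Moreover, if Sm(X) ∩ Y is dense in Y, then Y is anti-coproximinal in X if and only if the weak*-closure of the linear span of 𝒥_Y equals X*. -/
open Filter Topology Metric NormedSpace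

/-- The set of supporting functionals of `x`. -/
def suppFunctionals (𝕜 : Type*) {X : Type*} [RCLike 𝕜] [NormedAddCommGroup X]
    [NormedSpace 𝕜 X] (x : X) : Set (StrongDual 𝕜 X) :=
  {φ | ‖φ‖ = 1 ∧ φ x = (‖x‖ : 𝕜)}

/-- The set of smooth points of `X`: nonzero points with a unique supporting functional. -/
def smoothPoints (𝕜 : Type*) {X : Type*} [RCLike 𝕜] [NormedAddCommGroup X]
    [NormedSpace 𝕜 X] : Set X :=
  {x | x ≠ 0 ∧ ∃ φ, suppFunctionals 𝕜 x = {φ}}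

/-- `𝒥_Y`: norm-one functionals attaining the value `1` at some smooth unit vector of `Y`. -/
def smoothSuppSet (𝕜 : Type*) {X : Type*} [RCLike 𝕜] [NormedAddCommGroup X]
    [NormedSpace 𝕜 X] (Y : Submodule 𝕜 X) : Set (StrongDual 𝕜 X) :=
  {φ | ‖φ‖ = 1 ∧ ∃ y, y ∈ Y ∧ y ∈ smoothPoints 𝕜 ∧ ‖y‖ = 1 ∧ φ y = 1}

/-- `Y` is anti-coproximinal: no nonzero `x` is Birkhoff–James orthogonal to all of `Y`. -/
def AntiCoproximinal (𝕜 : Type*) {X : Type*} [RCLike 𝕜] [NormedAddCommGroup X]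
    [NormedSpace 𝕜 X] (S : Set X) : Prop :=
  ∀ x : X, x ≠ 0 → ∃ y ∈ S, ¬ ∀ lam : 𝕜, ‖y‖ ≤ ‖y + lam • x‖

section Auxiliary

variable {𝕜 X : Type*} [RCLike 𝕜] [NormedAddCommGroup X] [NormedSpace 𝕜 X]

/-- If `y ⊥_B x` and `y ≠ 0`, there is a supporting functional of `y` killing `x`
(James' characterization, via the quotient by `span {x}`). -/
lemma exists_supp_vanish (x y : X) (hy : y ≠ 0)
    (horth : ∀ lam : 𝕜, ‖y‖ ≤ ‖y + lam • x‖) :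
    ∃ ψ : StrongDual 𝕜 X, ‖ψ‖ = 1 ∧ ψ y = (‖y‖ : 𝕜) ∧ ψ x = 0 := by
  set L : Submodule 𝕜 X := Submodule.span 𝕜 {x} with hL
  haveI : FiniteDimensional 𝕜 L := by
    apply FiniteDimensional.span_of_finite
    exact Set.finite_singleton x
  haveI hLc : IsClosed (L : Set X) := Submodule.closed_of_finiteDimensional L
  have hmk_le : ‖(Submodule.Quotient.mk y : X ⧸ L)‖ ≤ ‖y‖ := Submodule.Quotient.norm_mk_le L y
  have hmk_ge : ‖y‖ ≤ ‖(Submodule.Quotient.mk y : X ⧸ L)‖ := by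
    refine le_of_forall_pos_le_add fun ε hε => ?_
    obtain ⟨m, hm, hmn⟩ := Submodule.Quotient.norm_mk_lt (Submodule.Quotient.mk y : X ⧸ L) hε
    have hmem : m - y ∈ L := (Submodule.Quotient.eq L).mp hm
    obtain ⟨c, hc⟩ := Submodule.mem_span_singleton.mp hmem
    have : m = y + c • x := by rw [hc]; abel
    calc ‖y‖ ≤ ‖y + c • x‖ := horth c
    _ = ‖m‖ := by rw [this]
    _ ≤ ‖(Submodule.Quotient.mk y : X ⧸ L)‖ + ε := hmn.le
  have hmk : ‖(Submodule.Quotient.mk y : X ⧸ L)‖ = ‖y‖ := le_antisymm hmk_le hmk_ge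
  have hmkne : (Submodule.Quotient.mk y : X ⧸ L) ≠ 0 := by
    intro h
    rw [h, norm_zero] at hmk
    exact hy (norm_eq_zero.mp hmk.symm)
  obtain ⟨g, hg1, hg2⟩ := exists_dual_vector 𝕜 (Submodule.Quotient.mk y : X ⧸ L) (norm_ne_zero_iff.mpr hmkne)
  let π : X →L[𝕜] X ⧸ L := LinearMap.mkContinuous L.mkQ 1 (fun m => by
    simpa using Submodule.Quotient.norm_mk_le L m)
  have hπ : ∀ m : X, π m = Submodule.Quotient.mk m := fun m => rfl
  refine ⟨g.comp π, ?_, ?_, ?_⟩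
  · refine le_antisymm ?_ ?_
    · refine ContinuousLinearMap.opNorm_le_bound _ zero_le_one fun m => ?_
      calc ‖g (π m)‖ ≤ ‖g‖ * ‖π m‖ := g.le_opNorm _
      _ = ‖(Submodule.Quotient.mk m : X ⧸ L)‖ := by rw [hg1, one_mul, hπ]
      _ ≤ 1 * ‖m‖ := by rw [one_mul]; exact Submodule.Quotient.norm_mk_le L m
    · have h1 : ‖(g.comp π) y‖ = ‖y‖ := by
        simp only [ContinuousLinearMap.comp_apply, hπ, hg2, hmk]
        exact RCLike.norm_ofReal _ |>.trans (abs_of_nonneg (norm_nonneg y))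
      have h2 : ‖(g.comp π) y‖ ≤ ‖g.comp π‖ * ‖y‖ := (g.comp π).le_opNorm y
      have hypos : 0 < ‖y‖ := norm_pos_iff.mpr hy
      nlinarith [h2]
  · simp only [ContinuousLinearMap.comp_apply, hπ, hg2, hmk]
  · have : (Submodule.Quotient.mk x : X ⧸ L) = 0 :=
      (Submodule.Quotient.mk_eq_zero L).mpr (Submodule.mem_span_singleton_self x)
    simp only [ContinuousLinearMap.comp_apply, hπ, this, map_zero]

/-- A separating set of functionals has weak*-dense span. -/
lemma dense_span_of_separating (S : Set (StrongDual 𝕜 X))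
    (hsep : ∀ x : X, (∀ φ ∈ S, φ x = 0) → x = 0) :
    closure ((fun φ => StrongDual.toWeakDual φ) ''
      ((Submodule.span 𝕜 S : Submodule 𝕜 (StrongDual 𝕜 X)) : Set (StrongDual 𝕜 X))) = Set.univ := by
  classical
  ext ψ
  simp only [Set.mem_univ, iff_true]
  rw [mem_closure_iff_nhds_zero]
  intro U hU
  obtain ⟨V, hV, hVU⟩ := (LinearMap.hasBasis_weakBilin (topDualPairing 𝕜 X)).mem_iff.mp hU
  obtain ⟨t, r, hr, rfl⟩ := (SeminormFamily.basisSets_iff _).mp hV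
  set ψ' : StrongDual 𝕜 X := WeakDual.toStrongDual ψ with hψ'
  let P : StrongDual 𝕜 X →ₗ[𝕜] (t → 𝕜) := LinearMap.pi (fun i => (topDualPairing 𝕜 X).flip (i : X))
  set W := Submodule.map P (Submodule.span 𝕜 S) with hW
  have key : P ψ' ∈ W := by
    by_contra hnW
    obtain ⟨f, hf0, hfbot⟩ := Submodule.exists_dual_map_eq_bot_of_notMem hnW inferInstance
    set u : X := ∑ i : t, (f fun j => if i = j then 1 else 0) • (i : X) with hu
    have hfP : ∀ φ : StrongDual 𝕜 X, f (P φ) = φ u := by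
      intro φ
      rw [LinearMap.pi_apply_eq_sum_univ f (P φ), hu, map_sum]
      refine Finset.sum_congr rfl fun i _ => ?_
      rw [map_smul]
      simp only [P, LinearMap.pi_apply, LinearMap.flip_apply, topDualPairing_apply]
      rw [smul_eq_mul, smul_eq_mul, mul_comm]
    have hu0 : u = 0 := by
      refine hsep u fun φ hφ => ?_
      have h1 : P φ ∈ W := Submodule.mem_map_of_mem (Submodule.subset_span hφ)
      have h2 : f (P φ) ∈ Submodule.map f W := Submodule.mem_map_of_mem h1
      rw [hfbot, Submodule.mem_bot] at h2
      rw [← hfP φ]; exact h2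
    apply hf0
    rw [hfP ψ', hu0, map_zero]
  obtain ⟨φ, hφspan, hPφ⟩ := key
  refine ⟨StrongDual.toWeakDual φ, Set.mem_image_of_mem _ hφspan, hVU ?_⟩
  simp only [id]
  refine (Seminorm.mem_ball_zero _ (y := (φ - ψ' : StrongDual 𝕜 X))).mpr ?_
  refine Seminorm.finset_sup_apply_lt hr fun i hi => ?_
  have hval : φ (i : X) = ψ' (i : X) := congrFun hPφ ⟨i, hi⟩
  simp only [LinearMap.toSeminormFamily_apply, map_sub, LinearMap.sub_apply,
    topDualPairing_apply]
  show ‖φ i - ψ' i‖ < r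
  rw [hval, sub_self, norm_zero]
  exact hr

lemma suppFunctionals_smul {r : ℝ} (hr : 0 < r) (y : X) :
    suppFunctionals 𝕜 ((r : 𝕜) • y) = suppFunctionals 𝕜 y := by
  ext φ
  simp only [suppFunctionals, Set.mem_setOf_eq, map_smul, norm_smul, RCLike.norm_ofReal,
    abs_of_pos hr]
  refine and_congr_right fun _ => ?_
  rw [smul_eq_mul, RCLike.ofReal_mul]
  constructor
  · intro h
    exact mul_left_cancel₀ (by exact_mod_cast hr.ne' : (r : 𝕜) ≠ 0) h
  · intro h; rw [h]

variable (Y : Submodule 𝕜 X)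

/-- If every `y ∈ Y` is Birkhoff–James orthogonal to `x`, then every functional in `𝒥_Y`
kills `x`. -/
lemma vanish_of_orth (x : X)
    (horth : ∀ y ∈ Y, ∀ lam : 𝕜, ‖y‖ ≤ ‖y + lam • x‖) :
    ∀ φ ∈ smoothSuppSet 𝕜 Y, φ x = 0 := by
  rintro φ ⟨hφn, y, hyY, ⟨hy0, χ, hχ⟩, hy1, hφy⟩
  have hφsupp : φ ∈ suppFunctionals 𝕜 y := ⟨hφn, by rw [hy1, RCLike.ofReal_one]; exact hφy⟩
  obtain ⟨ψ, hψn, hψy, hψx⟩ := exists_supp_vanish x y hy0 (horth y hyY)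
  have hψsupp : ψ ∈ suppFunctionals 𝕜 y := ⟨hψn, hψy⟩
  rw [hχ, Set.mem_singleton_iff] at hφsupp hψsupp
  rw [hφsupp, ← hψsupp]
  exact hψx

/-- If every functional in `𝒥_Y` kills `x`, and smooth points of `Y` are dense in `Y`, then
every `y ∈ Y` is Birkhoff–James orthogonal to `x`. -/
lemma orth_of_vanish (hdense : (Y : Set X) ⊆ closure (smoothPoints 𝕜 ∩ (Y : Set X))) (x : X)
    (hvanish : ∀ φ ∈ smoothSuppSet 𝕜 Y, φ x = 0) :
    ∀ y ∈ Y, ∀ lam : 𝕜, ‖y‖ ≤ ‖y + lam • x‖ := by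
  have hsm : ∀ y ∈ smoothPoints 𝕜 ∩ (Y : Set X), ∀ lam : 𝕜, ‖y‖ ≤ ‖y + lam • x‖ := by
    rintro y ⟨⟨hy0, χ, hχ⟩, hyY⟩ lam
    have hynorm : (0 : ℝ) < ‖y‖ := norm_pos_iff.mpr hy0
    set r : ℝ := ‖y‖⁻¹ with hrdef
    have hr : 0 < r := inv_pos.mpr hynorm
    set y' : X := (r : 𝕜) • y with hy'def
    have hy'Y : y' ∈ Y := Y.smul_mem _ hyY
    have hy'norm : ‖y'‖ = 1 := by
      rw [hy'def, norm_smul, RCLike.norm_ofReal, abs_of_pos hr, hrdef,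
        inv_mul_cancel₀ hynorm.ne']
    have hy'0 : y' ≠ 0 := by
      intro h; rw [h, norm_zero] at hy'norm; exact zero_ne_one hy'norm
    have hsupp' : suppFunctionals 𝕜 y' = {χ} := by
      rw [hy'def, suppFunctionals_smul hr, hχ]
    have hχsupp' : χ ∈ suppFunctionals 𝕜 y' := by rw [hsupp']; rfl
    have hχsupp : χ ∈ suppFunctionals 𝕜 y := by rw [hχ]; rfl
    have hχJ : χ ∈ smoothSuppSet 𝕜 Y := by
      refine ⟨hχsupp'.1, y', hy'Y, ⟨hy'0, χ, hsupp'⟩, hy'norm, ?_⟩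
      rw [hχsupp'.2, hy'norm, RCLike.ofReal_one]
    have hχx : χ x = 0 := hvanish χ hχJ
    have hval : χ (y + lam • x) = (‖y‖ : 𝕜) := by
      rw [map_add, map_smul, hχx, smul_zero, add_zero, hχsupp.2]
    calc ‖y‖ = ‖χ (y + lam • x)‖ := by
          rw [hval]
          exact (RCLike.norm_ofReal _ |>.trans (abs_of_nonneg (norm_nonneg y))).symm
    _ ≤ ‖χ‖ * ‖y + lam • x‖ := χ.le_opNorm _
    _ = ‖y + lam • x‖ := by rw [hχsupp.1, one_mul]
  intro y hyY lam
  have hmem : y ∈ closure (smoothPoints 𝕜 ∩ (Y : Set X)) := hdense hyY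
  have hC : IsClosed {z : X | ‖z‖ ≤ ‖z + lam • x‖} :=
    isClosed_le continuous_norm ((continuous_id.add continuous_const).norm)
  have := closure_minimal (fun z hz => hsm z hz lam) hC hmem
  exact this

end Auxiliary

/-- If the weak*-closure of `span 𝒥_Y` is all of `X*`, then the closed proper
subspace `Y` is anti-coproximinal; moreover, if the smooth points of `X` lying in `Y` are dense
in `Y`, the converse holds as well. -/
theorem antiCoproximinal_of_weakStar_dense_span
    {𝕜 X : Type*} [RCLike 𝕜] [NormedAddCommGroup X] [NormedSpace 𝕜 X] [CompleteSpace X]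
    (Y : Submodule 𝕜 X) (hYc : IsClosed (Y : Set X)) (hYp : Y ≠ ⊤) :
    (closure ((fun φ => StrongDual.toWeakDual φ) ''
        ((Submodule.span 𝕜 (smoothSuppSet 𝕜 Y) : Submodule 𝕜 (StrongDual 𝕜 X)) : Set (StrongDual 𝕜 X))) =
          Set.univ →
      AntiCoproximinal 𝕜 (Y : Set X)) ∧
    ((Y : Set X) ⊆ closure (smoothPoints 𝕜 ∩ (Y : Set X)) →
      (AntiCoproximinal 𝕜 (Y : Set X) ↔
        closure ((fun φ => StrongDual.toWeakDual φ) ''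
          ((Submodule.span 𝕜 (smoothSuppSet 𝕜 Y) : Submodule 𝕜 (StrongDual 𝕜 X)) : Set (StrongDual 𝕜 X))) =
            Set.univ)) := by
  have main1 : closure ((fun φ => StrongDual.toWeakDual φ) ''
      ((Submodule.span 𝕜 (smoothSuppSet 𝕜 Y) : Submodule 𝕜 (StrongDual 𝕜 X)) : Set (StrongDual 𝕜 X))) =
        Set.univ → AntiCoproximinal 𝕜 (Y : Set X) := by
    intro hcl x hx
    by_contra hcon
    push_neg at hcon
    have horth : ∀ y ∈ Y, ∀ lam : 𝕜, ‖y‖ ≤ ‖y + lam • x‖ := fun y hy => hcon y hy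
    have hv : ∀ φ ∈ smoothSuppSet 𝕜 Y, φ x = 0 := vanish_of_orth Y x horth
    have hspan : Submodule.span 𝕜 (smoothSuppSet 𝕜 Y) ≤
        LinearMap.ker ((topDualPairing 𝕜 X).flip x) := by
      rw [Submodule.span_le]
      intro φ hφ
      simp only [SetLike.mem_coe, LinearMap.mem_ker, LinearMap.flip_apply, topDualPairing_apply]
      exact hv φ hφ
    have hclosed : IsClosed {ψ : WeakDual 𝕜 X | ψ x = 0} :=
      isClosed_eq (WeakDual.eval_continuous x) continuous_const
    have hsub : closure ((fun φ => StrongDual.toWeakDual φ) ''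
        ((Submodule.span 𝕜 (smoothSuppSet 𝕜 Y) : Submodule 𝕜 (StrongDual 𝕜 X)) : Set (StrongDual 𝕜 X))) ⊆
          {ψ : WeakDual 𝕜 X | ψ x = 0} := by
      refine closure_minimal ?_ hclosed
      rintro _ ⟨φ, hφ, rfl⟩
      have := hspan hφ
      exact (by simpa only [LinearMap.mem_ker, LinearMap.flip_apply, topDualPairing_apply] using this : φ x = 0)
    rw [hcl] at hsub
    obtain ⟨g, hg1, hg2⟩ := exists_dual_vector 𝕜 x (norm_ne_zero_iff.mpr hx)
    have hgx : (StrongDual.toWeakDual g) x = 0 := hsub (Set.mem_univ _)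
    have : (‖x‖ : 𝕜) = 0 := by rw [← hg2]; exact hgx
    have : ‖x‖ = 0 := by exact_mod_cast this
    exact hx (norm_eq_zero.mp this)
  refine ⟨main1, fun hdense => ⟨?_, main1⟩⟩
  intro hac
  refine dense_span_of_separating _ fun x hx0 => ?_
  by_contra hxne
  obtain ⟨y, hyY, hn⟩ := hac x hxne
  exact hn fun lam => orth_of_vanish Y hdense x hx0 y hyY lam
end

section
/- Let Y be a finite-dimensional polyhedral linear subspace of a real Banach space X, and suppose Y is strongly anti-coproximinal in X. Then: (i) for any two distinct maximal faces F₁, F₂ of B_X, one has F₁ ∩ Y ≠ F₂ ∩ Y; and (ii) X is a finite-dimensional polyhedral Banach space. -/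
open Filter Topology Metric Set

/-- `F` is a face of the closed unit ball of the real Banach space `X`. -/
def IsFaceOfBall {X : Type*} [NormedAddCommGroup X] [NormedSpace ℝ X] (F : Set X) : Prop :=
  (F ⊆ {x | ‖x‖ = 1}) ∧
  (∀ u ∈ F, ∀ v ∈ F, ∀ t : ℝ, 0 ≤ t → t ≤ 1 → (1 - t) • u + t • v ∈ F) ∧
  (∀ u v : X, ‖u‖ ≤ 1 → ‖v‖ ≤ 1 → (2⁻¹ : ℝ) • (u + v) ∈ F → u ∈ F ∧ v ∈ F)

/-- `F` is a maximal face of the closed unit ball. -/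
def IsMaximalFaceOfBall {X : Type*} [NormedAddCommGroup X] [NormedSpace ℝ X]
    (F : Set X) : Prop :=
  IsFaceOfBall F ∧ ∀ F' : Set X, IsFaceOfBall F' → F ⊆ F' → F' = F

/-- `S` is strongly anti-coproximinal (real scalars). -/
def StronglyAntiCoproximinal {X : Type*} [NormedAddCommGroup X] [NormedSpace ℝ X]
    (S : Set X) : Prop :=
  ∀ x : X, x ≠ 0 → ∀ ε : ℝ, 0 ≤ ε → ε < 1 →
    ∃ y ∈ S, ¬ ∀ lam : ℝ, ‖y‖ - ε * ‖lam • x‖ ≤ ‖y + lam • x‖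

section Aux

variable {X : Type*} [NormedAddCommGroup X] [NormedSpace ℝ X]

lemma apply_le_norm {g : X →L[ℝ] ℝ} (hg : ‖g‖ ≤ 1) (v : X) : g v ≤ ‖v‖ := by
  have h1 := g.le_opNorm v
  have h2 : ‖g‖ * ‖v‖ ≤ 1 * ‖v‖ := mul_le_mul_of_nonneg_right hg (norm_nonneg v)
  calc g v ≤ |g v| := le_abs_self _
    _ = ‖g v‖ := (Real.norm_eq_abs _).symm
    _ ≤ ‖g‖ * ‖v‖ := h1
    _ ≤ 1 * ‖v‖ := h2
    _ = ‖v‖ := one_mul _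

lemma abs_apply_le_one {g : X →L[ℝ] ℝ} (hg : ‖g‖ ≤ 1) {v : X} (hv : ‖v‖ ≤ 1) : |g v| ≤ 1 := by
  have h1 := g.le_opNorm v
  rw [Real.norm_eq_abs] at h1
  nlinarith [norm_nonneg v, norm_nonneg g, abs_nonneg (g v)]

lemma one_le_norm_of_apply_eq_one {g : X →L[ℝ] ℝ} (hg : ‖g‖ ≤ 1) {v : X} (hv : g v = 1) :
    1 ≤ ‖v‖ := by
  have h1 : (1:ℝ) ≤ ‖g v‖ := by rw [hv]; simp
  have h2 := g.le_opNorm v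
  nlinarith [norm_nonneg v]

lemma faceOfFunctional (g : X →L[ℝ] ℝ) (hg : ‖g‖ ≤ 1) :
    IsFaceOfBall {v : X | ‖v‖ = 1 ∧ g v = 1} := by
  refine ⟨fun v hv => hv.1, ?_, ?_⟩
  · rintro u ⟨hu1, hu2⟩ v ⟨hv1, hv2⟩ t ht0 ht1
    have hgc : g ((1 - t) • u + t • v) = 1 := by
      rw [map_add, map_smul, map_smul, smul_eq_mul, smul_eq_mul, hu2, hv2]; ring
    have hle : ‖(1 - t) • u + t • v‖ ≤ 1 := by
      calc ‖(1 - t) • u + t • v‖ ≤ ‖(1-t)•u‖ + ‖t•v‖ := norm_add_le _ _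
        _ = |1-t| * ‖u‖ + |t| * ‖v‖ := by rw [norm_smul, norm_smul, Real.norm_eq_abs, Real.norm_eq_abs]
        _ = 1 := by rw [hu1, hv1, abs_of_nonneg (by linarith : (0:ℝ) ≤ 1 - t), abs_of_nonneg ht0]; ring
    exact ⟨le_antisymm hle (one_le_norm_of_apply_eq_one hg hgc), hgc⟩
  · rintro u v hu hv ⟨hm1, hm2⟩
    have hgu : g u ≤ 1 := (apply_le_norm hg u).trans hu
    have hgv : g v ≤ 1 := (apply_le_norm hg v).trans hv
    have hsum : g u + g v = 2 := by
      have h3 : g ((2⁻¹:ℝ) • (u+v)) = 1 := hm2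
      rw [map_smul, map_add, smul_eq_mul] at h3; linarith
    have hgu1 : g u = 1 := by linarith
    have hgv1 : g v = 1 := by linarith
    exact ⟨⟨le_antisymm hu (one_le_norm_of_apply_eq_one hg hgu1), hgu1⟩,
      ⟨le_antisymm hv (one_le_norm_of_apply_eq_one hg hgv1), hgv1⟩⟩

lemma IsFaceOfBall.convex {F : Set X} (hF : IsFaceOfBall F) : Convex ℝ F := by
  intro u hu v hv a b ha hb hab
  have h := hF.2.1 u hu v hv b hb (by linarith)
  have hab' : a = 1 - b := by linarith
  rw [hab']; exact h

lemma exists_functional_of_face {F : Set X} (hF : IsFaceOfBall F) (hne : F.Nonempty) :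
    ∃ g : X →L[ℝ] ℝ, ‖g‖ ≤ 1 ∧ ∀ v ∈ F, g v = 1 := by
  have hdisj : Disjoint (ball (0:X) 1) F := by
    rw [Set.disjoint_left]
    intro v hv hvF
    rw [mem_ball, dist_zero_right] at hv
    have h1 : ‖v‖ = 1 := hF.1 hvF
    rw [h1] at hv
    exact lt_irrefl _ hv
  obtain ⟨f, u, hfu, huf⟩ :=
    geometric_hahn_banach_open (convex_ball (0:X) 1) isOpen_ball hF.convex hdisj
  have hu0 : (0:ℝ) < u := by
    have h0 := hfu 0 (by simp)
    simpa using h0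
  have hclosed : ∀ w : X, ‖w‖ ≤ 1 → f w ≤ u := by
    intro w hw
    have hmem : w ∈ closedBall (0:X) 1 := mem_closedBall_zero_iff.mpr hw
    rw [← closure_ball (0:X) one_ne_zero] at hmem
    have hsubset : closure (ball (0:X) 1) ⊆ {z | f z ≤ u} :=
      closure_minimal (fun z hz => (hfu z hz).le) (isClosed_le f.continuous continuous_const)
    exact hsubset hmem
  have hbound : ∀ w : X, ‖f w‖ ≤ u * ‖w‖ := by
    intro w
    by_cases hw : w = 0
    · simp [hw]
    have hwn : (0:ℝ) < ‖w‖ := norm_pos_iff.mpr hw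
    have hn1 : ‖‖w‖⁻¹ • w‖ ≤ 1 := by
      rw [norm_smul, Real.norm_eq_abs, abs_of_nonneg (by positivity)]
      field_simp
      exact le_rfl
    have h1 : f (‖w‖⁻¹ • w) ≤ u := hclosed _ hn1
    have h2 : f (-(‖w‖⁻¹ • w)) ≤ u := hclosed _ (by rwa [norm_neg])
    rw [map_smul, smul_eq_mul] at h1
    rw [map_neg, map_smul, smul_eq_mul] at h2
    have h1' : f w ≤ ‖w‖ * u := by
      have h3 := mul_le_mul_of_nonneg_left h1 hwn.le
      rwa [← mul_assoc, mul_inv_cancel₀ hwn.ne', one_mul] at h3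
    have h2' : -f w ≤ ‖w‖ * u := by
      have h3 := mul_le_mul_of_nonneg_left h2 hwn.le
      rwa [mul_neg, ← mul_assoc, mul_inv_cancel₀ hwn.ne', one_mul] at h3
    rw [Real.norm_eq_abs, abs_le]
    constructor
    · linarith
    · linarith
  have hfnorm : ‖f‖ ≤ u := f.opNorm_le_bound hu0.le hbound
  refine ⟨u⁻¹ • f, ?_, ?_⟩
  · rw [norm_smul u⁻¹ f, Real.norm_eq_abs, abs_of_pos (inv_pos.mpr hu0)]
    calc u⁻¹ * ‖f‖ ≤ u⁻¹ * u := mul_le_mul_of_nonneg_left hfnorm (inv_pos.mpr hu0).le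
      _ = 1 := inv_mul_cancel₀ hu0.ne'
  · intro v hv
    have hnv : ‖v‖ = 1 := hF.1 hv
    have hge : (1:ℝ) ≤ u⁻¹ * f v := by
      rw [← inv_mul_cancel₀ hu0.ne']
      exact mul_le_mul_of_nonneg_left (huf v hv) (inv_pos.mpr hu0).le
    have hle : u⁻¹ * f v ≤ 1 := by
      have h3 : (u⁻¹ • f) v ≤ ‖v‖ := by
        apply apply_le_norm _ v
        rw [norm_smul u⁻¹ f, Real.norm_eq_abs, abs_of_pos (inv_pos.mpr hu0)]
        calc u⁻¹ * ‖f‖ ≤ u⁻¹ * u := mul_le_mul_of_nonneg_left hfnorm (inv_pos.mpr hu0).le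
          _ = 1 := inv_mul_cancel₀ hu0.ne'
      rw [hnv] at h3
      exact h3
    have : u⁻¹ * f v = 1 := le_antisymm hle hge
    simpa using this

lemma maximal_face_rep {F : Set X} (hF : IsMaximalFaceOfBall F) (hne : F.Nonempty) :
    ∃ g : X →L[ℝ] ℝ, ‖g‖ ≤ 1 ∧ F = {v : X | ‖v‖ = 1 ∧ g v = 1} := by
  obtain ⟨g, hg1, hg2⟩ := exists_functional_of_face hF.1 hne
  exact ⟨g, hg1, (hF.2 _ (faceOfFunctional g hg1) (fun v hv => ⟨hF.1.1 hv, hg2 v hv⟩)).symm⟩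

lemma mem_face_absorb {F Φ : Set X}
    (hFs : F ⊆ {x : X | ‖x‖ = 1}) (hFc : Convex ℝ F)
    (hΦ : ∀ u v : X, ‖u‖ ≤ 1 → ‖v‖ ≤ 1 → (2⁻¹ : ℝ) • (u + v) ∈ Φ → u ∈ Φ ∧ v ∈ Φ)
    {x₀ : X} (hx₀ : x₀ ∈ intrinsicInterior ℝ F) (hx₀Φ : x₀ ∈ Φ) : F ⊆ Φ := by
  have hx₀F : x₀ ∈ F := intrinsicInterior_subset hx₀
  intro z hz
  -- Step 1: we can move slightly past `x₀` away from `z` while staying in `F`.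
  obtain ⟨δ, hδpos, hδF⟩ : ∃ δ : ℝ, 0 < δ ∧ x₀ + δ • (x₀ - z) ∈ F := by
    obtain ⟨y, hy, hyx⟩ := mem_intrinsicInterior.mp hx₀
    obtain ⟨V, hVopen, hVpre⟩ := isOpen_induced_iff.mp
      (isOpen_interior (s := ((↑) ⁻¹' F : Set (affineSpan ℝ F))))
    have hx₀V : x₀ ∈ V := by
      rw [← hyx]
      have : y ∈ Subtype.val ⁻¹' V := by rw [hVpre]; exact hy
      exact this
    have hcont : Continuous (fun t : ℝ => x₀ + t • (x₀ - z)) := by continuity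
    have hpre : IsOpen ((fun t : ℝ => x₀ + t • (x₀ - z)) ⁻¹' V) := hVopen.preimage hcont
    have h0mem : (0:ℝ) ∈ (fun t : ℝ => x₀ + t • (x₀ - z)) ⁻¹' V := by
      simp [hx₀V]
    obtain ⟨δ', hδ'0, hball⟩ := Metric.isOpen_iff.mp hpre 0 h0mem
    set δ : ℝ := δ' / 2 with hδdef
    have hδ0 : 0 < δ := by positivity
    have hδV : x₀ + δ • (x₀ - z) ∈ V := by
      apply hball
      rw [Metric.mem_ball, Real.dist_eq, sub_zero, abs_of_pos hδ0]
      rw [hδdef]; linarith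
    have hδspan : x₀ + δ • (x₀ - z) ∈ affineSpan ℝ F := by
      have h1 : z ∈ affineSpan ℝ F := subset_affineSpan ℝ F hz
      have h2 : x₀ ∈ affineSpan ℝ F := subset_affineSpan ℝ F hx₀F
      have h3 := AffineMap.lineMap_mem (1 + δ) h1 h2
      have h4 : AffineMap.lineMap z x₀ (1 + δ) = x₀ + δ • (x₀ - z) := by
        rw [AffineMap.lineMap_apply_module]
        module
      rwa [h4] at h3
    have h5 : (⟨x₀ + δ • (x₀ - z), hδspan⟩ : affineSpan ℝ F) ∈ Subtype.val ⁻¹' V := hδV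
    rw [hVpre] at h5
    have h6 : (⟨x₀ + δ • (x₀ - z), hδspan⟩ : affineSpan ℝ F) ∈
        (Subtype.val ⁻¹' F : Set (affineSpan ℝ F)) := interior_subset h5
    exact ⟨δ, hδ0, h6⟩
  -- Step 2: pick k with (2⁻¹)^k ≤ δ
  obtain ⟨k, hk⟩ := exists_pow_lt_of_lt_one hδpos (by norm_num : (2⁻¹:ℝ) < 1)
  have hs0 : (0:ℝ) < (2⁻¹:ℝ)^k := by positivity
  have hs1 : (2⁻¹:ℝ)^k ≤ 1 := by
    apply pow_le_one₀ <;> norm_num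
  -- the point slightly past x₀ (away from z) with the dyadic step is in F
  have hvF : x₀ + ((2⁻¹:ℝ)^k) • (x₀ - z) ∈ F := by
    have hθ0 : (0:ℝ) ≤ (2⁻¹:ℝ)^k / δ := by positivity
    have hθ1 : (2⁻¹:ℝ)^k / δ ≤ 1 := by rw [div_le_one hδpos]; exact hk.le
    have h6 := hFc hx₀F hδF (by linarith : (0:ℝ) ≤ 1 - (2⁻¹:ℝ)^k / δ) hθ0 (by ring)
    have h7 : (1 - (2⁻¹:ℝ)^k / δ) • x₀ + ((2⁻¹:ℝ)^k / δ) • (x₀ + δ • (x₀ - z))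
        = x₀ + ((2⁻¹:ℝ)^k) • (x₀ - z) := by
      match_scalars <;> field_simp <;> ring
    rwa [h7] at h6
  -- points toward z along the segment are in F
  have huF : ∀ τ : ℝ, 0 ≤ τ → τ ≤ 1 → x₀ + τ • (z - x₀) ∈ F := by
    intro τ h0 h1
    have h6 := hFc hx₀F hz (by linarith : (0:ℝ) ≤ 1 - τ) h0 (by ring)
    have h7 : (1 - τ) • x₀ + τ • z = x₀ + τ • (z - x₀) := by module
    rwa [h7] at h6
  -- base case: x₀ + (2⁻¹)^k • (z - x₀) ∈ Φ
  have hbase : x₀ + ((2⁻¹:ℝ)^k) • (z - x₀) ∈ Φ := by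
    have hu : x₀ + ((2⁻¹:ℝ)^k) • (z - x₀) ∈ F := huF _ hs0.le hs1
    have hmid : (2⁻¹:ℝ) • ((x₀ + ((2⁻¹:ℝ)^k) • (z - x₀)) + (x₀ + ((2⁻¹:ℝ)^k) • (x₀ - z)))
        = x₀ := by module
    have h8 := hΦ _ _ (le_of_eq (hFs hu)) (le_of_eq (hFs hvF)) (by rw [hmid]; exact hx₀Φ)
    exact h8.1
  -- doubling step
  have hstep : ∀ j : ℕ, x₀ + ((2⁻¹:ℝ)^(j+1)) • (z - x₀) ∈ Φ →
      x₀ + ((2⁻¹:ℝ)^j) • (z - x₀) ∈ Φ := by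
    intro j hj
    have hw : x₀ + ((2⁻¹:ℝ)^j) • (z - x₀) ∈ F :=
      huF _ (by positivity) (by apply pow_le_one₀ <;> norm_num)
    have hmid : (2⁻¹:ℝ) • (x₀ + (x₀ + ((2⁻¹:ℝ)^j) • (z - x₀)))
        = x₀ + ((2⁻¹:ℝ)^(j+1)) • (z - x₀) := by
      have : ((2⁻¹:ℝ)^(j+1)) = (2⁻¹:ℝ) * (2⁻¹:ℝ)^j := by ring
      rw [this]; module
    have h8 := hΦ x₀ _ (le_of_eq (hFs hx₀F)) (le_of_eq (hFs hw)) (by rw [hmid]; exact hj)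
    exact h8.2
  -- descending induction
  have hdesc : ∀ i : ℕ, x₀ + ((2⁻¹:ℝ)^(k - i)) • (z - x₀) ∈ Φ := by
    intro i
    induction i with
    | zero => simpa using hbase
    | succ i ih =>
      rcases Nat.eq_zero_or_pos (k - i) with h0 | hpos
      · have h9 : k - (i+1) = 0 := by omega
        rw [h9]; rwa [h0] at ih
      · have h9 : k - i = (k - (i+1)) + 1 := by omega
        exact hstep _ (by rwa [h9] at ih)
  have hfin := hdesc k
  have h10 : x₀ + ((2⁻¹:ℝ)^(k - k)) • (z - x₀) = z := by
    rw [Nat.sub_self, pow_zero, one_smul]; abel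
  rwa [h10] at hfin

lemma lemmaC {Y : Submodule ℝ X} (hY : StronglyAntiCoproximinal (Y : Set X))
    {x : X} (hx : ‖x‖ = 1) {ε : ℝ} (hε0 : 0 ≤ ε) (hε1 : ε < 1) :
    ∃ w : X, w ∈ Y ∧ ‖w‖ = 1 ∧ ∀ g : X →L[ℝ] ℝ, ‖g‖ ≤ 1 → g w = 1 → ε < g x := by
  have hx0 : x ≠ 0 := by
    intro hc; rw [hc, norm_zero] at hx; exact one_ne_zero hx.symm
  obtain ⟨y, hyY, hy⟩ := hY x hx0 ε hε0 hε1
  push_neg at hy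
  obtain ⟨lam, hlam⟩ := hy
  rw [norm_smul, Real.norm_eq_abs, hx, mul_one] at hlam
  have hlam0 : lam ≠ 0 := by
    intro hc
    rw [hc] at hlam
    simp at hlam
  have habs : (0:ℝ) < |lam| := abs_pos.mpr hlam0
  have hy0 : y ≠ 0 := by
    intro hc
    rw [hc] at hlam
    simp at hlam
    nlinarith [norm_nonneg (lam • x), mul_nonneg hε0 (abs_nonneg lam)]
  have hyn : (0:ℝ) < ‖y‖ := norm_pos_iff.mpr hy0
  set σ : ℝ := lam / |lam| with hσdef
  have hσ2 : σ * σ = 1 := by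
    rw [hσdef]
    field_simp
    exact (sq_abs lam).symm
  have hσlam : σ * lam = |lam| := by
    rw [hσdef]
    field_simp
    exact (sq_abs lam).symm
  have hσabs : |σ| = 1 := by rw [hσdef, abs_div, abs_abs, div_self habs.ne']
  refine ⟨(-(σ / ‖y‖)) • y, Submodule.smul_mem Y _ hyY, ?_, ?_⟩
  · rw [norm_smul, Real.norm_eq_abs, abs_neg, abs_div, abs_norm, hσabs]
    field_simp
  · intro g hg hgw
    rw [map_smul, smul_eq_mul] at hgw
    have hgy : g y = -(σ * ‖y‖) := by
      have h2 : -(σ * g y) = ‖y‖ := by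
        field_simp at hgw
        linarith
      have hσ0 : σ ≠ 0 := by
        intro hc; rw [hc] at hσ2; simp at hσ2
      linear_combination (-σ) * h2 + (- g y) * hσ2
    have hfle : ((-σ) • g) (y + lam • x) ≤ ‖y + lam • x‖ := by
      apply apply_le_norm
      rw [norm_smul ((-σ):ℝ) g, Real.norm_eq_abs, abs_neg, hσabs, one_mul]
      exact hg
    have hfval : ((-σ) • g) (y + lam • x) = ‖y‖ - |lam| * g x := by
      rw [ContinuousLinearMap.smul_apply, map_add, map_smul, smul_eq_mul, smul_eq_mul]
      linear_combination (-σ) * hgy + ‖y‖ * hσ2 + (-(g x)) * hσlam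
    rw [hfval] at hfle
    have hfin : ‖y‖ - |lam| * g x < ‖y‖ - ε * |lam| := lt_of_le_of_lt hfle hlam
    have : ε * |lam| < |lam| * g x := by linarith
    rw [mul_comm ε |lam|] at this
    exact (mul_lt_mul_iff_right₀ habs).mp this

lemma lemmaW (Y : Submodule ℝ X) [FiniteDimensional ℝ Y]
    (hYpoly : (extremePoints ℝ (closedBall (0 : Y) 1)).Finite)
    {w : Y} (hw : ‖(w : X)‖ = 1) :
    ∃ A : Set Y, A ⊆ extremePoints ℝ (closedBall (0 : Y) 1) ∧
      (∀ p ∈ A, ‖(p : X)‖ = 1) ∧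
      ∀ g : X →L[ℝ] ℝ, ‖g‖ ≤ 1 → ((∀ p ∈ A, g ↑p = 1) ↔ g ↑w = 1) := by
  classical
  set B := closedBall (0 : Y) 1 with hBdef
  have hcomp : IsCompact B := isCompact_closedBall _ _
  have hconv : Convex ℝ B := convex_closedBall _ _
  have hKM := closure_convexHull_extremePoints hcomp hconv
  have hclosed : IsClosed (convexHull ℝ (extremePoints ℝ B)) :=
    (hYpoly.isCompact_convexHull (𝕜 := ℝ)).isClosed
  have hball : B = convexHull ℝ (extremePoints ℝ B) := by
    conv_lhs => rw [← hKM, hclosed.closure_eq]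
  have hwB : w ∈ B := by
    rw [hBdef, mem_closedBall_zero_iff]
    exact le_of_eq hw
  have hwmem : w ∈ convexHull ℝ ((hYpoly.toFinset : Finset Y) : Set Y) := by
    rw [Set.Finite.coe_toFinset]
    exact hball ▸ hwB
  rw [Finset.convexHull_eq] at hwmem
  obtain ⟨c, hc0, hcsum, hccm⟩ := hwmem
  set t : Finset Y := hYpoly.toFinset with htdef
  rw [Finset.centerMass_eq_of_sum_1 _ _ hcsum] at hccm
  have hcoe : ((w : X)) = ∑ p ∈ t, c p • (p : X) := by
    have h1 := congrArg (Y.subtype) hccm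
    rw [map_sum] at h1
    simp only [map_smul, Submodule.subtype_apply, id_eq] at h1
    exact h1.symm
  have htE : ∀ p ∈ t, p ∈ extremePoints ℝ B := by
    intro p hp
    rwa [htdef, Set.Finite.mem_toFinset] at hp
  have hple : ∀ g : X →L[ℝ] ℝ, ‖g‖ ≤ 1 → ∀ p ∈ t, g ↑p ≤ 1 := by
    intro g hg p hp
    have h2 : p ∈ B := extremePoints_subset (htE p hp)
    rw [hBdef, mem_closedBall_zero_iff] at h2
    exact (apply_le_norm hg _).trans h2
  have hgsum : ∀ g : X →L[ℝ] ℝ, g ↑w = ∑ p ∈ t, c p * g ↑p := by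
    intro g
    rw [hcoe, map_sum]
    simp only [map_smul, smul_eq_mul]
  have hmpr : ∀ g : X →L[ℝ] ℝ, ‖g‖ ≤ 1 → g ↑w = 1 → ∀ p ∈ t, 0 < c p → g ↑p = 1 := by
    intro g hg hgw p hp hcp
    have hsum0 : ∑ p ∈ t, c p * (1 - g ↑p) = 0 := by
      have h3 : ∑ p ∈ t, c p * g ↑p = 1 := by rw [← hgsum g, hgw]
      calc ∑ p ∈ t, c p * (1 - g ↑p) = ∑ p ∈ t, (c p - c p * g ↑p) := by
            apply Finset.sum_congr rfl; intro p _; ring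
        _ = (∑ p ∈ t, c p) - ∑ p ∈ t, c p * g ↑p := Finset.sum_sub_distrib _ _
        _ = 0 := by rw [hcsum, h3]; ring
    have hterm := (Finset.sum_eq_zero_iff_of_nonneg (fun q hq =>
      mul_nonneg (hc0 q hq) (by linarith [hple g hg q hq]))).mp hsum0 p hp
    rcases mul_eq_zero.mp hterm with h4 | h4
    · exact absurd h4 hcp.ne'
    · linarith
  have hmp : ∀ g : X →L[ℝ] ℝ, (∀ p ∈ t, 0 < c p → g ↑p = 1) → g ↑w = 1 := by
    intro g hgA
    rw [hgsum g]
    have h5 : ∀ p ∈ t, c p * g ↑p = c p := by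
      intro p hp
      by_cases hcp : 0 < c p
      · rw [hgA p hp hcp, mul_one]
      · have : c p = 0 := le_antisymm (not_lt.mp hcp) (hc0 p hp)
        rw [this]; ring
    rw [Finset.sum_congr rfl h5, hcsum]
  have hw0 : (w : X) ≠ 0 := by
    intro hc; rw [hc, norm_zero] at hw; exact one_ne_zero hw.symm
  obtain ⟨g₀, hg₀n, hg₀w⟩ := exists_dual_vector ℝ ((w : X)) (norm_ne_zero_iff.mpr hw0)
  have hg₀w1 : g₀ ↑w = 1 := by rw [hg₀w, hw]; norm_num
  refine ⟨{p : Y | p ∈ t ∧ 0 < c p}, ?_, ?_, ?_⟩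
  · intro p hp
    exact htE p hp.1
  · intro p hp
    have h6 : g₀ ↑p = 1 := hmpr g₀ (le_of_eq hg₀n) hg₀w1 p hp.1 hp.2
    have h7 : (1:ℝ) ≤ ‖(p : X)‖ := one_le_norm_of_apply_eq_one (le_of_eq hg₀n) h6
    have h8 : p ∈ B := extremePoints_subset (htE p hp.1)
    rw [hBdef, mem_closedBall_zero_iff] at h8
    exact le_antisymm h8 h7
  · intro g hg
    constructor
    · intro hA
      exact hmp g (fun p hp hcp => hA p ⟨hp, hcp⟩)
    · intro hgw p hp
      exact hmpr g hg hgw p hp.1 hp.2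

lemma lemmaEstar (Y : Submodule ℝ X) [FiniteDimensional ℝ Y]
    (hYpoly : (extremePoints ℝ (closedBall (0 : Y) 1)).Finite)
    (hY : StronglyAntiCoproximinal (Y : Set X))
    {x : X} (hx : ‖x‖ = 1) :
    ∃ A : Set Y, A ⊆ extremePoints ℝ (closedBall (0 : Y) 1) ∧
      (∀ p ∈ A, ‖(p : X)‖ = 1) ∧
      (∃ g : X →L[ℝ] ℝ, ‖g‖ ≤ 1 ∧ ∀ p ∈ A, g ↑p = 1) ∧
      ∀ g : X →L[ℝ] ℝ, ‖g‖ ≤ 1 → (∀ p ∈ A, g ↑p = 1) → g x = 1 := by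
  classical
  set E := extremePoints ℝ (closedBall (0 : Y) 1) with hEdef
  by_contra hcon
  push_neg at hcon
  let bad : Set Y → ℝ := fun A =>
    if h : A ⊆ E ∧ (∀ p ∈ A, ‖(p:X)‖ = 1) ∧ (∃ g : X →L[ℝ] ℝ, ‖g‖ ≤ 1 ∧ ∀ p ∈ A, g ↑p = 1)
    then (hcon A h.1 h.2.1 h.2.2).choose x else 0
  have hbadlt : ∀ A, bad A < 1 := by
    intro A
    by_cases h : A ⊆ E ∧ (∀ p ∈ A, ‖(p:X)‖ = 1) ∧
        (∃ g : X →L[ℝ] ℝ, ‖g‖ ≤ 1 ∧ ∀ p ∈ A, g ↑p = 1)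
    · simp only [bad, dif_pos h]
      have hspec := (hcon A h.1 h.2.1 h.2.2).choose_spec
      have h1 : (hcon A h.1 h.2.1 h.2.2).choose x ≤ 1 :=
        (apply_le_norm hspec.1 x).trans (le_of_eq hx)
      exact lt_of_le_of_ne h1 hspec.2.2
    · simp only [bad, dif_neg h]; norm_num
  have hVfin : (insert (0:ℝ) (bad '' {A : Set Y | A ⊆ E})).Finite :=
    ((hYpoly.finite_subsets).image bad).insert 0
  obtain ⟨ε, hεV, hεmax⟩ := Set.exists_max_image _ id hVfin ⟨0, Set.mem_insert _ _⟩
  have hε0 : (0:ℝ) ≤ ε := hεmax 0 (Set.mem_insert _ _)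
  have hε1 : ε < 1 := by
    rcases hεV with h0 | ⟨A, _, rfl⟩
    · rw [h0]; norm_num
    · exact hbadlt A
  obtain ⟨wX, hwY, hwn, hC⟩ := lemmaC hY hx hε0 hε1
  have hwn' : ‖((⟨wX, hwY⟩ : Y) : X)‖ = 1 := hwn
  obtain ⟨A, hAE, hAn, hAiff⟩ := lemmaW Y hYpoly hwn'
  have hw0 : wX ≠ 0 := by
    intro hc; rw [hc, norm_zero] at hwn; exact one_ne_zero hwn.symm
  have hAdm : ∃ g : X →L[ℝ] ℝ, ‖g‖ ≤ 1 ∧ ∀ p ∈ A, g ↑p = 1 := by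
    obtain ⟨g₀, hg₀n, hg₀w⟩ := exists_dual_vector ℝ wX (norm_ne_zero_iff.mpr hw0)
    have hg₀1 : g₀ ((⟨wX, hwY⟩ : Y) : X) = 1 := by
      simp only [hg₀w, hwn]; norm_num
    exact ⟨g₀, le_of_eq hg₀n, (hAiff g₀ (le_of_eq hg₀n)).mpr hg₀1⟩
  have hcond : A ⊆ E ∧ (∀ p ∈ A, ‖(p:X)‖ = 1) ∧
      (∃ g : X →L[ℝ] ℝ, ‖g‖ ≤ 1 ∧ ∀ p ∈ A, g ↑p = 1) := ⟨hAE, hAn, hAdm⟩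
  have hspec := (hcon A hAE hAn hAdm).choose_spec
  have hgx_eq : bad A = (hcon A hAE hAn hAdm).choose x := by
    simp only [bad, dif_pos hcond]
  have hmem : bad A ∈ insert (0:ℝ) (bad '' {A : Set Y | A ⊆ E}) :=
    Set.mem_insert_of_mem _ ⟨A, hAE, rfl⟩
  have h1 : bad A ≤ ε := hεmax _ hmem
  have h2 : ε < (hcon A hAE hAn hAdm).choose x :=
    hC _ hspec.1 ((hAiff _ hspec.1).mp hspec.2.1)
  rw [hgx_eq] at h1
  linarith

end Aux

/-- If `Y` is a finite-dimensional polyhedral subspace of a real Banach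
space `X` which is strongly anti-coproximinal, then (i) distinct maximal faces of `B_X` have
distinct intersections with `Y`, and (ii) `X` is finite-dimensional and polyhedral. -/
theorem polyhedral_of_stronglyAntiCoproximinal_polyhedral_subspace
    {X : Type*} [NormedAddCommGroup X] [NormedSpace ℝ X] [CompleteSpace X]
    (Y : Submodule ℝ X) [FiniteDimensional ℝ Y]
    (hYpoly : (extremePoints ℝ (closedBall (0 : Y) 1)).Finite)
    (hY : StronglyAntiCoproximinal (Y : Set X)) :
    (∀ F₁ F₂ : Set X, IsMaximalFaceOfBall F₁ → IsMaximalFaceOfBall F₂ → F₁ ≠ F₂ →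
      F₁ ∩ (Y : Set X) ≠ F₂ ∩ (Y : Set X)) ∧
    (FiniteDimensional ℝ X ∧ (extremePoints ℝ (closedBall (0 : X) 1)).Finite) := by
  classical
  set E := extremePoints ℝ (closedBall (0 : Y) 1) with hEdef
  let Adm : Set Y → Prop := fun A => ∃ g : X →L[ℝ] ℝ, ‖g‖ ≤ 1 ∧ ∀ p ∈ A, g ↑p = 1
  let h : Set Y → (X →L[ℝ] ℝ) := fun A => if hA : Adm A then hA.choose else 0
  have hnorm : ∀ A, ‖h A‖ ≤ 1 := by
    intro A
    by_cases hA : Adm A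
    · simp only [h, dif_pos hA]; exact hA.choose_spec.1
    · simp only [h, dif_neg hA]; simp
  have hone : ∀ A, Adm A → ∀ p ∈ A, h A ↑p = 1 := by
    intro A hA
    simp only [h, dif_pos hA]
    exact hA.choose_spec.2
  have star : ∀ x : X, ‖x‖ = 1 → ∃ A : Set Y, A ⊆ E ∧ (∀ p ∈ A, ‖(p:X)‖ = 1) ∧ Adm A ∧
      ∀ g : X →L[ℝ] ℝ, ‖g‖ ≤ 1 → (∀ p ∈ A, g ↑p = 1) → g x = 1 := by
    intro x hx
    obtain ⟨A, h1, h2, h3, h4⟩ := lemmaEstar Y hYpoly hY hx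
    exact ⟨A, h1, h2, h3, h4⟩
  have hnormattain : ∀ x : X, x ≠ 0 → ∃ A : Set Y, A ⊆ E ∧ h A x = ‖x‖ := by
    intro x hx0
    have hxn : ‖x‖ ≠ 0 := norm_ne_zero_iff.mpr hx0
    obtain ⟨A, hAE, _, hAdm, hP⟩ := star (‖x‖⁻¹ • x)
      (by rw [norm_smul, Real.norm_eq_abs, abs_of_nonneg (by positivity)]
          field_simp)
    refine ⟨A, hAE, ?_⟩
    have h1 := hP (h A) (hnorm A) (hone A hAdm)
    rw [map_smul, smul_eq_mul] at h1
    field_simp at h1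
    linarith
  have hEfin : E.Finite := hYpoly
  have hsubs : {A : Set Y | A ⊆ E}.Finite := hEfin.finite_subsets
  haveI : Finite ↥{A : Set Y | A ⊆ E} := hsubs.to_subtype
  haveI : Fintype ↥{A : Set Y | A ⊆ E} := Fintype.ofFinite _
  -- (ii) finite dimensionality
  have hfd : FiniteDimensional ℝ X := by
    let T : X →ₗ[ℝ] (↥{A : Set Y | A ⊆ E} → ℝ) :=
      LinearMap.pi (fun A => (h A.1).toLinearMap)
    have hTinj : Function.Injective T := by
      intro x y hxy
      by_contra hne
      have hd : x - y ≠ 0 := sub_ne_zero.mpr hne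
      obtain ⟨A, hAE, hAx⟩ := hnormattain (x - y) hd
      have h5 : T x ⟨A, hAE⟩ = T y ⟨A, hAE⟩ := by rw [hxy]
      have h6 : h A x = h A y := h5
      have h7 : h A (x - y) = 0 := by rw [map_sub, h6, sub_self]
      rw [h7] at hAx
      exact hd (norm_eq_zero.mp hAx.symm)
    exact FiniteDimensional.of_injective T hTinj
  -- (ii) polyhedrality
  have hext : (extremePoints ℝ (closedBall (0 : X) 1)).Finite := by
    have hinj : Set.InjOn
        (fun e : X => ((({A : ↥{A : Set Y | A ⊆ E} | h A.1 e = 1},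
          {A : ↥{A : Set Y | A ⊆ E} | h A.1 e = -1}) :
            Set ↥{A : Set Y | A ⊆ E} × Set ↥{A : Set Y | A ⊆ E})))
        (extremePoints ℝ (closedBall (0 : X) 1)) := by
      intro e₁ he₁ e₂ he₂ heq2
      by_contra hne
      have hd0 : e₁ - e₂ ≠ 0 := sub_ne_zero.mpr hne
      have hP : ∀ A : ↥{A : Set Y | A ⊆ E}, h A.1 e₁ = 1 ↔ h A.1 e₂ = 1 := by
        intro A
        have h2 := congrArg Prod.fst heq2
        rw [Set.ext_iff] at h2
        exact h2 A
      have hN : ∀ A : ↥{A : Set Y | A ⊆ E}, h A.1 e₁ = -1 ↔ h A.1 e₂ = -1 := by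
        intro A
        have h2 := congrArg Prod.snd heq2
        rw [Set.ext_iff] at h2
        exact h2 A
      have he₁b : ‖e₁‖ ≤ 1 := mem_closedBall_zero_iff.mp he₁.1
      haveI : Nonempty ↥{A : Set Y | A ⊆ E} := ⟨⟨∅, by simp⟩⟩
      set ψ : ↥{A : Set Y | A ⊆ E} → ℝ :=
        fun A => if h A.1 e₁ = 1 ∨ h A.1 e₁ = -1 then 0 else |h A.1 e₁| with hψdef
      have hψlt : ∀ A, ψ A < 1 := by
        intro A
        by_cases hA : h A.1 e₁ = 1 ∨ h A.1 e₁ = -1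
        · simp only [hψdef, if_pos hA]; norm_num
        · simp only [hψdef, if_neg hA]
          push_neg at hA
          have h1 : |h A.1 e₁| ≤ 1 := abs_apply_le_one (hnorm A.1) he₁b
          rcases lt_or_eq_of_le h1 with h2 | h2
          · exact h2
          · rcases (abs_eq (by norm_num : (0:ℝ) ≤ 1)).mp h2 with h3 | h3
            · exact absurd h3 hA.1
            · exact absurd h3 hA.2
      set τ : ℝ := Finset.univ.inf' Finset.univ_nonempty
        (fun A : ↥{A : Set Y | A ⊆ E} => (1 - ψ A) / (‖e₁ - e₂‖ + 1)) with hτdef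
      have hτpos : 0 < τ := by
        rw [hτdef, Finset.lt_inf'_iff]
        intro A _
        have := hψlt A
        apply div_pos (by linarith) (by positivity)
      have hτle : ∀ A : ↥{A : Set Y | A ⊆ E}, τ ≤ (1 - ψ A) / (‖e₁ - e₂‖ + 1) :=
        fun A => Finset.inf'_le _ (Finset.mem_univ A)
      have hbound : ∀ s : ℝ, |s| ≤ τ → ‖e₁ + s • (e₁ - e₂)‖ ≤ 1 := by
        intro s hs
        by_cases hzero : e₁ + s • (e₁ - e₂) = 0
        · rw [hzero]; simp
        obtain ⟨A, hAE, hAx⟩ := hnormattain _ hzero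
        rw [← hAx]
        have hval : h A (e₁ + s • (e₁ - e₂)) = h A e₁ + s * h A (e₁ - e₂) := by
          rw [map_add, map_smul, smul_eq_mul]
        by_cases hA1 : h A e₁ = 1
        · have hA2 : h A e₂ = 1 := (hP ⟨A, hAE⟩).mp hA1
          have hdz : h A (e₁ - e₂) = 0 := by rw [map_sub, hA1, hA2, sub_self]
          rw [hval, hA1, hdz, mul_zero, add_zero]
        · by_cases hA1' : h A e₁ = -1
          · have hA2 : h A e₂ = -1 := (hN ⟨A, hAE⟩).mp hA1'
            have hdz : h A (e₁ - e₂) = 0 := by rw [map_sub, hA1', hA2, sub_self]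
            rw [hval, hA1', hdz, mul_zero, add_zero]; norm_num
          · have hψA : ψ ⟨A, hAE⟩ = |h A e₁| := if_neg (by tauto)
            have h6 : τ ≤ (1 - |h A e₁|) / (‖e₁ - e₂‖ + 1) := by
              have := hτle ⟨A, hAE⟩
              rwa [hψA] at this
            have h7 : |h A (e₁ - e₂)| ≤ ‖e₁ - e₂‖ := by
              have h8 := (h A).le_opNorm (e₁ - e₂)
              rw [Real.norm_eq_abs] at h8
              nlinarith [hnorm A, norm_nonneg (e₁ - e₂)]
            have h8 : s * h A (e₁ - e₂) ≤ τ * ‖e₁ - e₂‖ := by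
              calc s * h A (e₁ - e₂) ≤ |s * h A (e₁ - e₂)| := le_abs_self _
                _ = |s| * |h A (e₁ - e₂)| := abs_mul _ _
                _ ≤ τ * ‖e₁ - e₂‖ := mul_le_mul hs h7 (abs_nonneg _) ((abs_nonneg s).trans hs)
            have h9 : τ * (‖e₁ - e₂‖ + 1) ≤ 1 - |h A e₁| :=
              (le_div_iff₀ (by positivity)).mp h6
            have h9' : τ * (‖e₁ - e₂‖ + 1) = τ * ‖e₁ - e₂‖ + τ := by ring
            have h10 : τ * ‖e₁ - e₂‖ ≤ 1 - |h A e₁| := by linarith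
            rw [hval]
            have h11 := le_abs_self (h A e₁)
            linarith
      have hu : e₁ + τ • (e₁ - e₂) ∈ closedBall (0:X) 1 :=
        mem_closedBall_zero_iff.mpr (hbound τ (le_of_eq (abs_of_pos hτpos)))
      have hv : e₁ - τ • (e₁ - e₂) ∈ closedBall (0:X) 1 := by
        apply mem_closedBall_zero_iff.mpr
        have h12 := hbound (-τ) (by rw [abs_neg, abs_of_pos hτpos])
        rwa [neg_smul, ← sub_eq_add_neg] at h12
      have hseg : e₁ ∈ openSegment ℝ (e₁ + τ • (e₁ - e₂)) (e₁ - τ • (e₁ - e₂)) := by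
        refine ⟨2⁻¹, 2⁻¹, by norm_num, by norm_num, by norm_num, ?_⟩
        module
      have h13 := he₁.2 hu hv hseg
      have h14 : τ • (e₁ - e₂) = 0 := by
        have := h13
        rwa [add_eq_left] at this
      rcases smul_eq_zero.mp h14 with h15 | h15
      · exact hτpos.ne' h15
      · exact hd0 h15
    exact Set.Finite.of_finite_image (Set.toFinite _) hinj
  refine ⟨?_, hfd, hext⟩
  -- (i)
  intro F₁ F₂ h₁ h₂ hne12 heq
  haveI := hfd
  rcases Set.eq_empty_or_nonempty F₂ with hF2e | hF2ne
  · subst hF2e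
    exact hne12 (h₂.2 F₁ h₁.1 (Set.empty_subset F₁))
  rcases Set.eq_empty_or_nonempty F₁ with hF1e | hF1ne
  · subst hF1e
    exact hne12 ((h₁.2 F₂ h₂.1 (Set.empty_subset F₂)).symm)
  obtain ⟨g₂, hg₂n, hg₂rep⟩ := maximal_face_rep h₂ hF2ne
  obtain ⟨x₀, hx₀i⟩ := Set.Nonempty.intrinsicInterior h₁.1.convex hF1ne
  have hx₀F : x₀ ∈ F₁ := intrinsicInterior_subset hx₀i
  have hx₀n : ‖x₀‖ = 1 := h₁.1.1 hx₀F
  obtain ⟨A, hAE, hAn, hAdm, hP⟩ := star x₀ hx₀n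
  have hΦface := faceOfFunctional (h A) (hnorm A)
  have hx₀Φ : x₀ ∈ {v : X | ‖v‖ = 1 ∧ h A v = 1} := ⟨hx₀n, hP (h A) (hnorm A) (hone A hAdm)⟩
  have hF₁Φ : F₁ ⊆ {v : X | ‖v‖ = 1 ∧ h A v = 1} :=
    mem_face_absorb h₁.1.1 h₁.1.convex hΦface.2.2 hx₀i hx₀Φ
  have hΦF₁ : {v : X | ‖v‖ = 1 ∧ h A v = 1} = F₁ := h₁.2 _ hΦface hF₁Φ
  have hAF₂ : ∀ p ∈ A, (p : X) ∈ F₂ := by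
    intro p hp
    have hpF₁ : (p : X) ∈ F₁ := hΦF₁ ▸ (⟨hAn p hp, hone A hAdm p hp⟩ : _ ∧ _)
    have hmem : (p : X) ∈ F₁ ∩ (Y : Set X) := ⟨hpF₁, p.2⟩
    rw [heq] at hmem
    exact hmem.1
  have hg₂A : ∀ p ∈ A, g₂ ↑p = 1 := by
    intro p hp
    have := hAF₂ p hp
    rw [hg₂rep] at this
    exact this.2
  have hg₂x₀ : g₂ x₀ = 1 := hP g₂ hg₂n hg₂A
  have hx₀F₂ : x₀ ∈ F₂ := by rw [hg₂rep]; exact ⟨hx₀n, hg₂x₀⟩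
  have hF₁F₂ : F₁ ⊆ F₂ := mem_face_absorb h₁.1.1 h₁.1.convex h₂.1.2.2 hx₀i hx₀F₂
  exact hne12 ((h₁.2 F₂ h₂.1 hF₁F₂).symm)
end

section
/- Let X = ℓ∞(ℝ) be the Banach space of all bounded real sequences with the supremum norm. Then no finite-dimensional polyhedral linear subspace of X is anti-coproximinal in X; that is, for every finite-dimensional subspace Y of X whose closed unit ball has only finitely many extreme points, there exists a nonzero x ∈ X such that y ⊥_B x for every y ∈ Y. -/
open Filter Topology Metric Set ENNReal

set_option maxHeartbeats 1000000
set_option synthInstance.maxHeartbeats 400000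

noncomputable section

namespace AuxBJ

abbrev L := lp (fun _ : ℕ => ℝ) ∞

def en (n : ℕ) : L := lp.single ∞ n 1

def coordL (n : ℕ) : L →ₗ[ℝ] ℝ where
  toFun f := f n
  map_add' f g := by simp [lp.coeFn_add]
  map_smul' c f := by simp [lp.coeFn_smul]

@[simp] lemma coordL_apply (n : ℕ) (f : L) : coordL n f = f n := rfl

lemma bddAbove_range (y : L) : BddAbove (Set.range fun k => ‖y k‖) :=
  memℓp_infty_iff.1 (lp.memℓp y)

lemma coord_le_norm (y : L) (k : ℕ) : ‖y k‖ ≤ ‖y‖ :=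
  lp.norm_apply_le_norm ENNReal.top_ne_zero y k

end AuxBJ

end

open AuxBJ in
/-- No finite-dimensional polyhedral subspace of `ℓ∞(ℝ)` (bounded real
sequences with the sup norm) is anti-coproximinal: for every finite-dimensional subspace `Y`
whose unit ball has finitely many extreme points, there is a nonzero `x` which is
Birkhoff–James orthogonal to every element of `Y`. -/
theorem no_finiteDimensional_polyhedral_antiCoproximinal_subspace_of_linfty
    (Y : Submodule ℝ (lp (fun _ : ℕ => ℝ) ∞)) [FiniteDimensional ℝ Y]
    (hYpoly : (extremePoints ℝ (closedBall (0 : Y) 1)).Finite) :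
    ∃ x : lp (fun _ : ℕ => ℝ) ∞, x ≠ 0 ∧
      ∀ y ∈ Y, ∀ lam : ℝ, ‖y‖ ≤ ‖y + lam • x‖ := by
  obtain h | h := em <| ∃ n : ℕ, ∀ y : Y, ‖(y : L) n‖ ≤ ⨆ k : {k : ℕ // k ≠ n}, ‖(y : L) k.1‖
  · obtain ⟨n, hn⟩ := h
    haveI : Nonempty {k : ℕ // k ≠ n} := ⟨⟨n + 1, by simp⟩⟩
    refine ⟨en n, ?_, ?_⟩
    · intro hx0
      have h1 : en n n = (0 : ℝ) := by rw [hx0]; simp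
      have h2 : en n n = (1 : ℝ) := lp.single_apply_self ∞ n 1
      rw [h2] at h1; exact one_ne_zero h1
    · intro y hy lam
      have hkey : ∀ k : ℕ, k ≠ n → ‖y k‖ ≤ ‖y + lam • en n‖ := by
        intro k hk
        have hco : (y + lam • en n) k = y k := by
          have h1 : en n k = (0 : ℝ) := lp.single_apply_ne ∞ n 1 hk
          show y k + lam * en n k = y k
          rw [h1]; simp
        calc ‖y k‖ = ‖(y + lam • en n) k‖ := by rw [hco]
          _ ≤ _ := coord_le_norm _ k
      rw [lp.norm_eq_ciSup]
      refine ciSup_le fun k => ?_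
      by_cases hk : k = n
      · subst hk
        calc ‖y k‖ ≤ ⨆ j : {j : ℕ // j ≠ k}, ‖((⟨y, hy⟩ : Y) : L) j.1‖ := hn ⟨y, hy⟩
          _ ≤ ‖y + lam • en k‖ := ciSup_le fun j => hkey j j.2
      · exact hkey k hk
  · exfalso
    push_neg at h
    set B := closedBall (0 : Y) 1 with hBdef
    have hBcomp : IsCompact B := isCompact_closedBall _ _
    have hBconv : Convex ℝ B := convex_closedBall _ _
    have hE : (B.extremePoints ℝ).Finite := hYpoly
    have hBE : B = convexHull ℝ (B.extremePoints ℝ) := by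
      conv_lhs => rw [← closure_convexHull_extremePoints hBcomp hBconv]
      exact (hE.isCompact_convexHull (𝕜 := ℝ)).isClosed.closure_eq
    have hz : ∀ n : ℕ, ∃ z : Y, (z : L) n = 1 ∧ (∀ k ≠ n, ‖(z : L) k‖ < 1) ∧ z ∈ B := by
      intro n
      obtain ⟨y, hy⟩ := h n
      haveI : Nonempty {k : ℕ // k ≠ n} := ⟨⟨n + 1, by simp⟩⟩
      have hsub : BddAbove (Set.range fun k : {k : ℕ // k ≠ n} => ‖(y : L) k.1‖) := by
        obtain ⟨C, hC⟩ := bddAbove_range (y : L)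
        exact ⟨C, by rintro _ ⟨k, rfl⟩; exact hC ⟨k.1, rfl⟩⟩
      have hsup0 : (0 : ℝ) ≤ ⨆ k : {k : ℕ // k ≠ n}, ‖(y : L) k.1‖ :=
        le_ciSup_of_le hsub ⟨n + 1, by simp⟩ (norm_nonneg _)
      have hypos : 0 < ‖(y : L) n‖ := lt_of_le_of_lt hsup0 hy
      have hyn0 : (y : L) n ≠ 0 := by
        intro h0; rw [h0] at hypos; simp at hypos
      have hklt : ∀ k, k ≠ n → ‖(y : L) k‖ < ‖(y : L) n‖ := fun k hk =>
        lt_of_le_of_lt (le_ciSup hsub ⟨k, hk⟩) hy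
      refine ⟨((y : L) n)⁻¹ • y, ?_, ?_, ?_⟩
      · show ((((y : L) n)⁻¹ • y : Y) : L) n = 1
        rw [Submodule.coe_smul, lp.coeFn_smul]
        simp [hyn0]
      · intro k hk
        show ‖((((y : L) n)⁻¹ • y : Y) : L) k‖ < 1
        rw [Submodule.coe_smul, lp.coeFn_smul]
        simp only [Pi.smul_apply, smul_eq_mul, norm_mul, norm_inv]
        rw [inv_mul_lt_iff₀ hypos, mul_one]
        exact hklt k hk
      · rw [hBdef, mem_closedBall_zero_iff]
        have : ‖(((((y : L) n)⁻¹ • y : Y)) : L)‖ ≤ 1 := by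
          rw [lp.norm_eq_ciSup]
          refine ciSup_le fun k => ?_
          rw [Submodule.coe_smul, lp.coeFn_smul]
          simp only [Pi.smul_apply, smul_eq_mul, norm_mul, norm_inv]
          rw [inv_mul_le_iff₀ hypos, mul_one]
          by_cases hk : k = n
          · subst hk; exact le_refl _
          · exact le_of_lt (hklt k hk)
        exact this
    choose z hz1 hz2 hz3 using hz
    haveI : Finite ↥(B.extremePoints ℝ) := hE.to_subtype
    obtain ⟨m, n, hmn, hf⟩ := Finite.exists_ne_map_eq_of_infinite
      (fun j : ℕ => {e : ↥(B.extremePoints ℝ) | ((e : Y) : L) j = 1})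
    simp only at hf
    have hzm : (z m : Y) ∈ convexHull ℝ (B.extremePoints ℝ) := hBE ▸ hz3 m
    rw [hE.convexHull_eq] at hzm
    obtain ⟨w, hw0, hw1, hwz⟩ := hzm
    rw [Finset.centerMass_eq_of_sum_1 _ _ hw1] at hwz
    set T := hE.toFinset with hT
    set c : ℕ → (Y →ₗ[ℝ] ℝ) := fun j => (coordL j).comp Y.subtype with hc
    have hcapp : ∀ j (e : Y), c j e = (e : L) j := fun _ _ => rfl
    have h1 : ∑ e ∈ T, w e * (c m) e = 1 := by
      have h2 := congrArg (c m) hwz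
      rw [map_sum] at h2
      simp only [id_eq, map_smul, smul_eq_mul] at h2
      rw [h2, hcapp, hz1 m]
    have hle : ∀ e ∈ T, (c m) e ≤ 1 := by
      intro e he
      have heB : e ∈ B := extremePoints_subset (hE.mem_toFinset.1 he)
      have : ‖e‖ ≤ 1 := by rwa [hBdef, mem_closedBall_zero_iff] at heB
      calc (c m) e ≤ ‖(e : L) m‖ := le_abs_self _
        _ ≤ ‖(e : L)‖ := coord_le_norm _ m
        _ ≤ 1 := this
    have h0 : ∑ e ∈ T, w e * (1 - (c m) e) = 0 := by
      simp only [mul_sub, mul_one, Finset.sum_sub_distrib, hw1, h1, sub_self]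
    have hzero := (Finset.sum_eq_zero_iff_of_nonneg (fun e he =>
      mul_nonneg (hw0 e (hE.mem_toFinset.1 he)) (sub_nonneg.2 (hle e he)))).1 h0
    have h2 : (c n) (z m) = 1 := by
      have h3 := congrArg (c n) hwz
      rw [map_sum] at h3
      simp only [id_eq, map_smul, smul_eq_mul] at h3
      rw [← h3, ← hw1]
      refine Finset.sum_congr rfl fun e he => ?_
      by_cases hwe : w e = 0
      · simp [hwe]
      · have hcm1 : (c m) e = 1 := by
          rcases mul_eq_zero.1 (hzero e he) with h' | h'
          · exact absurd h' hwe
          · linarith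
        have heE : e ∈ B.extremePoints ℝ := hE.mem_toFinset.1 he
        have hmem : (⟨e, heE⟩ : ↥(B.extremePoints ℝ)) ∈
            {e' : ↥(B.extremePoints ℝ) | ((e' : Y) : L) m = 1} := hcm1
        rw [hf] at hmem
        have : (c n) e = 1 := hmem
        rw [this, mul_one]
    have hlt : ‖(z m : L) n‖ < 1 := hz2 m n (Ne.symm hmn)
    rw [hcapp] at h2
    rw [h2] at hlt
    norm_num at hlt
end

section
/- Let K be a locally compact, normal Hausdorff space and let Y be an anti-coproximinal linear subspace of C₀(K). Then for each nonempty open subset U of K there exists f ∈ Y such that M_f ⊆ U, where M_f = { k ∈ K : |f(k)| = ‖f‖ }. -/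
open Filter Topology Metric

/-- If `K` is a locally compact normal Hausdorff space and `Y` is an
anti-coproximinal subspace of `C₀(K)`, then for every nonempty open `U ⊆ K` there exists
`f ∈ Y` whose norm attainment set `M_f = {k : |f k| = ‖f‖}` is contained in `U`. -/
theorem antiCoproximinal_C0_norm_attainment_in_open
    {𝕜 K : Type*} [RCLike 𝕜] [TopologicalSpace K] [LocallyCompactSpace K]
    [T2Space K] [NormalSpace K]
    (Y : Submodule 𝕜 (ZeroAtInftyContinuousMap K 𝕜))
    (hY : AntiCoproximinal 𝕜 (Y : Set (ZeroAtInftyContinuousMap K 𝕜))) :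
    ∀ U : Set K, IsOpen U → U.Nonempty →
      ∃ f ∈ Y, {k : K | ‖f k‖ = ‖f‖} ⊆ U := by
  intro U hU ⟨k₀, hk₀⟩
  -- find a compact set C with k₀ ∈ interior C ⊆ C ⊆ U
  obtain ⟨C, hCc, hk₀C, hCU⟩ := exists_compact_subset hU hk₀
  -- Urysohn bump function
  have hscl : IsCompact (closure (interior C)) :=
    hCc.closure_of_subset interior_subset
  obtain ⟨g, hgsupp, hg1, hg01⟩ :=
    exists_tsupport_one_of_isOpen_isClosed isOpen_interior hscl isClosed_singleton
      (Set.singleton_subset_iff.mpr hk₀C)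
  have hgcs : HasCompactSupport g :=
    HasCompactSupport.of_support_subset_isCompact hCc
      ((subset_tsupport g).trans (hgsupp.trans interior_subset))
  -- build the 𝕜-valued bump in C₀(K, 𝕜)
  let g' : C(K, 𝕜) := ⟨fun k => (g k : 𝕜), RCLike.continuous_ofReal.comp g.continuous⟩
  have hg'cs : HasCompactSupport (g' : K → 𝕜) := by
    apply hgcs.comp_left (g := (RCLike.ofReal : ℝ → 𝕜))
    simp
  let G : ZeroAtInftyContinuousMap K 𝕜 :=
    ⟨g', HasCompactSupport.is_zero_at_infty hg'cs⟩
  have hGne : G ≠ 0 := by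
    intro h
    have : G k₀ = 0 := by rw [h]; rfl
    have hg0 : (g k₀ : 𝕜) = 0 := this
    have : g k₀ = (1 : ℝ) := hg1 rfl
    rw [this] at hg0
    simp at hg0
  obtain ⟨y, hyY, hy⟩ := hY G hGne
  push_neg at hy
  obtain ⟨lam, hlam⟩ := hy
  refine ⟨y, hyY, fun k hk => ?_⟩
  by_contra hkU
  -- then g k = 0, so the perturbation doesn't change the value at k
  have hgk : g k = 0 := by
    by_contra h
    exact hkU (hCU (interior_subset (hgsupp (subset_tsupport g h))))
  have hval : (y + lam • G) k = y k := by
    have : G k = 0 := by simp [G, g', hgk]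
    simp [this]
  have h1 : ‖y‖ ≤ ‖y + lam • G‖ := by
    calc ‖y‖ = ‖y k‖ := hk.symm
    _ = ‖(y + lam • G) k‖ := by rw [hval]
    _ = ‖(y + lam • G).toBCF k‖ := rfl
    _ ≤ ‖(y + lam • G).toBCF‖ := BoundedContinuousFunction.norm_coe_le_norm _ k
    _ = ‖y + lam • G‖ := ZeroAtInftyContinuousMap.norm_toBCF_eq_norm
  exact absurd h1 (not_le.mpr hlam)
end

section
/- Let K be a locally connected, locally compact, perfectly normal Hausdorff space with no isolated points. Then every finite-codimensional linear subspace of the real Banach space C₀(K) = C₀(K, ℝ) is strongly anti-coproximinal in C₀(K). -/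
open Filter Topology Metric

set_option linter.unusedSectionVars false
set_option maxHeartbeats 1000000
open Finset Module

section Comb
variable {ι : Type} [Fintype ι] [DecidableEq ι] [Nonempty ι]

noncomputable def maxF (a : ι → ℝ) : ℝ := univ.sup' univ_nonempty a
noncomputable def minF (a : ι → ℝ) : ℝ := univ.inf' univ_nonempty a

noncomputable def PP (a : ι → ℝ) : Finset ι := {i ∈ univ | a i = maxF a}
noncomputable def QQ (a : ι → ℝ) : Finset ι := {i ∈ univ | a i = minF a}

lemma le_maxF (a : ι → ℝ) (i : ι) : a i ≤ maxF a := le_sup' a (mem_univ i)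
lemma minF_le (a : ι → ℝ) (i : ι) : minF a ≤ a i := inf'_le a (mem_univ i)

lemma minF_le_maxF (a : ι → ℝ) : minF a ≤ maxF a := by
  obtain ⟨i⟩ := ‹Nonempty ι›
  exact (minF_le a i).trans (le_maxF a i)

lemma mem_PP {a : ι → ℝ} {i : ι} : i ∈ PP a ↔ a i = maxF a := by simp [PP]
lemma mem_QQ {a : ι → ℝ} {i : ι} : i ∈ QQ a ↔ a i = minF a := by simp [QQ]

lemma PP_nonempty (a : ι → ℝ) : (PP a).Nonempty := by
  obtain ⟨i, -, h⟩ := exists_mem_eq_sup' (univ_nonempty (α := ι)) a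
  exact ⟨i, mem_PP.2 h.symm⟩

lemma QQ_nonempty (a : ι → ℝ) : (QQ a).Nonempty := by
  obtain ⟨i, -, h⟩ := exists_mem_eq_inf' (univ_nonempty (α := ι)) a
  exact ⟨i, mem_QQ.2 h.symm⟩

lemma sup'_neg' {s : Finset ι} (hs : s.Nonempty) (f : ι → ℝ) :
    s.sup' hs (fun i => -(f i)) = - s.inf' hs f := by
  apply le_antisymm
  · apply sup'_le
    intro i hi
    exact neg_le_neg (inf'_le f hi)
  · obtain ⟨i, hi, h⟩ := exists_mem_eq_inf' hs f
    rw [h]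
    exact le_sup' (fun i => -(f i)) hi

lemma maxF_neg (a : ι → ℝ) : maxF (-a) = - minF a := by
  have : maxF (-a) = univ.sup' univ_nonempty (fun i => -(a i)) := rfl
  rw [this, sup'_neg' univ_nonempty a]; rfl

lemma PP_neg (a : ι → ℝ) : PP (-a) = QQ a := by
  ext i
  simp only [mem_PP, mem_QQ, maxF_neg, Pi.neg_apply, neg_inj]

lemma PP_zero : PP (0 : ι → ℝ) = univ := by
  have h : maxF (0 : ι → ℝ) = 0 := by
    simp [maxF]
  ext i; simp [mem_PP, h]

lemma perturb (a b : ι → ℝ) (hne : PP a ≠ univ) :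
    ∃ t₀ > (0:ℝ), ∀ t : ℝ, 0 < t → t ≤ t₀ →
      maxF (a + t • b) = maxF a + t * ((PP a).sup' (PP_nonempty a) b) ∧
      PP (a + t • b) = {i ∈ PP a | b i = (PP a).sup' (PP_nonempty a) b} := by
  set M := maxF a with hM
  set mP := (PP a).sup' (PP_nonempty a) b with hmP
  have hc : (univ \ PP a).Nonempty := by
    rw [sdiff_nonempty]
    exact fun h => hne (subset_antisymm (subset_univ _) h)
  set δ : ℝ := M - (univ \ PP a).sup' hc a with hδdef
  have hδ : 0 < δ := by
    have : (univ \ PP a).sup' hc a < M := by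
      rw [Finset.sup'_lt_iff]
      intro i hi
      rcases lt_or_eq_of_le (le_maxF a i) with h | h
      · exact h
      · exact absurd (mem_PP.2 h) (by simpa using (mem_sdiff.1 hi).2)
    linarith
  set B : ℝ := univ.sup' univ_nonempty (fun i => |b i|) with hBdef
  have hB : ∀ i, |b i| ≤ B := fun i => le_sup' (fun j => |b j|) (mem_univ i)
  have hB0 : 0 ≤ B := (abs_nonneg _).trans (hB (Classical.arbitrary ι))
  have hmPB : |mP| ≤ B := by
    obtain ⟨i, hi, h⟩ := exists_mem_eq_sup' (PP_nonempty a) b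
    rw [hmP, h]; exact hB i
  refine ⟨δ / (2*B + 1), div_pos hδ (by linarith), ?_⟩
  intro t ht htle
  have hkey : ∀ i, i ∉ PP a → a i + t * b i < M + t * mP := by
    intro i hi
    have h1 : a i ≤ M - δ := by
      have : a i ≤ (univ \ PP a).sup' hc a := le_sup' a (mem_sdiff.2 ⟨mem_univ i, hi⟩)
      linarith
    have h2 : b i - mP ≤ 2*B := by
      have := hB i
      have h3 := hmPB
      have h4 := abs_le.1 this
      have h5 := abs_le.1 h3
      linarith
    have h6 : t * (b i - mP) ≤ t * (2*B) := mul_le_mul_of_nonneg_left h2 ht.le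
    have h7 : t * (2*B + 1) ≤ δ := by
      rw [← le_div_iff₀ (by linarith)]
      exact htle
    nlinarith
  have hmax : maxF (a + t • b) = M + t * mP := by
    apply le_antisymm
    · apply sup'_le
      intro i _
      simp only [Pi.add_apply, Pi.smul_apply, smul_eq_mul]
      by_cases hi : i ∈ PP a
      · have h1 : a i = M := mem_PP.1 hi
        have h2 : b i ≤ mP := le_sup' b hi
        nlinarith
      · exact (hkey i hi).le
    · obtain ⟨i, hi, h⟩ := exists_mem_eq_sup' (PP_nonempty a) b
      have h1 : a i = M := mem_PP.1 hi
      have : (a + t • b) i = M + t * mP := by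
        simp only [Pi.add_apply, Pi.smul_apply, smul_eq_mul, h1, hmP, h]
      rw [← this]
      exact le_maxF _ i
  refine ⟨hmax, ?_⟩
  ext i
  rw [mem_PP, hmax]
  constructor
  · intro h
    by_cases hi : i ∈ PP a
    · refine mem_filter.2 ⟨hi, ?_⟩
      have h1 : a i = M := mem_PP.1 hi
      have h2 : t * b i = t * mP := by
        simp only [Pi.add_apply, Pi.smul_apply, smul_eq_mul, h1] at h
        linarith
      exact mul_left_cancel₀ (ne_of_gt ht) h2
    · exfalso
      have := hkey i hi
      simp only [Pi.add_apply, Pi.smul_apply, smul_eq_mul] at h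
      linarith
  · intro h
    obtain ⟨hi, hbi⟩ := mem_filter.1 h
    have h1 : a i = M := mem_PP.1 hi
    simp only [Pi.add_apply, Pi.smul_apply, smul_eq_mul, h1, hbi]

lemma pair_exists {ι : Type} [Fintype ι] [DecidableEq ι] [Nonempty ι]
    (W : Submodule ℝ (ι → ℝ)) (hW : ∀ a ∈ W, maxF a + minF a = 0)
    (a : ι → ℝ) (haW : a ∈ W) (ha0 : a ≠ 0)
    (hmin : ∀ z ∈ W, z ≠ 0 → (PP a).card + (QQ a).card ≤ (PP z).card + (QQ z).card) :
    ∃ i₀ j₀ : ι, i₀ ≠ j₀ ∧ a i₀ ≠ 0 ∧ ∀ b ∈ W, b i₀ + b j₀ = 0 := by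
  have hFa := hW a haW
  have hM : 0 < maxF a := by
    by_contra h
    push_neg at h
    have h3 := minF_le_maxF a
    have hM0 : maxF a = 0 := by linarith
    apply ha0
    funext i
    have h4 := le_maxF a i
    have h5 := minF_le a i
    show a i = 0
    linarith
  have hMm : minF a = -maxF a := by linarith
  obtain ⟨i₀, hi₀⟩ := PP_nonempty a
  obtain ⟨j₀, hj₀⟩ := QQ_nonempty a
  have hai : a i₀ = maxF a := mem_PP.1 hi₀
  have haj : a j₀ = minF a := mem_QQ.1 hj₀
  have hij : i₀ ≠ j₀ := by
    intro h
    rw [h, haj] at hai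
    linarith
  have hPne : PP a ≠ univ := by
    intro h
    have h1 : j₀ ∈ PP a := h ▸ mem_univ j₀
    have h2 := mem_PP.1 h1
    rw [haj] at h2
    linarith
  have hQne : PP (-a) ≠ univ := by
    rw [PP_neg]
    intro h
    have h1 : i₀ ∈ QQ a := h ▸ mem_univ i₀
    have h2 := mem_QQ.1 h1
    rw [hai] at h2
    linarith
  refine ⟨i₀, j₀, hij, by rw [hai]; exact ne_of_gt hM, ?_⟩
  intro b hbW
  obtain ⟨t₁, ht₁, H₁⟩ := perturb a b hPne
  obtain ⟨t₂, ht₂, H₂⟩ := perturb (-a) (-b) hQne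
  set t := min t₁ t₂ with htdef
  have ht : 0 < t := lt_min ht₁ ht₂
  obtain ⟨e1, e2⟩ := H₁ t ht (min_le_left _ _)
  obtain ⟨e1', e2'⟩ := H₂ t ht (min_le_right _ _)
  have hneg : -a + t • (-b) = -(a + t • b) := by
    funext i
    simp only [Pi.add_apply, Pi.neg_apply, Pi.smul_apply, smul_eq_mul, mul_neg]
    ring
  rw [hneg] at e1' e2'
  set z := a + t • b with hzdef
  set mP := (PP a).sup' (PP_nonempty a) b with hmPdef
  set mQ := (QQ a).inf' (QQ_nonempty a) b with hmQdef
  set s := (PP (-a)).sup' (PP_nonempty (-a)) (-b) with hsdef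
  have hs : s = -mQ := by
    rw [hsdef, hmQdef]
    rw [Finset.sup'_congr (PP_nonempty (-a)) (PP_neg a) (fun i _ => rfl)]
    exact sup'_neg' (QQ_nonempty a) b
  have e3 : minF z = minF a + t * mQ := by
    rw [maxF_neg, maxF_neg] at e1'
    rw [hs] at e1'
    linarith
  have hFz := hW z (W.add_mem haW (W.smul_mem t hbW))
  have hrel : mP + mQ = 0 := by
    rw [e1, e3] at hFz
    have h0 : t * (mP + mQ) = 0 := by rw [mul_add]; linarith
    rcases mul_eq_zero.1 h0 with h | h
    · exact absurd h (ne_of_gt ht)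
    · exact h
  have hz0 : z ≠ 0 := by
    intro h
    have h1 : PP (0 : ι → ℝ) = {i ∈ PP a | b i = mP} := by rw [← h]; exact e2
    rw [PP_zero] at h1
    apply hPne
    apply subset_antisymm (subset_univ _)
    intro i _
    exact (mem_filter.1 (h1 ▸ mem_univ i)).1
  have hsz := hmin z (W.add_mem haW (W.smul_mem t hbW)) hz0
  have hQz : QQ z = {i ∈ QQ a | (-b) i = s} := by
    rw [← PP_neg z, e2', PP_neg a]
  have hcQ : QQ z ⊆ QQ a := by rw [hQz]; exact filter_subset _ _
  have hcP : PP z ⊆ PP a := by rw [e2]; exact filter_subset _ _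
  have hcardeqP : {i ∈ PP a | b i = mP} = PP a := by
    apply Finset.eq_of_subset_of_card_le (filter_subset _ _)
    have h1 := Finset.card_le_card hcQ
    rw [e2] at hsz
    omega
  have hcardeqQ : {i ∈ QQ a | (-b) i = s} = QQ a := by
    apply Finset.eq_of_subset_of_card_le (filter_subset _ _)
    have h1 := Finset.card_le_card hcP
    rw [hQz] at hsz
    omega
  have hbi : b i₀ = mP := by
    have h1 : i₀ ∈ filter (fun i => b i = mP) (PP a) := by rw [hcardeqP]; exact hi₀
    exact (mem_filter.1 h1).2
  have hbj : (-b) j₀ = s := by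
    have h1 : j₀ ∈ filter (fun i => (-b) i = s) (QQ a) := by rw [hcardeqQ]; exact hj₀
    exact (mem_filter.1 h1).2
  have hbj' : b j₀ = mQ := by
    rw [hs] at hbj
    simpa using hbj
  rw [hbi, hbj']
  exact hrel

theorem pairing (N : ℕ) : ∀ (ι : Type) [Fintype ι] [DecidableEq ι] [Nonempty ι],
    Fintype.card ι = N → ∀ W : Submodule ℝ (ι → ℝ),
    (∀ a ∈ W, maxF a + minF a = 0) → 2 * Module.finrank ℝ W ≤ N := by
  induction N using Nat.strong_induction_on with
  | _ N IH =>
  intro ι _ _ _ hcard W hW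
  by_cases hbot : W = ⊥
  · subst hbot
    simp [finrank_bot]
  obtain ⟨a₀, ha₀W, ha₀⟩ := Submodule.exists_mem_ne_zero_of_ne_bot hbot
  set S : Set ℕ := {m | ∃ a, a ∈ W ∧ a ≠ 0 ∧ (PP a).card + (QQ a).card = m} with hS
  have hSne : S.Nonempty := ⟨_, a₀, ha₀W, ha₀, rfl⟩
  obtain ⟨a, haW, ha0, hamin⟩ : ∃ a, a ∈ W ∧ a ≠ 0 ∧ (PP a).card + (QQ a).card = sInf S :=
    Nat.sInf_mem hSne
  have hmin : ∀ z ∈ W, z ≠ 0 → (PP a).card + (QQ a).card ≤ (PP z).card + (QQ z).card := by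
    intro z hz hz0
    rw [hamin]
    exact Nat.sInf_le ⟨z, hz, hz0, rfl⟩
  obtain ⟨i₀, j₀, hij, hai0, hpair⟩ := pair_exists W hW a haW ha0 hmin
  have hN2 : 2 ≤ N := by
    rw [← hcard]
    exact Fintype.one_lt_card_iff_nontrivial.2 ⟨⟨i₀, j₀, hij⟩⟩
  set W₁ : Submodule ℝ (ι → ℝ) := W ⊓ LinearMap.ker (LinearMap.proj (R := ℝ) (φ := fun _ : ι => ℝ) i₀) with hW₁
  have hW₁sub : ∀ b ∈ W₁, b ∈ W ∧ b i₀ = 0 ∧ b j₀ = 0 := by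
    intro b hb
    obtain ⟨hbW, hbk⟩ := Submodule.mem_inf.1 hb
    have h1 : b i₀ = 0 := hbk
    refine ⟨hbW, h1, ?_⟩
    have := hpair b hbW
    linarith
  have hrank : Module.finrank ℝ W ≤ Module.finrank ℝ W₁ + 1 := by
    have hsup : W ≤ W₁ ⊔ Submodule.span ℝ {a} := by
      intro b hb
      have hmem : b - (b i₀ / a i₀) • a ∈ W₁ := by
        refine Submodule.mem_inf.2 ⟨W.sub_mem hb (W.smul_mem _ haW), ?_⟩
        show (b - (b i₀ / a i₀) • a) i₀ = 0
        simp only [Pi.sub_apply, Pi.smul_apply, smul_eq_mul]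
        field_simp
        ring
      have : b = (b - (b i₀ / a i₀) • a) + (b i₀ / a i₀) • a := by abel
      rw [this]
      exact Submodule.add_mem_sup hmem
        (Submodule.smul_mem _ _ (Submodule.mem_span_singleton_self a))
    calc Module.finrank ℝ W ≤ Module.finrank ℝ ↥(W₁ ⊔ Submodule.span ℝ {a}) :=
          Submodule.finrank_mono hsup
      _ ≤ Module.finrank ℝ W₁ + Module.finrank ℝ ↥(Submodule.span ℝ {a}) := by
          have := Submodule.finrank_sup_add_finrank_inf_eq W₁ (Submodule.span ℝ {a})
          omega
      _ = Module.finrank ℝ W₁ + 1 := by rw [finrank_span_singleton ha0]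
  by_cases h1 : W₁ = ⊥
  · rw [h1, finrank_bot] at hrank
    omega
  obtain ⟨b₁, hb₁, hb₁0⟩ := Submodule.exists_mem_ne_zero_of_ne_bot h1
  obtain ⟨hb₁W, hb₁i, hb₁j⟩ := hW₁sub b₁ hb₁
  obtain ⟨i₁, hi₁⟩ : ∃ i, b₁ i ≠ 0 := by
    by_contra h
    push_neg at h
    exact hb₁0 (funext h)
  haveI hne' : Nonempty {i : ι // ¬ (i = i₀ ∨ i = j₀)} := by
    refine ⟨⟨i₁, ?_⟩⟩
    rintro (rfl | rfl)
    · exact hi₁ hb₁i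
    · exact hi₁ hb₁j
  set ι' := {i : ι // ¬ (i = i₀ ∨ i = j₀)} with hι'
  set ρ : (ι → ℝ) →ₗ[ℝ] (ι' → ℝ) := LinearMap.funLeft ℝ ℝ Subtype.val with hρ
  set W' := W₁.map ρ with hW'def
  have hre : Module.finrank ℝ W₁ = Module.finrank ℝ W' := by
    let ρ₁ : W₁ →ₗ[ℝ] (ι' → ℝ) := ρ.comp W₁.subtype
    have hinj' : Function.Injective ρ₁ := by
      rw [injective_iff_map_eq_zero]
      intro u hu
      obtain ⟨hbW, hbi, hbj⟩ := hW₁sub u.1 u.2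
      apply Subtype.ext
      funext i
      by_cases hi : i = i₀ ∨ i = j₀
      · rcases hi with rfl | rfl
        · exact hbi
        · exact hbj
      · exact congrFun hu ⟨i, hi⟩
    have hr : LinearMap.range ρ₁ = W' := by
      rw [hW'def]
      show LinearMap.range (ρ.comp W₁.subtype) = _
      rw [LinearMap.range_comp, Submodule.range_subtype]
    calc Module.finrank ℝ W₁ = Module.finrank ℝ (LinearMap.range ρ₁) :=
          (LinearEquiv.ofInjective ρ₁ hinj').finrank_eq
      _ = Module.finrank ℝ W' := by rw [hr]
  have hW'cond : ∀ c ∈ W', maxF c + minF c = 0 := by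
    intro c hc
    obtain ⟨b, hb, rfl⟩ := Submodule.mem_map.1 hc
    obtain ⟨hbW, hbi, hbj⟩ := hW₁sub b hb
    have hceq : ∀ i : ι', ρ b i = b i.1 := fun i => rfl
    have hFb := hW b hbW
    set sc := maxF (ρ b) with hsc
    set rc := minF (ρ b) with hrc
    have hub : maxF b = max sc 0 := by
      apply le_antisymm
      · apply sup'_le
        intro i _
        by_cases hi : i = i₀ ∨ i = j₀
        · rcases hi with rfl | rfl
          · rw [hbi]; exact le_max_right _ _
          · rw [hbj]; exact le_max_right _ _
        · exact le_trans (le_maxF (ρ b) ⟨i, hi⟩) (le_max_left _ _)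
      · apply max_le
        · apply sup'_le
          intro i _
          exact le_maxF b i.1
        · rw [← hbi]
          exact le_maxF b i₀
    have hlb : minF b = min rc 0 := by
      apply le_antisymm
      · apply le_min
        · apply Finset.le_inf'
          intro i _
          exact minF_le b i.1
        · rw [← hbi]
          exact minF_le b i₀
      · apply Finset.le_inf'
        intro i _
        by_cases hi : i = i₀ ∨ i = j₀
        · rcases hi with rfl | rfl
          · rw [hbi]; exact min_le_right _ _
          · rw [hbj]; exact min_le_right _ _
        · exact le_trans (min_le_left _ _) (minF_le (ρ b) ⟨i, hi⟩)
    rw [hub, hlb] at hFb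
    have hrs : rc ≤ sc := minF_le_maxF (ρ b)
    rcases le_or_gt 0 sc with hsc | hsc
    · rcases le_or_gt rc 0 with hrc | hrc
      · rw [max_eq_left hsc, min_eq_left hrc] at hFb
        exact hFb
      · rw [max_eq_left hsc, min_eq_right hrc.le] at hFb
        linarith
    · rw [max_eq_right hsc.le, min_eq_left (hrs.trans hsc.le)] at hFb
      linarith
  have hcard' : Fintype.card ι' = N - 2 := by
    have h2 : Fintype.card {i : ι // i = i₀ ∨ i = j₀} = 2 := by
      rw [Fintype.card_subtype]
      have : ({i ∈ univ | i = i₀ ∨ i = j₀} : Finset ι) = {i₀, j₀} := by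
        ext i
        simp [Finset.mem_insert]
      rw [this, Finset.card_pair hij]
    show Fintype.card {i : ι // ¬ (i = i₀ ∨ i = j₀)} = N - 2
    rw [Fintype.card_subtype_compl, h2, hcard]
  have hIH := IH (N - 2) (by omega) ι' hcard' W' hW'cond
  omega

end Comb

section Topo
open Finset Module Set

variable {K : Type*} [TopologicalSpace K] [LocallyCompactSpace K] [T2Space K]

local notation "C₀" => ZeroAtInftyContinuousMap K ℝ

lemma c0_apply_le_norm (f : C₀) (k : K) : |f k| ≤ ‖f‖ := by
  rw [← ZeroAtInftyContinuousMap.norm_toBCF_eq_norm, ← Real.norm_eq_abs]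
  exact f.toBCF.norm_coe_le_norm k

lemma c0_norm_le (f : C₀) (C : ℝ) (h0 : 0 ≤ C) (h : ∀ k, |f k| ≤ C) : ‖f‖ ≤ C := by
  rw [← ZeroAtInftyContinuousMap.norm_toBCF_eq_norm]
  exact (BoundedContinuousFunction.norm_le h0).2 (fun k => by rw [Real.norm_eq_abs]; exact h k)

lemma c0_sum_apply {n : ℕ} (f : Fin n → C₀) (k : K) : (∑ i, f i) k = ∑ i, f i k := by
  let φ : C₀ →+ (K → ℝ) :=
    { toFun := fun f => ⇑f
      map_zero' := ZeroAtInftyContinuousMap.coe_zero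
      map_add' := ZeroAtInftyContinuousMap.coe_add }
  calc (∑ i, f i) k = (φ (∑ i, f i)) k := rfl
    _ = (∑ i, φ (f i)) k := by rw [map_sum]
    _ = ∑ i, f i k := by rw [Finset.sum_apply]; rfl

lemma exists_bumps (hK : ∀ k : K, ¬ IsOpen ({k} : Set K))
    {V : Set K} (hV : IsOpen V) (hVne : V.Nonempty) (N : ℕ) :
    ∃ (p : Fin N → K) (g : Fin N → C₀) (U : Fin N → Set K),
      (∀ i, U i ⊆ V) ∧ (∀ i, p i ∈ U i) ∧
      (∀ i j, i ≠ j → Disjoint (U i) (U j)) ∧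
      (∀ i, g i (p i) = 1) ∧ (∀ i k, k ∉ U i → g i k = 0) ∧
      (∀ i k, g i k ∈ Icc (0:ℝ) 1) := by
  have hVinf : V.Infinite := by
    intro hfin
    obtain ⟨q, hq⟩ := hVne
    exact hK q (isOpen_singleton_of_finite_mem_nhds q (hV.mem_nhds hq) hfin)
  obtain ⟨tf, htfV, htfcard⟩ := hVinf.exists_subset_card_eq N
  have e : Fin N ≃ tf := (Finset.equivFinOfCardEq htfcard).symm
  set p : Fin N → K := fun i => (e i : K) with hp
  have hpmem : ∀ i, p i ∈ tf := fun i => (e i).2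
  have hpinj : Function.Injective p := fun i j h => e.injective (Subtype.ext h)
  obtain ⟨Us, hUs, hUsd⟩ := (tf.finite_toSet).t2_separation
  set U : Fin N → Set K := fun i => Us (p i) ∩ V with hU
  have hUopen : ∀ i, IsOpen (U i) := fun i => ((hUs (p i)).2).inter hV
  have hUsub : ∀ i, U i ⊆ V := fun i => inter_subset_right
  have hUp : ∀ i, p i ∈ U i := fun i => ⟨(hUs (p i)).1, htfV (hpmem i)⟩
  have hUdisj : ∀ i j, i ≠ j → Disjoint (U i) (U j) := by
    intro i j hij
    have h1 : Disjoint (Us (p i)) (Us (p j)) :=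
      hUsd (by exact_mod_cast hpmem i) (by exact_mod_cast hpmem j) (fun h => hij (hpinj h))
    exact h1.mono inter_subset_left inter_subset_left
  have hbump : ∀ i : Fin N, ∃ g : C₀, g (p i) = 1 ∧ (∀ k, k ∉ U i → g k = 0) ∧
      ∀ k, g k ∈ Icc (0:ℝ) 1 := by
    intro i
    obtain ⟨f, hf1, hf0, hfc, hf01⟩ :=
      exists_continuous_one_zero_of_isCompact (isCompact_singleton : IsCompact {p i})
        (hUopen i).isClosed_compl (disjoint_compl_right_iff_subset.mpr
          (singleton_subset_iff.2 (hUp i)))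
    refine ⟨⟨f, hfc.is_zero_at_infty⟩, hf1 rfl, fun k hk => hf0 hk, fun k => hf01 k⟩
  choose g hg1 hg0 hg01 using hbump
  exact ⟨p, g, U, hUsub, hUp, hUdisj, hg1, hg0, hg01⟩

lemma key_lemma (hK : ∀ k : K, ¬ IsOpen ({k} : Set K))
    (Y : Submodule ℝ C₀) (hcodim : FiniteDimensional ℝ (C₀ ⧸ Y))
    (x : C₀) (ε ε' : ℝ) (hε : 0 ≤ ε) (hεε' : ε < ε') (hε' : ε' < 1)
    (hxn : 0 < ‖x‖) (hx : ∃ k₀, ε' * ‖x‖ < x k₀) :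
    ∃ y ∈ Y, ∃ t : ℝ, ‖y + t • x‖ < ‖y‖ - ε * ‖t • x‖ := by
  obtain ⟨k₀, hk₀⟩ := hx
  set V : Set K := {k | ε' * ‖x‖ < x k} with hVdef
  have hVopen : IsOpen V := isOpen_lt continuous_const (map_continuous x)
  have hVne : V.Nonempty := ⟨k₀, hk₀⟩
  set n := finrank ℝ (C₀ ⧸ Y) with hn
  set N := 2 * n + 1 with hN
  obtain ⟨p, g, U, hUsub, hUp, hUdisj, hg1, hg0, hg01⟩ := exists_bumps hK hVopen hVne N
  haveI : Nonempty (Fin N) := ⟨⟨0, by omega⟩⟩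
  set T : (Fin N → ℝ) →ₗ[ℝ] (C₀ ⧸ Y) := Y.mkQ.comp (Fintype.linearCombination ℝ g) with hT
  set W := LinearMap.ker T with hW
  have hWY : ∀ a, a ∈ W → (∑ i, a i • g i) ∈ Y := by
    intro a ha
    have h1 : T a = 0 := ha
    rw [hT] at h1
    simp only [LinearMap.comp_apply, Fintype.linearCombination_apply] at h1
    rwa [Submodule.mkQ_apply, Submodule.Quotient.mk_eq_zero] at h1
  have hrank : n + 1 ≤ finrank ℝ W := by
    have h1 := LinearMap.finrank_range_add_finrank_ker T
    rw [Module.finrank_fin_fun] at h1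
    have h2 : finrank ℝ (LinearMap.range T) ≤ n := Submodule.finrank_le _
    have h3 : finrank ℝ W = finrank ℝ (LinearMap.ker T) := by rw [hW]
    omega
  have hex : ∃ a ∈ W, 0 < maxF a + minF a := by
    have hex0 : ∃ a ∈ W, maxF a + minF a ≠ 0 := by
      by_contra h
      push_neg at h
      have := pairing N (Fin N) (Fintype.card_fin N) W h
      omega
    obtain ⟨a, haW, hFa⟩ := hex0
    rcases lt_or_gt_of_ne hFa with h | h
    · refine ⟨-a, W.neg_mem haW, ?_⟩
      have h1 : maxF (-a) = -minF a := maxF_neg a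
      have h2 : minF (-a) = -maxF a := by
        have := maxF_neg (-a)
        rw [neg_neg] at this
        linarith
      rw [h1, h2]
      linarith
    · exact ⟨a, haW, h⟩
  obtain ⟨a, haW, hFa⟩ := hex
  have hMm := minF_le_maxF a
  have hM : 0 < maxF a := by linarith
  set b : Fin N → ℝ := (maxF a)⁻¹ • a with hb
  have hbW : b ∈ W := W.smul_mem _ haW
  have hbval : ∀ i, b i = (maxF a)⁻¹ * a i := fun i => rfl
  have hb_le : ∀ i, b i ≤ 1 := by
    intro i
    rw [hbval]
    have h1 : (maxF a)⁻¹ * a i ≤ (maxF a)⁻¹ * maxF a :=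
      mul_le_mul_of_nonneg_left (le_maxF a i) (inv_nonneg.2 hM.le)
    rwa [inv_mul_cancel₀ (ne_of_gt hM)] at h1
  set θ : ℝ := max (-((maxF a)⁻¹ * minF a)) 0 with hθ
  have hθ0 : 0 ≤ θ := le_max_right _ _
  have hθ1 : θ < 1 := by
    apply max_lt _ one_pos
    have h1 : -maxF a < minF a := by linarith
    have h2 : (maxF a)⁻¹ * (-maxF a) < (maxF a)⁻¹ * minF a :=
      mul_lt_mul_of_pos_left h1 (inv_pos.2 hM)
    rw [mul_neg, inv_mul_cancel₀ (ne_of_gt hM)] at h2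
    linarith
  have hb_ge : ∀ i, -θ ≤ b i := by
    intro i
    rw [hbval]
    have h1 : (maxF a)⁻¹ * minF a ≤ (maxF a)⁻¹ * a i :=
      mul_le_mul_of_nonneg_left (minF_le a i) (inv_nonneg.2 hM.le)
    have h2 : -((maxF a)⁻¹ * minF a) ≤ θ := le_max_left _ _
    linarith
  obtain ⟨i₁, hi₁mem⟩ := PP_nonempty a
  have hbi₁ : b i₁ = 1 := by
    rw [hbval, mem_PP.1 hi₁mem, inv_mul_cancel₀ (ne_of_gt hM)]
  set y : C₀ := ∑ i, b i • g i with hy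
  have hyY : y ∈ Y := hWY b hbW
  have hy_eval : ∀ k, y k = ∑ i, b i * g i k := by
    intro k
    rw [hy, c0_sum_apply]
    apply Finset.sum_congr rfl
    intro i _
    simp [ZeroAtInftyContinuousMap.coe_smul]
  have hy_cases : ∀ k : K, y k = 0 ∨ (∃ i, k ∈ U i ∧ y k = b i * g i k) := by
    intro k
    by_cases h : ∃ i, k ∈ U i
    · right
      obtain ⟨i, hi⟩ := h
      refine ⟨i, hi, ?_⟩
      rw [hy_eval]
      apply Finset.sum_eq_single i
      · intro j _ hji
        have hkj : k ∉ U j := by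
          intro hk
          exact (Set.disjoint_left.1 (hUdisj j i hji)) hk hi
        rw [hg0 j k hkj, mul_zero]
      · intro hi'
        exact absurd (Finset.mem_univ i) hi'
    · left
      push_neg at h
      rw [hy_eval]
      apply Finset.sum_eq_zero
      intro j _
      rw [hg0 j k (h j), mul_zero]
  have hy_le : ∀ k, |y k| ≤ 1 := by
    intro k
    rcases hy_cases k with h | ⟨i, _, h⟩
    · rw [h]; simp
    · rw [h, abs_le]
      obtain ⟨hg0', hg1'⟩ := hg01 i k
      constructor
      · nlinarith [hb_ge i]
      · nlinarith [hb_le i]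
  have hy_peak : y (p i₁) = 1 := by
    rw [hy_eval]
    rw [Finset.sum_eq_single i₁]
    · rw [hbi₁, hg1 i₁, one_mul]
    · intro j _ hji
      have hkj : p i₁ ∉ U j := by
        intro hk
        exact (Set.disjoint_left.1 (hUdisj j i₁ hji)) hk (hUp i₁)
      rw [hg0 j _ hkj, mul_zero]
    · intro hi'
      exact absurd (Finset.mem_univ i₁) hi'
  have hy_norm : ‖y‖ = 1 := by
    apply le_antisymm (c0_norm_le y 1 zero_le_one hy_le)
    calc (1:ℝ) = |y (p i₁)| := by rw [hy_peak]; norm_num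
      _ ≤ ‖y‖ := c0_apply_le_norm y _
  set ε'' : ℝ := (ε + ε') / 2 with hε''
  set D : ℝ := (1 + ε') * ‖x‖ + 1 with hD
  have hDpos : 0 < D := by nlinarith
  set t : ℝ := (1 - θ) / D with ht
  have htpos : 0 < t := div_pos (by linarith) hDpos
  have htD : t * D = 1 - θ := div_mul_cancel₀ _ (ne_of_gt hDpos)
  set X := t * ‖x‖ with hX
  have hX0 : 0 < X := mul_pos htpos hxn
  have hXeq : X + ε' * X + t = 1 - θ := by
    rw [hX, ← htD, hD]
    ring
  have hee : ε'' ≤ ε' := by rw [hε'']; linarith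
  have h6' : ε'' * X ≤ ε' * X := mul_le_mul_of_nonneg_right hee hX0.le
  have hX1 : X + ε'' * X ≤ 1 - θ := by linarith
  have hbound : ∀ k, |(y + (-t) • x) k| ≤ 1 - ε'' * X := by
    intro k
    have hxk := abs_le.1 (c0_apply_le_norm x k)
    have heval : (y + (-t) • x) k = y k + (-t) * x k := by
      rw [ZeroAtInftyContinuousMap.coe_add, Pi.add_apply,
        ZeroAtInftyContinuousMap.coe_smul, Pi.smul_apply, smul_eq_mul]
    have h7 : t * x k ≤ X := by
      rw [hX]
      exact mul_le_mul_of_nonneg_left hxk.2 htpos.le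
    have h7' : -X ≤ t * x k := by
      rw [hX]
      nlinarith [hxk.1, htpos.le]
    rw [heval, abs_le]
    rcases hy_cases k with h | ⟨i, hkU, h⟩
    · rw [h]
      constructor <;> [linarith; linarith]
    · have hkV : ε' * ‖x‖ < x k := hUsub i hkU
      obtain ⟨hg0', hg1'⟩ := hg01 i k
      have hyk1 : y k ≤ 1 := by nlinarith [hb_le i, h]
      have hyk2 : -θ ≤ y k := by nlinarith [hb_ge i, hθ0, h]
      have hta : t * (ε' * ‖x‖) ≤ t * x k := mul_le_mul_of_nonneg_left hkV.le htpos.le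
      have h5 : ε' * X = t * (ε' * ‖x‖) := by rw [hX]; ring
      constructor
      · linarith
      · linarith
  have hRHS0 : 0 ≤ 1 - ε'' * X := by linarith
  have hnorm1 : ‖y + (-t) • x‖ ≤ 1 - ε'' * X := c0_norm_le _ _ hRHS0 hbound
  refine ⟨y, hyY, -t, ?_⟩
  have h2 : ‖(-t) • x‖ = t * ‖x‖ := by
    have h := norm_smul (-t) x
    rw [Real.norm_eq_abs, abs_neg, abs_of_pos htpos] at h
    exact h
  rw [h2, hy_norm, ← hX]
  have h3 : ε * X < ε'' * X := by
    apply mul_lt_mul_of_pos_right _ hX0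
    rw [hε'']
    linarith
  linarith

lemma main_aux (hK : ∀ k : K, ¬ IsOpen ({k} : Set K))
    (Y : Submodule ℝ C₀) (hcodim : FiniteDimensional ℝ (C₀ ⧸ Y)) :
    ∀ x : C₀, x ≠ 0 → ∀ ε : ℝ, 0 ≤ ε → ε < 1 →
      ∃ y ∈ Y, ¬ ∀ lam : ℝ, ‖y‖ - ε * ‖lam • x‖ ≤ ‖y + lam • x‖ := by
  intro x hx ε hε0 hε1
  have hxn : 0 < ‖x‖ := norm_pos_iff.mpr hx
  set ε' : ℝ := (1 + ε) / 2 with hε'def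
  have hεε' : ε < ε' := by rw [hε'def]; linarith
  have hε'1 : ε' < 1 := by rw [hε'def]; linarith
  have hk : ∃ k₀, ε' * ‖x‖ < |x k₀| := by
    by_contra h
    push_neg at h
    have hε'pos : 0 < ε' := by rw [hε'def]; linarith
    have h1 : ‖x‖ ≤ ε' * ‖x‖ := c0_norm_le x _ (by positivity) h
    nlinarith
  obtain ⟨k₀, hk₀⟩ := hk
  rcases lt_abs.1 hk₀ with h | h
  · obtain ⟨y, hyY, t, hlt⟩ := key_lemma hK Y hcodim x ε ε' hε0 hεε' hε'1 hxn ⟨k₀, h⟩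
    exact ⟨y, hyY, fun hall => absurd (hall t) (not_le.2 (by linarith))⟩
  · have hxn' : 0 < ‖-x‖ := by rwa [norm_neg]
    have hx' : ∃ k₁, ε' * ‖-x‖ < (-x) k₁ := by
      refine ⟨k₀, ?_⟩
      rw [norm_neg]
      simpa using h
    obtain ⟨y, hyY, t, hlt⟩ := key_lemma hK Y hcodim (-x) ε ε' hε0 hεε' hε'1 hxn' hx'
    refine ⟨y, hyY, fun hall => absurd (hall (-t)) (not_le.2 ?_)⟩
    have e1 : (-t) • x = t • (-x) := (neg_smul t x).trans (smul_neg t x).symm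
    rw [e1]
    exact hlt

end Topo


/-- Let `K` be a locally connected, locally compact, perfectly normal
Hausdorff space with no isolated points. Then every finite-codimensional subspace of
`C₀(K, ℝ)` is strongly anti-coproximinal. -/
theorem stronglyAntiCoproximinal_of_finiteCodimensional_C0
    {K : Type*} [TopologicalSpace K] [LocallyConnectedSpace K] [LocallyCompactSpace K]
    [T2Space K] [PerfectlyNormalSpace K]
    (hK : ∀ k : K, ¬ IsOpen ({k} : Set K))
    (Y : Submodule ℝ (ZeroAtInftyContinuousMap K ℝ))
    (hcodim : FiniteDimensional ℝ (ZeroAtInftyContinuousMap K ℝ ⧸ Y)) :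
    StronglyAntiCoproximinal (Y : Set (ZeroAtInftyContinuousMap K ℝ)) := by
  intro x hx ε h1 h2
  exact main_aux hK Y hcodim x hx ε h1 h2
end

section
/- Let X and Y be Banach spaces, let ε ∈ [0,1), and let T ∈ L(X, Y) be an absolutely strongly exposing operator with M_T = { μ x₀ : |μ| = 1 } for some x₀ ∈ S_X. Then for any A ∈ L(X, Y) with ‖A‖ = 1, the following are equivalent: (i) T ⊥_B^ε A; (ii) there exists y* ∈ Y* with ‖y*‖ = 1, y*(T x₀) = ‖T‖, and |y*(A x₀)| ≤ ε. Moreover, if M_T ⊆ M_A, then T ⊥_B^ε A if and only if T x₀ ⊥_B^ε A x₀. -/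
open Filter Topology Metric NormedSpace

lemma aux_star_to_dual {𝕜 Y : Type*} [RCLike 𝕜] [NormedAddCommGroup Y] [NormedSpace 𝕜 Y]
    [CompleteSpace Y]
    {ε c : ℝ} (hε0 : 0 ≤ ε) (hc : 0 < c) (u v : Y) (hu : ‖u‖ = c)
    (hstar : ∀ b : 𝕜, c - ε * ‖b‖ ≤ ‖u + b • v‖) :
    ∃ φ : Y →L[𝕜] 𝕜, ‖φ‖ = 1 ∧ φ u = (c : 𝕜) ∧ ‖φ v‖ ≤ ε := by
  haveI : Fact ((1:ENNReal) ≤ 1) := ⟨le_rfl⟩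
  set Z := WithLp 1 (Y × 𝕜) with hZ
  have znorm : ∀ w : Z, ‖w‖ = ‖w.fst‖ + ‖w.snd‖ := by
    intro w
    rw [WithLp.prod_norm_eq_add (by norm_num)]
    norm_num
  let L : (Y × 𝕜) ≃ₗ[𝕜] Z := (WithLp.linearEquiv 1 𝕜 (Y × 𝕜)).symm
  have Lfst : ∀ w : Y × 𝕜, (L w).fst = w.fst := fun _ => rfl
  have Lsnd : ∀ w : Y × 𝕜, (L w).snd = w.snd := fun _ => rfl
  let k₀ : Z := L (v, (ε : 𝕜))
  let K : Submodule 𝕜 Z := Submodule.span 𝕜 {k₀}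
  haveI : IsClosed (K : Set Z) := K.closed_of_finiteDimensional
  let zu : Z := L (u, 0)
  have hrep : ∀ m : Z, (Submodule.Quotient.mk m : Z ⧸ K) = Submodule.Quotient.mk zu →
      c ≤ ‖m‖ := by
    intro m hm
    rw [Submodule.Quotient.eq] at hm
    obtain ⟨b, hb⟩ := Submodule.mem_span_singleton.1 hm
    have hmz : m = L (u + b • v, b • (ε : 𝕜)) := by
      have : m = zu + b • k₀ := by rw [hb]; abel
      rw [this]
      simp only [zu, k₀, ← map_smul, ← map_add, Prod.smul_mk, Prod.mk_add_mk, zero_add]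
    rw [hmz, znorm]
    rw [Lfst, Lsnd]
    have h2 : ‖b • (ε:𝕜)‖ = ‖b‖ * ε := by
      rw [norm_smul, RCLike.norm_ofReal, abs_of_nonneg hε0]
    have := hstar b
    simp only [h2]
    nlinarith [norm_nonneg b]
  have hnorm : ‖(Submodule.Quotient.mk zu : Z ⧸ K)‖ = c := by
    refine le_antisymm ?_ ?_
    · refine (Submodule.Quotient.norm_mk_le K zu).trans ?_
      rw [znorm, Lfst, Lsnd]
      simp [hu]
    · by_contra h
      push_neg at h
      obtain ⟨m, hm, hlt⟩ := Submodule.Quotient.norm_mk_lt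
        (Submodule.Quotient.mk zu : Z ⧸ K) (sub_pos.2 h)
      have := hrep m hm
      linarith
  have hz0 : (Submodule.Quotient.mk zu : Z ⧸ K) ≠ 0 := by
    intro h
    rw [h, norm_zero] at hnorm
    exact hc.ne hnorm
  obtain ⟨ψ, hψ1, hψ2⟩ := exists_dual_vector 𝕜 _ (norm_ne_zero_iff.mpr hz0)
  let φ₀ : Y →ₗ[𝕜] 𝕜 :=
    ψ.toLinearMap ∘ₗ K.mkQ ∘ₗ L.toLinearMap ∘ₗ LinearMap.inl 𝕜 Y 𝕜
  have hφ₀ : ∀ y : Y, φ₀ y = ψ (Submodule.Quotient.mk (L (y, 0))) := fun _ => rfl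
  have hbound : ∀ y : Y, ‖φ₀ y‖ ≤ 1 * ‖y‖ := by
    intro y
    rw [hφ₀, one_mul]
    calc ‖ψ (Submodule.Quotient.mk (L (y, 0)))‖
        ≤ ‖ψ‖ * ‖(Submodule.Quotient.mk (L (y, 0)) : Z ⧸ K)‖ := ψ.le_opNorm _
      _ ≤ 1 * ‖L (y, 0)‖ := by
          rw [hψ1]
          exact mul_le_mul_of_nonneg_left (Submodule.Quotient.norm_mk_le K _) zero_le_one
      _ = ‖y‖ := by rw [one_mul, znorm, Lfst, Lsnd]; simp
  let φ : Y →L[𝕜] 𝕜 := LinearMap.mkContinuous φ₀ 1 hbound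
  have hφu : φ u = (c : 𝕜) := by
    show φ₀ u = (c : 𝕜)
    rw [hφ₀, hψ2, hnorm]
  refine ⟨φ, ?_, hφu, ?_⟩
  · refine le_antisymm (LinearMap.mkContinuous_norm_le φ₀ zero_le_one hbound) ?_
    have h1 := φ.le_opNorm u
    rw [hφu, hu, RCLike.norm_ofReal, abs_of_pos hc] at h1
    nlinarith
  · show ‖φ₀ v‖ ≤ ε
    rw [hφ₀]
    have hmkv : (Submodule.Quotient.mk (L (v, 0)) : Z ⧸ K)
        = Submodule.Quotient.mk (L (v, 0) - k₀) := by
      rw [Submodule.Quotient.eq]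
      simpa [K] using Submodule.mem_span_singleton_self k₀
    calc ‖ψ (Submodule.Quotient.mk (L (v, 0)))‖
        ≤ ‖ψ‖ * ‖(Submodule.Quotient.mk (L (v, 0)) : Z ⧸ K)‖ := ψ.le_opNorm _
      _ ≤ 1 * ‖L (v, 0) - k₀‖ := by
          rw [hψ1, hmkv]
          exact mul_le_mul_of_nonneg_left (Submodule.Quotient.norm_mk_le K _) zero_le_one
      _ ≤ ε := by
          rw [one_mul, ← map_sub, znorm, Lfst, Lsnd]
          simp [RCLike.norm_ofReal, abs_of_nonneg hε0]



lemma aux_exists_near {𝕜 X Y : Type*} [RCLike 𝕜]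
    [NormedAddCommGroup X] [NormedSpace 𝕜 X]
    [NormedAddCommGroup Y] [NormedSpace 𝕜 Y]
    (S : X →L[𝕜] Y) {δ : ℝ} (hδ : 0 < δ) :
    ∃ x : X, ‖x‖ ≤ 1 ∧ ‖S‖ - δ ≤ ‖S x‖ := by
  rcases lt_or_ge (‖S‖ - δ) 0 with h | h
  · exact ⟨0, by simp, by simp; linarith⟩
  · obtain ⟨x, hx1, hx2⟩ := S.exists_lt_apply_of_lt_opNorm (show ‖S‖ - δ < ‖S‖ by linarith)
    exact ⟨x, hx1.le, hx2.le⟩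

set_option maxHeartbeats 1000000 in
lemma aux_ASE_key {𝕜 X Y : Type*} [RCLike 𝕜]
    [NormedAddCommGroup X] [NormedSpace 𝕜 X]
    [NormedAddCommGroup Y] [NormedSpace 𝕜 Y] [Nontrivial Y]
    (ε : ℝ) (hε0 : 0 ≤ ε)
    (T : X →L[𝕜] Y) (x₀ : X)
    (hASE : ∀ xs : ℕ → X, (∀ n, ‖xs n‖ ≤ 1) →
      Tendsto (fun n => ‖T (xs n)‖) atTop (𝓝 ‖T‖) →
      ∃ θ : ℕ → 𝕜, (∀ n, ‖θ n‖ = 1) ∧ Tendsto (fun n => θ n • xs n) atTop (𝓝 x₀))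
    (A : X →L[𝕜] Y) (hA : ‖A‖ = 1)
    (hi : ∀ lam : 𝕜, ‖T‖ - ε * ‖lam • A‖ ≤ ‖T + lam • A‖) (lam : 𝕜) :
    ‖T‖ - ε * ‖lam‖ ≤ ‖T x₀ + lam • A x₀‖ := by
  set cn : ℕ → ℝ := fun n => 1 / (n + 1) with hcn
  have hc0 : ∀ n, 0 < cn n := fun n => by positivity
  set Sop : ℕ → X →L[𝕜] Y := fun n => T + (((cn n : ℝ) : 𝕜) * lam) • A with hSop
  have hμ : ∀ n, ‖(((cn n : ℝ) : 𝕜) * lam) • A‖ = cn n * ‖lam‖ := by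
    intro n
    rw [norm_smul (((cn n : ℝ) : 𝕜) * lam) A, hA, mul_one, norm_mul, RCLike.norm_ofReal,
      abs_of_pos (hc0 n)]
  have hSlb : ∀ n, ‖T‖ - ε * (cn n * ‖lam‖) ≤ ‖Sop n‖ := by
    intro n
    have := hi ((((cn n : ℝ)) : 𝕜) * lam)
    rwa [hμ n] at this
  -- choose near-maximizers
  have hex : ∀ n, ∃ x : X, ‖x‖ ≤ 1 ∧ ‖Sop n‖ - cn n * cn n ≤ ‖Sop n x‖ := by
    intro n
    exact aux_exists_near _ (by have := hc0 n; positivity)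
  choose xs hxs1 hxs2 using hex
  have hcn0 : Tendsto cn atTop (𝓝 0) := tendsto_one_div_add_atTop_nhds_zero_nat
  -- ‖T (xs n)‖ → ‖T‖
  have hTlb : ∀ n, ‖T‖ - (ε * (cn n * ‖lam‖) + cn n * cn n + cn n * ‖lam‖) ≤ ‖T (xs n)‖ := by
    intro n
    have h1 : ‖Sop n (xs n)‖ ≤ ‖T (xs n)‖ + ‖((((cn n : ℝ)) : 𝕜) * lam) • A (xs n)‖ := by
      have : Sop n (xs n) = T (xs n) + ((((cn n : ℝ)) : 𝕜) * lam) • A (xs n) := by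
        simp [hSop]
      rw [this]; exact norm_add_le _ _
    have h2 : ‖((((cn n : ℝ)) : 𝕜) * lam) • A (xs n)‖ ≤ cn n * ‖lam‖ := by
      rw [norm_smul]
      calc ‖(((cn n : ℝ)) : 𝕜) * lam‖ * ‖A (xs n)‖
          ≤ ‖(((cn n : ℝ)) : 𝕜) * lam‖ * ‖A‖ := by
            apply mul_le_mul_of_nonneg_left (A.unit_le_opNorm _ (hxs1 n)) (norm_nonneg _)
        _ = cn n * ‖lam‖ := by
            rw [hA, mul_one, norm_mul, RCLike.norm_ofReal, abs_of_pos (hc0 n)]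
    have h3 := hxs2 n
    have h4 := hSlb n
    linarith
  have hTlim : Tendsto (fun n => ‖T (xs n)‖) atTop (𝓝 ‖T‖) := by
    have hlow : Tendsto (fun n => ‖T‖ - (ε * (cn n * ‖lam‖) + cn n * cn n + cn n * ‖lam‖))
        atTop (𝓝 ‖T‖) := by
      have : Tendsto (fun n => ε * (cn n * ‖lam‖) + cn n * cn n + cn n * ‖lam‖) atTop (𝓝 0) := by
        have h := ((hcn0.mul_const ‖lam‖).const_mul ε).add
          ((hcn0.mul hcn0).add (hcn0.mul_const ‖lam‖))
        simpa [add_assoc] using h.congr (fun n => by ring)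
      simpa using tendsto_const_nhds.sub this
    exact tendsto_of_tendsto_of_tendsto_of_le_of_le hlow tendsto_const_nhds
      (fun n => hTlb n) (fun n => T.unit_le_opNorm _ (hxs1 n))
  obtain ⟨θ, hθ1, hy⟩ := hASE xs hxs1 hTlim
  set y : ℕ → X := fun n => θ n • xs n with hy'
  have hy1 : ∀ n, ‖y n‖ ≤ 1 := by
    intro n
    rw [hy']
    rw [norm_smul (θ n) (xs n), hθ1 n, one_mul]
    exact hxs1 n
  have hSy : ∀ n, ‖Sop n (y n)‖ = ‖Sop n (xs n)‖ := by
    intro n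
    rw [hy']
    show ‖Sop n (θ n • xs n)‖ = _
    rw [map_smul, norm_smul (θ n) (Sop n (xs n)), hθ1 n, one_mul]
  -- norming functionals
  have hφex : ∀ n, ∃ φ : Y →L[𝕜] 𝕜, ‖φ‖ = 1 ∧ φ (Sop n (y n)) = (‖Sop n (y n)‖ : 𝕜) :=
    fun n => exists_dual_vector' 𝕜 _
  choose φ hφ1 hφ2 using hφex
  set CC : ℝ := ‖T + lam • A‖ with hCC
  set g : ℝ := ‖T x₀ + lam • A x₀‖ with hg
  have key : ∀ n, ‖T‖ - ε * ‖lam‖ -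
      (ε * (cn n * ‖lam‖) + cn n * cn n + cn n + cn n * ‖lam‖ + CC * ‖x₀ - y n‖) ≤ g := by
    intro n
    set r : ℝ := RCLike.re (φ n (lam • A (y n))) with hr
    have hrc0 := hc0 n
    have h1 : RCLike.re (φ n (Sop n (y n))) = ‖Sop n (y n)‖ := by
      rw [hφ2 n, RCLike.ofReal_re]
    have h2 : ‖Sop n‖ - cn n * cn n ≤ ‖Sop n (y n)‖ := by rw [hSy n]; exact hxs2 n
    have h3 := hSlb n
    have h4 : RCLike.re (φ n (T (y n))) ≤ ‖T‖ := by
      calc RCLike.re (φ n (T (y n))) ≤ ‖φ n (T (y n))‖ := RCLike.re_le_norm _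
        _ ≤ ‖φ n‖ * ‖T (y n)‖ := (φ n).le_opNorm _
        _ ≤ 1 * ‖T‖ := by
            rw [hφ1 n]
            exact mul_le_mul_of_nonneg_left (T.unit_le_opNorm _ (hy1 n)) zero_le_one
        _ = ‖T‖ := one_mul _
    -- decomposition of φ (S y)
    have h5a : φ n ((((cn n : ℝ) : 𝕜)) • (lam • A (y n)))
        = (((cn n : ℝ) : 𝕜)) * φ n (lam • A (y n)) := by
      rw [map_smul]; rfl
    have h5 : RCLike.re (φ n (Sop n (y n)))
        = RCLike.re (φ n (T (y n))) + cn n * r := by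
      have hdec : Sop n (y n) = T (y n) + (((cn n : ℝ) : 𝕜)) • (lam • A (y n)) := by
        simp [hSop, mul_smul]
      rw [hdec, map_add, h5a, map_add, RCLike.re_ofReal_mul, hr]
    have h6 : -(ε * ‖lam‖) - cn n ≤ r := by
      have hcr : cn n * (-(ε * ‖lam‖) - cn n) ≤ cn n * r := by
        have heq : cn n * r = RCLike.re (φ n (Sop n (y n))) - RCLike.re (φ n (T (y n))) := by
          rw [h5]; ring
        rw [heq, h1]
        nlinarith
      exact (mul_le_mul_iff_right₀ hrc0).1 hcr
    have h7 : r ≤ ‖lam‖ := by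
      calc r ≤ ‖φ n (lam • A (y n))‖ := RCLike.re_le_norm _
        _ ≤ ‖φ n‖ * ‖lam • A (y n)‖ := (φ n).le_opNorm _
        _ ≤ 1 * (‖lam‖ * 1) := by
            rw [hφ1 n, one_mul, one_mul, norm_smul lam (A (y n))]
            exact mul_le_mul_of_nonneg_left
              (by rw [← hA]; exact A.unit_le_opNorm _ (hy1 n)) (norm_nonneg _)
        _ = ‖lam‖ := by ring
    have h7' : cn n * r ≤ cn n * ‖lam‖ := mul_le_mul_of_nonneg_left h7 hrc0.le
    -- decomposition of (T + lam A) y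
    have hcoef : (((cn n : ℝ) : 𝕜)) + (((1 - cn n : ℝ) : 𝕜)) = 1 := by push_cast; ring
    have hdec8 : (T + lam • A) (y n) = Sop n (y n) + (((1 - cn n : ℝ) : 𝕜)) • (lam • A (y n)) := by
      have e1 : (T + lam • A) (y n) = T (y n) + lam • A (y n) := by
        simp
      have e2 : Sop n (y n) = T (y n) + (((cn n : ℝ) : 𝕜)) • (lam • A (y n)) := by
        simp [hSop, mul_smul]
      rw [e1, e2, add_assoc, ← add_smul, hcoef, one_smul]
    have h8a : φ n ((((1 - cn n : ℝ) : 𝕜)) • (lam • A (y n)))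
        = (((1 - cn n : ℝ) : 𝕜)) * φ n (lam • A (y n)) := by
      rw [map_smul]; rfl
    have h8 : RCLike.re (φ n ((T + lam • A) (y n)))
        = RCLike.re (φ n (Sop n (y n))) + (1 - cn n) * r := by
      rw [hdec8, map_add, h8a, map_add, RCLike.re_ofReal_mul, hr]
    have h9 : RCLike.re (φ n ((T + lam • A) (y n))) - CC * ‖x₀ - y n‖
        ≤ RCLike.re (φ n ((T + lam • A) x₀)) := by
      have hdiff : RCLike.re (φ n ((T + lam • A) (y n))) - RCLike.re (φ n ((T + lam • A) x₀))
          = RCLike.re (φ n ((T + lam • A) (y n) - (T + lam • A) x₀)) := by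
        simp only [map_sub]
      have hb : RCLike.re (φ n ((T + lam • A) (y n) - (T + lam • A) x₀)) ≤ CC * ‖x₀ - y n‖ := by
        calc RCLike.re (φ n ((T + lam • A) (y n) - (T + lam • A) x₀))
            ≤ ‖φ n ((T + lam • A) (y n) - (T + lam • A) x₀)‖ := RCLike.re_le_norm _
          _ ≤ ‖φ n‖ * ‖(T + lam • A) (y n) - (T + lam • A) x₀‖ := (φ n).le_opNorm _
          _ ≤ 1 * (CC * ‖y n - x₀‖) := by
              rw [hφ1 n, ← map_sub]
              exact mul_le_mul_of_nonneg_left ((T + lam • A).le_opNorm _) zero_le_one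
          _ = CC * ‖x₀ - y n‖ := by rw [one_mul, norm_sub_rev]
      linarith
    have h10 : RCLike.re (φ n ((T + lam • A) x₀)) ≤ g := by
      calc RCLike.re (φ n ((T + lam • A) x₀)) ≤ ‖φ n ((T + lam • A) x₀)‖ := RCLike.re_le_norm _
        _ ≤ ‖φ n‖ * ‖(T + lam • A) x₀‖ := (φ n).le_opNorm _
        _ = g := by rw [hφ1 n, one_mul, hg]; simp
    have h8' : (1 - cn n) * r = r - cn n * r := by ring
    have hcc : 0 ≤ CC * ‖x₀ - y n‖ := by positivity
    linarith
  -- pass to the limit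
  have hlim : Tendsto (fun n => ‖T‖ - ε * ‖lam‖ -
      (ε * (cn n * ‖lam‖) + cn n * cn n + cn n + cn n * ‖lam‖ + CC * ‖x₀ - y n‖))
      atTop (𝓝 (‖T‖ - ε * ‖lam‖)) := by
    have hd : Tendsto (fun n => ‖x₀ - y n‖) atTop (𝓝 0) := by
      have h := (tendsto_const_nhds (x := x₀) (f := atTop)).sub hy
      simpa using h.norm
    have hz : Tendsto (fun n => ε * (cn n * ‖lam‖) + cn n * cn n + cn n + cn n * ‖lam‖
        + CC * ‖x₀ - y n‖) atTop (𝓝 0) := by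
      have h := ((((hcn0.mul_const ‖lam‖).const_mul ε).add (hcn0.mul hcn0)).add hcn0).add
        ((hcn0.mul_const ‖lam‖).add (hd.const_mul CC))
      simpa [add_assoc] using h.congr (fun n => by ring)
    simpa using tendsto_const_nhds.sub hz
  exact le_of_tendsto hlim (Eventually.of_forall key)




/-- Let `T ∈ L(X, Y)` be an absolutely strongly exposing operator with
`M_T = {μ • x₀ : |μ| = 1}`, `ε ∈ [0,1)` and `‖A‖ = 1`. Then `T ⊥_B^ε A` iff some norm-one
functional `y*` with `y*(T x₀) = ‖T‖` satisfies `|y*(A x₀)| ≤ ε`; moreover if `M_T ⊆ M_A`,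
then `T ⊥_B^ε A` iff `T x₀ ⊥_B^ε A x₀`. -/
theorem approx_BJ_orthogonality_of_ASE_operator
    {𝕜 X Y : Type*} [RCLike 𝕜]
    [NormedAddCommGroup X] [NormedSpace 𝕜 X] [CompleteSpace X]
    [NormedAddCommGroup Y] [NormedSpace 𝕜 Y] [CompleteSpace Y]
    (ε : ℝ) (hε0 : 0 ≤ ε) (hε1 : ε < 1)
    (T : X →L[𝕜] Y) (x₀ : X) (hx₀ : ‖x₀‖ = 1)
    (hASE : ∀ xs : ℕ → X, (∀ n, ‖xs n‖ ≤ 1) →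
      Tendsto (fun n => ‖T (xs n)‖) atTop (𝓝 ‖T‖) →
      ∃ θ : ℕ → 𝕜, (∀ n, ‖θ n‖ = 1) ∧ Tendsto (fun n => θ n • xs n) atTop (𝓝 x₀))
    (hMT : {x : X | ‖x‖ = 1 ∧ ‖T x‖ = ‖T‖} = {x : X | ∃ μ : 𝕜, ‖μ‖ = 1 ∧ x = μ • x₀})
    (A : X →L[𝕜] Y) (hA : ‖A‖ = 1) :
    ((∀ lam : 𝕜, ‖T‖ - ε * ‖lam • A‖ ≤ ‖T + lam • A‖) ↔
      ∃ φ : StrongDual 𝕜 Y, ‖φ‖ = 1 ∧ φ (T x₀) = (‖T‖ : 𝕜) ∧ ‖φ (A x₀)‖ ≤ ε) ∧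
    ({x : X | ‖x‖ = 1 ∧ ‖T x‖ = ‖T‖} ⊆ {x : X | ‖x‖ = 1 ∧ ‖A x‖ = ‖A‖} →
      ((∀ lam : 𝕜, ‖T‖ - ε * ‖lam • A‖ ≤ ‖T + lam • A‖) ↔
        ∀ lam : 𝕜, ‖T x₀‖ - ε * ‖lam • A x₀‖ ≤ ‖T x₀ + lam • A x₀‖)) := by
  -- basic facts
  have hTx₀ : ‖T x₀‖ = ‖T‖ := by
    have h1 : x₀ ∈ {x : X | ∃ μ : 𝕜, ‖μ‖ = 1 ∧ x = μ • x₀} :=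
      ⟨1, norm_one, (one_smul _ _).symm⟩
    rw [← hMT] at h1
    exact h1.2
  have hT0 : 0 < ‖T‖ := by
    rcases (norm_nonneg T).lt_or_eq with h | h
    · exact h
    · exfalso
      obtain ⟨θ, hθ1, hθ2⟩ := hASE (fun _ => 0) (fun _ => by simp)
        (by simpa [← h] using (tendsto_const_nhds : Tendsto (fun _ : ℕ => (0:ℝ)) atTop (𝓝 0)))
      have : Tendsto (fun _ : ℕ => (0 : X)) atTop (𝓝 x₀) := by simpa using hθ2
      have hx0 : x₀ = 0 := tendsto_nhds_unique (by simpa using this) this |>.symm ▸ by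
        exact (tendsto_nhds_unique tendsto_const_nhds this).symm
      rw [hx0, norm_zero] at hx₀
      exact one_ne_zero hx₀.symm
  haveI : Nontrivial Y := by
    refine nontrivial_of_ne (T x₀) 0 ?_
    intro h
    rw [h, norm_zero] at hTx₀
    exact hT0.ne hTx₀
  have hsmulA : ∀ lam : 𝕜, ‖lam • A‖ = ‖lam‖ := fun lam => by
    rw [norm_smul lam A, hA, mul_one]
  -- (*) ⇒ (i)
  have easy : (∀ lam : 𝕜, ‖T‖ - ε * ‖lam‖ ≤ ‖T x₀ + lam • A x₀‖) →
      ∀ lam : 𝕜, ‖T‖ - ε * ‖lam • A‖ ≤ ‖T + lam • A‖ := by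
    intro hstar lam
    rw [hsmulA lam]
    calc ‖T‖ - ε * ‖lam‖ ≤ ‖T x₀ + lam • A x₀‖ := hstar lam
      _ = ‖(T + lam • A) x₀‖ := by simp
      _ ≤ ‖T + lam • A‖ := (T + lam • A).unit_le_opNorm _ hx₀.le
  constructor
  · constructor
    · intro hi
      have hstar := fun lam => aux_ASE_key ε hε0 T x₀ hASE A hA hi lam
      obtain ⟨φ, h1, h2, h3⟩ := aux_star_to_dual hε0 hT0 (T x₀) (A x₀) hTx₀ hstar
      exact ⟨φ, h1, h2, h3⟩
    · rintro ⟨φ, h1, h2, h3⟩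
      refine easy ?_
      intro lam
      have hval : φ (T x₀ + lam • A x₀) = (‖T‖ : 𝕜) + lam * φ (A x₀) := by
        rw [map_add, h2, map_smul]; rfl
      calc ‖T‖ - ε * ‖lam‖
          ≤ ‖(‖T‖ : 𝕜)‖ - ‖lam * φ (A x₀)‖ := by
            rw [RCLike.norm_ofReal, abs_of_pos hT0, norm_mul]
            have : ‖lam‖ * ‖φ (A x₀)‖ ≤ ‖lam‖ * ε :=
              mul_le_mul_of_nonneg_left h3 (norm_nonneg _)
            linarith [this]
        _ ≤ ‖(‖T‖ : 𝕜) + lam * φ (A x₀)‖ := by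
            have h := norm_sub_norm_le ((‖T‖ : 𝕜)) (-(lam * φ (A x₀)))
            rwa [norm_neg, sub_neg_eq_add] at h
        _ = ‖φ (T x₀ + lam • A x₀)‖ := by rw [hval]
        _ ≤ ‖φ‖ * ‖T x₀ + lam • A x₀‖ := φ.le_opNorm _
        _ = ‖T x₀ + lam • A x₀‖ := by rw [h1, one_mul]
  · intro hsub
    have hAx₀ : ‖A x₀‖ = 1 := by
      have := (hsub ⟨hx₀, hTx₀⟩).2
      rw [this, hA]
    have hsmulAx : ∀ lam : 𝕜, ‖lam • A x₀‖ = ‖lam‖ := fun lam => by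
      rw [norm_smul lam (A x₀), hAx₀, mul_one]
    constructor
    · intro hi lam
      have := aux_ASE_key ε hε0 T x₀ hASE A hA hi lam
      rw [hTx₀, hsmulAx lam]
      exact this
    · intro hv
      refine easy ?_
      intro lam
      have := hv lam
      rwa [hTx₀, hsmulAx lam] at this
end

section
/- Let X and Y be Banach spaces and let T ∈ L(X, Y) be an absolutely strongly exposing operator with M_T = { μ x₀ : |μ| = 1 } for some x₀ ∈ S_X. Then for any A ∈ L(X, Y) with ‖A‖ = 1, one has T ⊥_B A if and only if T x₀ ⊥_B A x₀. -/
open Filter Topology Metric NormedSpace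

/-- Let `T ∈ L(X, Y)` be an absolutely strongly exposing operator with
`M_T = {μ • x₀ : |μ| = 1}`. Then for any `A` with `‖A‖ = 1`, `T ⊥_B A` iff
`T x₀ ⊥_B A x₀`. -/
theorem BJ_orthogonality_of_ASE_operator
    {𝕜 X Y : Type*} [RCLike 𝕜]
    [NormedAddCommGroup X] [NormedSpace 𝕜 X] [CompleteSpace X]
    [NormedAddCommGroup Y] [NormedSpace 𝕜 Y] [CompleteSpace Y]
    (T : X →L[𝕜] Y) (x₀ : X) (hx₀ : ‖x₀‖ = 1)
    (hASE : ∀ xs : ℕ → X, (∀ n, ‖xs n‖ ≤ 1) →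
      Tendsto (fun n => ‖T (xs n)‖) atTop (𝓝 ‖T‖) →
      ∃ θ : ℕ → 𝕜, (∀ n, ‖θ n‖ = 1) ∧ Tendsto (fun n => θ n • xs n) atTop (𝓝 x₀))
    (hMT : {x : X | ‖x‖ = 1 ∧ ‖T x‖ = ‖T‖} = {x : X | ∃ μ : 𝕜, ‖μ‖ = 1 ∧ x = μ • x₀})
    (A : X →L[𝕜] Y) (hA : ‖A‖ = 1) :
    (∀ lam : 𝕜, ‖T‖ ≤ ‖T + lam • A‖) ↔
      ∀ lam : 𝕜, ‖T x₀‖ ≤ ‖T x₀ + lam • A x₀‖ := by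
  have hTx₀ : ‖T x₀‖ = ‖T‖ := by
    have hx : x₀ ∈ {x : X | ‖x‖ = 1 ∧ ‖T x‖ = ‖T‖} := by
      rw [hMT]
      exact ⟨1, by simp, by simp⟩
    exact hx.2
  constructor
  · intro h lam
    rw [hTx₀]
    -- the perturbation scalars
    set c : ℕ → 𝕜 := fun n => ((n : 𝕜) + 1)⁻¹ * lam with hc
    have hk : ∀ n : ℕ, ‖((n : 𝕜) + 1)⁻¹‖ = ((n : ℝ) + 1)⁻¹ := by
      intro n
      rw [norm_inv]
      congr 1
      rw [show ((n:𝕜)+1) = ((n+1 : ℕ) : 𝕜) by push_cast; ring, RCLike.norm_natCast]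
      push_cast; ring
    have htpos : ∀ n : ℕ, (0:ℝ) < ((n:ℝ)+1)⁻¹ := by
      intro n; positivity
    -- almost-norming points
    have hexists : ∀ n : ℕ, ∃ x : X,
        ‖x‖ < 1 ∧ ‖T‖ - (((n:ℝ)+1)⁻¹)^2 < ‖(T + c n • A) x‖ := by
      intro n
      apply ContinuousLinearMap.exists_lt_apply_of_lt_opNorm
      have h1 := h (c n)
      have h2 : (0:ℝ) < (((n:ℝ)+1)⁻¹)^2 := by positivity
      linarith
    choose xs hxs1 hxs2 using hexists
    have hxs1' : ∀ n, ‖xs n‖ ≤ 1 := fun n => (hxs1 n).le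
    -- ‖T (xs n)‖ → ‖T‖
    have hlow : ∀ n : ℕ,
        ‖T‖ - (((n:ℝ)+1)⁻¹)^2 - ((n:ℝ)+1)⁻¹ * ‖lam‖ ≤ ‖T (xs n)‖ := by
      intro n
      have h1 : ‖(T + c n • A) (xs n)‖ ≤ ‖T (xs n)‖ + ‖c n‖ * ‖A (xs n)‖ := by
        simp only [ContinuousLinearMap.add_apply, ContinuousLinearMap.smul_apply]
        exact (norm_add_le _ _).trans (by rw [norm_smul])
      have h2 : ‖A (xs n)‖ ≤ 1 := by
        calc ‖A (xs n)‖ ≤ ‖A‖ * ‖xs n‖ := A.le_opNorm _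
          _ ≤ 1 := by rw [hA, one_mul]; exact hxs1' n
      have h3 : ‖c n‖ = ((n:ℝ)+1)⁻¹ * ‖lam‖ := by
        rw [hc]; simp only [norm_mul, hk n]
      have h4 := hxs2 n
      have h5 : ‖c n‖ * ‖A (xs n)‖ ≤ ‖c n‖ :=
        mul_le_of_le_one_right (norm_nonneg _) h2
      linarith
    have hup : ∀ n : ℕ, ‖T (xs n)‖ ≤ ‖T‖ := by
      intro n
      calc ‖T (xs n)‖ ≤ ‖T‖ * ‖xs n‖ := T.le_opNorm _
        _ ≤ ‖T‖ * 1 := by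
            exact mul_le_mul_of_nonneg_left (hxs1' n) (norm_nonneg T)
        _ = ‖T‖ := mul_one _
    have hinv0 : Tendsto (fun n : ℕ => ((n:ℝ)+1)⁻¹) atTop (𝓝 0) := by
      simpa using (tendsto_one_div_add_atTop_nhds_zero_nat :
        Tendsto (fun n : ℕ => 1 / ((n : ℝ) + 1)) atTop (𝓝 0))
    have hTlim : Tendsto (fun n => ‖T (xs n)‖) atTop (𝓝 ‖T‖) := by
      apply tendsto_of_tendsto_of_tendsto_of_le_of_le
        (g := fun n : ℕ => ‖T‖ - (((n:ℝ)+1)⁻¹)^2 - ((n:ℝ)+1)⁻¹ * ‖lam‖)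
        (h := fun _ : ℕ => ‖T‖) _ tendsto_const_nhds hlow hup
      have : Tendsto (fun n : ℕ =>
          ‖T‖ - (((n:ℝ)+1)⁻¹)^2 - ((n:ℝ)+1)⁻¹ * ‖lam‖) atTop
          (𝓝 (‖T‖ - 0^2 - 0 * ‖lam‖)) := by
        exact ((tendsto_const_nhds.sub (hinv0.pow 2)).sub (hinv0.mul_const _))
      simpa using this
    -- apply the ASE hypothesis
    obtain ⟨θ, hθ, hθtend⟩ := hASE xs hxs1' hTlim
    -- key inequality
    have hkey : ∀ n : ℕ, ‖T‖ - ((n:ℝ)+1)⁻¹ ≤ ‖(T + lam • A) (θ n • xs n)‖ := by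
      intro n
      set u : X := θ n • xs n with hu
      set t : ℝ := ((n:ℝ)+1)⁻¹ with htdef
      have hun : ‖u‖ ≤ 1 := by
        rw [hu, norm_smul, hθ n, one_mul]; exact hxs1' n
      -- norms are θ-invariant
      have hnorm_eq : ‖(T + c n • A) u‖ = ‖(T + c n • A) (xs n)‖ := by
        rw [hu, map_smul, norm_smul, hθ n, one_mul]
      -- convex decomposition
      have hid : (T + c n • A) u
          = (1 - ((n:𝕜)+1)⁻¹) • (T u) + ((n:𝕜)+1)⁻¹ • ((T + lam • A) u) := by
        simp only [ContinuousLinearMap.add_apply, ContinuousLinearMap.smul_apply, hc]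
        rw [smul_add, sub_smul, one_smul, smul_smul]
        abel
      have hone : ‖(1 : 𝕜) - ((n:𝕜)+1)⁻¹‖ = 1 - t := by
        have hcast : ((1 : 𝕜) - ((n:𝕜)+1)⁻¹) = (((1 - t : ℝ)) : 𝕜) := by
          rw [htdef]; push_cast; ring
        rw [hcast, RCLike.norm_ofReal, abs_of_nonneg]
        have : t ≤ 1 := by
          rw [htdef]
          rw [inv_le_one_iff₀]; right; linarith [Nat.cast_nonneg (α := ℝ) n]
        linarith
      have hTu : ‖T u‖ ≤ ‖T‖ := by
        calc ‖T u‖ ≤ ‖T‖ * ‖u‖ := T.le_opNorm _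
          _ ≤ ‖T‖ * 1 := mul_le_mul_of_nonneg_left hun (norm_nonneg T)
          _ = ‖T‖ := mul_one _
      have hbound : ‖T‖ - t^2 < (1 - t) * ‖T‖ + t * ‖(T + lam • A) u‖ := by
        have h6 := hxs2 n
        have h7 : ‖(T + c n • A) u‖
            ≤ (1 - t) * ‖T u‖ + t * ‖(T + lam • A) u‖ := by
          rw [hid]
          refine (norm_add_le _ _).trans ?_
          rw [norm_smul, norm_smul, hone, hk n, ← htdef]
        have ht1 : (1:ℝ) - t ≥ 0 := by
          have : t ≤ 1 := by
            rw [htdef, inv_le_one_iff₀]; right; linarith [Nat.cast_nonneg (α := ℝ) n]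
          linarith
        have h8 : (1 - t) * ‖T u‖ ≤ (1 - t) * ‖T‖ :=
          mul_le_mul_of_nonneg_left hTu ht1
        rw [← hnorm_eq] at h6
        calc ‖T‖ - t^2 < ‖(T + c n • A) u‖ := h6
          _ ≤ (1 - t) * ‖T u‖ + t * ‖(T + lam • A) u‖ := h7
          _ ≤ (1 - t) * ‖T‖ + t * ‖(T + lam • A) u‖ := by linarith
      have ht0 : (0:ℝ) < t := htpos n
      nlinarith [hbound]
    -- pass to the limit
    have hconv : Tendsto (fun n => ‖(T + lam • A) (θ n • xs n)‖) atTop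
        (𝓝 ‖(T + lam • A) x₀‖) :=
      (((T + lam • A).continuous.tendsto x₀).comp hθtend).norm
    have hlim2 : Tendsto (fun n : ℕ => ‖T‖ - ((n:ℝ)+1)⁻¹) atTop (𝓝 ‖T‖) := by
      have := Tendsto.sub
        (tendsto_const_nhds : Tendsto (fun _ : ℕ => ‖T‖) atTop (𝓝 ‖T‖)) hinv0
      simpa using this
    have hfinal : ‖T‖ ≤ ‖(T + lam • A) x₀‖ :=
      le_of_tendsto_of_tendsto' hlim2 hconv hkey
    simpa using hfinal
  · intro h lam
    calc ‖T‖ = ‖T x₀‖ := hTx₀.symm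
      _ ≤ ‖T x₀ + lam • A x₀‖ := h lam
      _ = ‖(T + lam • A) x₀‖ := by simp
      _ ≤ ‖T + lam • A‖ * ‖x₀‖ := (T + lam • A).le_opNorm x₀
      _ = ‖T + lam • A‖ := by rw [hx₀, mul_one]
end

section
/- Let X be a Banach space such that the set of strongly exposed points of B_X separates X* (i.e. for every nonzero x* ∈ X* there exists a strongly exposed point z of B_X with x*(z) ≠ 0), and let Y be any Banach space. If there exists a bounded linear operator from X to Y that is not compact, then the compact operators are anti-coproximinal in L(X, Y): for every nonzero S ∈ L(X, Y) there exists a compact operator T ∈ K(X, Y) such that ¬(T ⊥_B S). -/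
open Filter Topology Metric NormedSpace

/-- `z` is a strongly exposed point of the closed unit ball of `X`. -/
def IsStronglyExposedPoint (𝕜 : Type*) {X : Type*} [RCLike 𝕜] [NormedAddCommGroup X]
    [NormedSpace 𝕜 X] (z : X) : Prop :=
  ‖z‖ = 1 ∧ ∃ ψ : StrongDual 𝕜 X, ‖ψ‖ = 1 ∧ ψ z = 1 ∧
    ∀ xs : ℕ → X, (∀ n, ‖xs n‖ ≤ 1) →
      Tendsto (fun n => ψ (xs n)) atTop (𝓝 (1 : 𝕜)) → Tendsto xs atTop (𝓝 z)

private lemma exists_unit_mul {𝕜 : Type*} [RCLike 𝕜] (a : 𝕜) :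
    ∃ θ : 𝕜, ‖θ‖ = 1 ∧ θ * a = (‖a‖ : 𝕜) := by
  rcases eq_or_ne a 0 with rfl | h
  · exact ⟨1, norm_one, by simp⟩
  · have hc : (‖a‖ : 𝕜) ≠ 0 := by
      simpa using norm_ne_zero_iff.2 h
    refine ⟨(starRingEnd 𝕜) a / (‖a‖ : 𝕜), ?_, ?_⟩
    · rw [norm_div, RCLike.norm_conj, RCLike.norm_ofReal, abs_of_nonneg (norm_nonneg a),
        div_self (norm_ne_zero_iff.2 h)]
    · rw [div_mul_eq_mul_div, RCLike.conj_mul, sq, mul_div_assoc, div_self hc, mul_one]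

set_option maxHeartbeats 1000000 in
/-- If the strongly exposed points of `B_X` separate `X*` and some bounded
operator `X → Y` is not compact, then the compact operators are anti-coproximinal in
`L(X, Y)`: for every nonzero `S` there is a compact operator `T` with `¬(T ⊥_B S)`. -/
theorem compactOperators_antiCoproximinal_of_stronglyExposed_separating
    {𝕜 X Y : Type*} [RCLike 𝕜]
    [NormedAddCommGroup X] [NormedSpace 𝕜 X] [CompleteSpace X]
    [NormedAddCommGroup Y] [NormedSpace 𝕜 Y] [CompleteSpace Y]
    (hsep : ∀ φ : StrongDual 𝕜 X, φ ≠ 0 → ∃ z : X, IsStronglyExposedPoint 𝕜 z ∧ φ z ≠ 0)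
    (hnc : ∃ S₀ : X →L[𝕜] Y, ¬ IsCompactOperator S₀) :
    ∀ S : X →L[𝕜] Y, S ≠ 0 → ∃ T : X →L[𝕜] Y, IsCompactOperator T ∧
      ¬ ∀ lam : 𝕜, ‖T‖ ≤ ‖T + lam • S‖ := by
  intro S hS
  -- find x with S x ≠ 0
  obtain ⟨x, hx⟩ : ∃ x, S x ≠ 0 := by
    by_contra h
    push_neg at h
    exact hS (ContinuousLinearMap.ext fun u => by simp [h u])
  obtain ⟨g, hg1, hgx⟩ := exists_dual_vector 𝕜 (S x) (norm_ne_zero_iff.2 hx)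
  have hφ : g.comp S ≠ 0 := by
    intro h
    have h2 : g (S x) = 0 := by
      have := ContinuousLinearMap.ext_iff.1 h x
      simpa using this
    rw [hgx] at h2
    exact hx (norm_eq_zero.1 (by exact_mod_cast h2))
  obtain ⟨z, hzexp, hφz⟩ := hsep _ hφ
  obtain ⟨hz1, ψ, hψ1, hψz, hψexp⟩ := hzexp
  have hSz : S z ≠ 0 := by
    intro h
    exact hφz (by simp [ContinuousLinearMap.comp_apply, h])
  have hSzpos : 0 < ‖S z‖ := norm_pos_iff.2 hSz
  set T : X →L[𝕜] Y := ψ.smulRight (S z) with hT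
  have hTapp : ∀ u, T u = ψ u • S z := fun u => rfl
  refine ⟨T, ?_, ?_⟩
  · -- compactness of the rank one operator T
    refine ⟨(· • S z) '' closedBall (0 : 𝕜) 1,
      (isCompact_closedBall 0 1).image (continuous_id.smul continuous_const), ?_⟩
    filter_upwards [Metric.ball_mem_nhds (0 : X) one_pos] with u hu
    refine ⟨ψ u, ?_, rfl⟩
    rw [mem_closedBall_zero_iff]
    calc ‖ψ u‖ ≤ ‖ψ‖ * ‖u‖ := ψ.le_opNorm u
      _ ≤ 1 * 1 := by
          apply mul_le_mul (le_of_eq hψ1) (mem_ball_zero_iff.1 hu).le (norm_nonneg _) zero_le_one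
      _ = 1 := one_mul 1
  · intro hB
    have hTz : T z = S z := by rw [hTapp, hψz, one_smul]
    have hTnorm : ‖S z‖ ≤ ‖T‖ := by
      calc ‖S z‖ = ‖T z‖ := by rw [hTz]
        _ ≤ ‖T‖ * ‖z‖ := T.le_opNorm z
        _ = ‖T‖ := by rw [hz1, mul_one]
    set ε : ℕ → ℝ := fun n => 1 / (n + 2) with hε
    have hεpos : ∀ n, 0 < ε n := fun n => by positivity
    have hεle : ∀ n, ε n ≤ 1 / 2 := fun n => by
      apply div_le_div_of_nonneg_left one_pos.le two_pos
      · push_cast; linarith [Nat.cast_nonneg (α := ℝ) n]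
    have hε0 : Tendsto ε atTop (𝓝 0) := by
      apply squeeze_zero (fun n => (hεpos n).le) (g := fun n : ℕ => 1 / (n + 1))
      · intro n
        apply div_le_div_of_nonneg_left one_pos.le
        · positivity
        · push_cast; linarith
      · exact tendsto_one_div_add_atTop_nhds_zero_nat
    set lam : ℕ → 𝕜 := fun n => ((-(ε n) : ℝ) : 𝕜) with hlam
    set A : ℕ → X →L[𝕜] Y := fun n => T + lam n • S with hA
    have hAnorm : ∀ n, ‖S z‖ ≤ ‖A n‖ := fun n => le_trans hTnorm (hB (lam n))
    have hlt : ∀ n, ‖A n‖ - ε n ^ 2 < ‖A n‖ := fun n => by nlinarith [hεpos n]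
    choose xs hxs1 hxs2 using fun n => (A n).exists_lt_apply_of_lt_opNorm (hlt n)
    choose θ hθ1 hθmul using fun n => exists_unit_mul (𝕜 := 𝕜) (ψ (xs n))
    set ys : ℕ → X := fun n => θ n • xs n with hys
    set a : ℕ → ℝ := fun n => ‖ψ (xs n)‖ with ha
    have hys_le : ∀ n, ‖ys n‖ ≤ 1 := fun n => by
      rw [hys]; simp only [norm_smul, hθ1 n, one_mul]; exact (hxs1 n).le
    have hψys : ∀ n, ψ (ys n) = ((a n : ℝ) : 𝕜) := fun n => by
      rw [hys]; simp only [map_smul, smul_eq_mul]; exact hθmul n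
    have hAys : ∀ n, ‖A n (ys n)‖ = ‖A n (xs n)‖ := fun n => by
      rw [hys, map_smul, norm_smul, hθ1 n, one_mul]
    have ha01 : ∀ n, 0 ≤ a n ∧ a n ≤ 1 := fun n => by
      constructor
      · exact norm_nonneg _
      · calc ‖ψ (xs n)‖ ≤ ‖ψ‖ * ‖xs n‖ := ψ.le_opNorm _
          _ ≤ 1 * 1 := by
              apply mul_le_mul (le_of_eq hψ1) (hxs1 n).le (norm_nonneg _) zero_le_one
          _ = 1 := one_mul 1
    have hlow : ∀ n, ‖S z‖ - ε n ^ 2 < ‖A n (ys n)‖ := fun n => by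
      rw [hAys n]
      calc ‖S z‖ - ε n ^ 2 ≤ ‖A n‖ - ε n ^ 2 := by linarith [hAnorm n]
        _ < ‖A n (xs n)‖ := hxs2 n
    have hAys_expand : ∀ n, A n (ys n) = ((a n : ℝ) : 𝕜) • S z + lam n • S (ys n) := fun n => by
      rw [hA]
      simp only [ContinuousLinearMap.add_apply, ContinuousLinearMap.smul_apply]
      rw [hTapp, hψys n]
    -- a n → 1
    have hS0 : 0 ≤ ‖S‖ := norm_nonneg S
    have halow : ∀ n, 1 - (ε n ^ 2 + ε n * ‖S‖) / ‖S z‖ ≤ a n := by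
      intro n
      have h1 : ‖A n (ys n)‖ ≤ a n * ‖S z‖ + ε n * ‖S‖ := by
        rw [hAys_expand n]
        calc ‖((a n : ℝ) : 𝕜) • S z + lam n • S (ys n)‖
            ≤ ‖((a n : ℝ) : 𝕜) • S z‖ + ‖lam n • S (ys n)‖ := norm_add_le _ _
          _ ≤ a n * ‖S z‖ + ε n * ‖S‖ := by
              apply add_le_add
              · rw [norm_smul, RCLike.norm_ofReal, abs_of_nonneg (ha01 n).1]
              · rw [norm_smul, hlam]
                simp only [RCLike.norm_ofReal, abs_neg, abs_of_nonneg (hεpos n).le]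
                apply mul_le_mul_of_nonneg_left _ (hεpos n).le
                calc ‖S (ys n)‖ ≤ ‖S‖ * ‖ys n‖ := S.le_opNorm _
                  _ ≤ ‖S‖ * 1 := mul_le_mul_of_nonneg_left (hys_le n) hS0
                  _ = ‖S‖ := mul_one _
      have h2 := (hlow n).le.trans h1
      have hq : (ε n ^ 2 + ε n * ‖S‖) / ‖S z‖ * ‖S z‖ = ε n ^ 2 + ε n * ‖S‖ :=
        div_mul_cancel₀ _ hSzpos.ne'
      nlinarith [h2, hq, hSzpos]
    have ha1 : Tendsto a atTop (𝓝 1) := by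
      apply tendsto_of_tendsto_of_tendsto_of_le_of_le (g := fun n => 1 - (ε n ^ 2 + ε n * ‖S‖) / ‖S z‖)
        (h := fun _ => (1 : ℝ))
      · have : Tendsto (fun n => (ε n ^ 2 + ε n * ‖S‖) / ‖S z‖) atTop (𝓝 ((0 ^ 2 + 0 * ‖S‖) / ‖S z‖)) := by
          exact (((hε0.pow 2).add (hε0.mul_const ‖S‖)).div_const ‖S z‖)
        have h0 : ((0 : ℝ) ^ 2 + 0 * ‖S‖) / ‖S z‖ = 0 := by ring
        rw [h0] at this
        have h1 := (tendsto_const_nhds (x := (1 : ℝ))).sub this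
        rwa [sub_zero] at h1
      · exact tendsto_const_nhds
      · exact halow
      · exact fun n => (ha01 n).2
    have hψtend : Tendsto (fun n => ψ (ys n)) atTop (𝓝 (1 : 𝕜)) := by
      have : Tendsto (fun n => ((a n : ℝ) : 𝕜)) atTop (𝓝 (((1 : ℝ) : 𝕜))) :=
        (RCLike.continuous_ofReal.tendsto _).comp ha1
      rw [RCLike.ofReal_one] at this
      simpa only [hψys] using this
    have hystend : Tendsto ys atTop (𝓝 z) := hψexp ys hys_le hψtend
    -- key inequality
    have hkey : ∀ n, ‖S z‖ - ε n ≤ ‖S‖ * ‖ys n - z‖ := by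
      intro n
      have hup : ‖A n (ys n)‖ ≤ (1 - ε n) * ‖S z‖ + ε n * (‖S‖ * ‖ys n - z‖) := by
        have hrw : A n (ys n) = ((a n - ε n : ℝ) : 𝕜) • S z + lam n • (S (ys n) - S z) := by
          rw [hAys_expand n, hlam]
          push_cast
          simp only [sub_smul, smul_sub, neg_smul]
          abel
        rw [hrw]
        calc ‖((a n - ε n : ℝ) : 𝕜) • S z + lam n • (S (ys n) - S z)‖
            ≤ ‖((a n - ε n : ℝ) : 𝕜) • S z‖ + ‖lam n • (S (ys n) - S z)‖ := norm_add_le _ _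
          _ ≤ (1 - ε n) * ‖S z‖ + ε n * (‖S‖ * ‖ys n - z‖) := by
              apply add_le_add
              · rw [norm_smul, RCLike.norm_ofReal]
                apply mul_le_mul_of_nonneg_right _ (norm_nonneg _)
                rw [abs_le]
                constructor
                · linarith [(ha01 n).1, hεle n]
                · linarith [(ha01 n).2, (hεpos n).le]
              · rw [norm_smul, hlam]
                simp only [RCLike.norm_ofReal, abs_neg, abs_of_nonneg (hεpos n).le]
                apply mul_le_mul_of_nonneg_left _ (hεpos n).le
                have : S (ys n) - S z = S (ys n - z) := by rw [map_sub]
                rw [this]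
                exact S.le_opNorm _
      have h3 : ‖S z‖ - ε n ^ 2 < (1 - ε n) * ‖S z‖ + ε n * (‖S‖ * ‖ys n - z‖) :=
        lt_of_lt_of_le (hlow n) hup
      have h4 : ε n * (‖S z‖ - ε n) < ε n * (‖S‖ * ‖ys n - z‖) := by nlinarith
      exact ((mul_lt_mul_iff_right₀ (hεpos n)).1 h4).le
    -- pass to the limit: ‖S z‖ ≤ 0, contradiction
    have hlhs : Tendsto (fun n => ‖S z‖ - ε n) atTop (𝓝 (‖S z‖ - 0)) :=
      (tendsto_const_nhds).sub hε0
    have hrhs : Tendsto (fun n => ‖S‖ * ‖ys n - z‖) atTop (𝓝 (‖S‖ * 0)) := by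
      apply Tendsto.const_mul
      exact tendsto_iff_norm_sub_tendsto_zero.1 hystend
    have := le_of_tendsto_of_tendsto' hlhs hrhs hkey
    rw [sub_zero, mul_zero] at this
    linarith
end

section
/- Let X and Y be Banach spaces such that B_X equals the closed convex hull of the set of strongly exposed points of B_X. If there exists a bounded linear operator from X to Y that is not compact, then the compact operators are strongly anti-coproximinal in L(X, Y): for every nonzero S ∈ L(X, Y) and every ε ∈ [0,1) there exists a compact operator T ∈ K(X, Y) such that ¬(T ⊥_B^ε S). -/
open Filter Topology Metric NormedSpace

/-- A rank-one operator is compact. -/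
lemma isCompactOperator_smulRight_aux {𝕜 X Y : Type*} [RCLike 𝕜]
    [NormedAddCommGroup X] [NormedSpace 𝕜 X] [NormedAddCommGroup Y] [NormedSpace 𝕜 Y]
    (ψ : X →L[𝕜] 𝕜) (v : Y) : IsCompactOperator (ψ.smulRight v) := by
  refine ⟨(fun a : 𝕜 => a • v) '' closedBall 0 (‖ψ‖ + 1),
    (isCompact_closedBall 0 _).image (continuous_id.smul continuous_const), ?_⟩
  refine Filter.mem_of_superset (Metric.ball_mem_nhds 0 one_pos) ?_
  intro x hx
  rw [mem_ball, dist_zero_right] at hx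
  refine ⟨ψ x, ?_, rfl⟩
  rw [mem_closedBall, dist_zero_right]
  calc ‖ψ x‖ ≤ ‖ψ‖ * ‖x‖ := ψ.le_opNorm x
    _ ≤ ‖ψ‖ * 1 := by nlinarith [norm_nonneg ψ, hx.le]
    _ ≤ ‖ψ‖ + 1 := by nlinarith [norm_nonneg ψ]

set_option maxHeartbeats 1000000 in
/-- Let `X, Y` be Banach spaces such that `B_X` is the closed convex hull
of its strongly exposed points. If some bounded operator `X → Y` is not compact, then the
compact operators are strongly anti-coproximinal in `L(X, Y)`: for every nonzero `S` and
every `ε ∈ [0,1)` there is a compact operator `T` with `¬(T ⊥_B^ε S)`. -/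
theorem compactOperators_stronglyAntiCoproximinal_of_closedConvexHull_stronglyExposed
    {𝕜 X Y : Type*} [RCLike 𝕜]
    [NormedAddCommGroup X] [NormedSpace 𝕜 X] [CompleteSpace X]
    [NormedSpace ℝ X] [IsScalarTower ℝ 𝕜 X]
    [NormedAddCommGroup Y] [NormedSpace 𝕜 Y] [CompleteSpace Y]
    (hconv : closedBall (0 : X) 1 =
      closure (convexHull ℝ {z : X | IsStronglyExposedPoint 𝕜 z}))
    (hnc : ∃ S₀ : X →L[𝕜] Y, ¬ IsCompactOperator S₀) :
    ∀ S : X →L[𝕜] Y, S ≠ 0 → ∀ ε : ℝ, 0 ≤ ε → ε < 1 →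
      ∃ T : X →L[𝕜] Y, IsCompactOperator T ∧
        ¬ ∀ lam : 𝕜, ‖T‖ - ε * ‖lam • S‖ ≤ ‖T + lam • S‖ := by
  intro S hS ε hε0 hε1
  by_contra hcon
  push_neg at hcon
  have hS0 : 0 < ‖S‖ := norm_pos_iff.mpr hS
  set ε' : ℝ := (1 + ε) / 2 with hε'def
  have hεε' : ε < ε' := by rw [hε'def]; linarith
  have hε'1 : ε' < 1 := by rw [hε'def]; linarith
  have hε'0 : 0 < ε' := by rw [hε'def]; linarith
  -- Step 1: find a strongly exposed point z with ε' * ‖S‖ < ‖S z‖.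
  have key : ∃ z : X, IsStronglyExposedPoint 𝕜 z ∧ ε' * ‖S‖ < ‖S z‖ := by
    by_contra h
    push_neg at h
    set C : Set X := {x : X | ‖S x‖ ≤ ε' * ‖S‖} with hCdef
    have hSreal : ∀ (a : ℝ) (x : X), S (a • x) = (algebraMap ℝ 𝕜 a) • S x := by
      intro a x
      rw [← algebraMap_smul 𝕜 a x, map_smul]
    have hCc : Convex ℝ C := by
      intro x hx y hy a b ha hb hab
      simp only [hCdef, Set.mem_setOf_eq] at *
      have h1 : S (a • x + b • y) = (algebraMap ℝ 𝕜 a) • S x + (algebraMap ℝ 𝕜 b) • S y := by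
        rw [map_add, hSreal, hSreal]
      calc ‖S (a • x + b • y)‖
          ≤ ‖(algebraMap ℝ 𝕜 a) • S x‖ + ‖(algebraMap ℝ 𝕜 b) • S y‖ := by
            rw [h1]; exact norm_add_le _ _
        _ = a * ‖S x‖ + b * ‖S y‖ := by
            rw [norm_smul, norm_smul, norm_algebraMap', norm_algebraMap',
              Real.norm_of_nonneg ha, Real.norm_of_nonneg hb]
        _ ≤ a * (ε' * ‖S‖) + b * (ε' * ‖S‖) := by
            gcongr
        _ = ε' * ‖S‖ := by rw [← add_mul, hab, one_mul]
    have hCcl : IsClosed C := isClosed_le (S.continuous.norm) continuous_const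
    have hsub : closedBall (0 : X) 1 ⊆ C := by
      rw [hconv]
      exact closure_minimal (convexHull_min (fun z hz => h z hz) hCc) hCcl
    have hle : ‖S‖ ≤ ε' * ‖S‖ := by
      refine S.opNorm_le_bound (by positivity) ?_
      intro x
      rcases eq_or_ne x 0 with rfl | hx0
      · simp
      · have hx0' : (0 : ℝ) < ‖x‖ := norm_pos_iff.mpr hx0
        have hmem : (‖x‖⁻¹ : ℝ) • x ∈ closedBall (0 : X) 1 := by
          rw [mem_closedBall, dist_zero_right, norm_smul, Real.norm_of_nonneg
            (by positivity), inv_mul_cancel₀ hx0'.ne']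
        have := hsub hmem
        simp only [hCdef, Set.mem_setOf_eq] at this
        rw [hSreal, norm_smul, norm_algebraMap', Real.norm_of_nonneg (by positivity)] at this
        have h2 : ‖x‖ * (‖x‖⁻¹ * ‖S x‖) ≤ ‖x‖ * (ε' * ‖S‖) :=
          mul_le_mul_of_nonneg_left this hx0'.le
        rw [← mul_assoc, mul_inv_cancel₀ hx0'.ne', one_mul] at h2
        nlinarith [h2]
    nlinarith
  obtain ⟨z, ⟨hz1, ψ, hψ1, hψz, hψexp⟩, hSz⟩ := key
  have hSz0 : 0 < ‖S z‖ := lt_of_le_of_lt (by positivity) hSz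
  -- The rank-one operators
  set T : ℕ → X →L[𝕜] Y := fun n => ψ.smulRight (((n + 2 : ℕ) : 𝕜) • S z) with hTdef
  have hNnorm : ∀ n : ℕ, ‖((n + 2 : ℕ) : 𝕜)‖ = (n : ℝ) + 2 := by
    intro n
    rw [RCLike.norm_natCast]
    push_cast
    ring
  have hTnorm : ∀ n : ℕ, ‖T n‖ = ((n : ℝ) + 2) * ‖S z‖ := by
    intro n
    rw [hTdef]
    simp only
    rw [ContinuousLinearMap.norm_smulRight_apply, hψ1, one_mul, norm_smul, hNnorm]
  have hTapp : ∀ (n : ℕ) (x : X), T n x = (((n + 2 : ℕ) : 𝕜) * ψ x) • S z := by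
    intro n x
    rw [hTdef]
    simp only [ContinuousLinearMap.smulRight_apply]
    rw [smul_smul, mul_comm]
  have hTcomp : ∀ n : ℕ, IsCompactOperator (T n) := fun n =>
    isCompactOperator_smulRight_aux ψ _
  -- lower bound on ‖T n - S‖ from the orthogonality assumption
  have hlow : ∀ n : ℕ, ((n : ℝ) + 2) * ‖S z‖ - ε * ‖S‖ ≤ ‖T n - S‖ := by
    intro n
    have := hcon (T n) (hTcomp n) (-1 : 𝕜)
    rw [neg_one_smul] at this
    rw [norm_neg] at this
    rw [← sub_eq_add_neg] at this
    rw [hTnorm n] at this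
    exact this
  -- choose near-maximizing, rotated points
  have hex : ∀ n : ℕ, ∃ x : X, ‖x‖ ≤ 1 ∧ ψ x = ((‖ψ x‖ : ℝ) : 𝕜) ∧
      ((n : ℝ) + 2) * ‖S z‖ - ε * ‖S‖ - 1 / ((n : ℝ) + 2) < ‖(T n - S) x‖ := by
    intro n
    have hlt : ((n : ℝ) + 2) * ‖S z‖ - ε * ‖S‖ - 1 / ((n : ℝ) + 2) < ‖T n - S‖ := by
      have h2 : (0 : ℝ) < 1 / ((n : ℝ) + 2) := by positivity
      linarith [hlow n]
    obtain ⟨y, hy1, hy2⟩ := (T n - S).exists_lt_apply_of_lt_opNorm hlt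
    by_cases h0 : ψ y = 0
    · exact ⟨y, hy1.le, by rw [h0]; simp, hy2⟩
    · set θ : 𝕜 := ((‖ψ y‖ : ℝ) : 𝕜) / ψ y with hθdef
      have hθ : ‖θ‖ = 1 := by
        rw [hθdef, norm_div, RCLike.norm_ofReal, abs_norm,
          div_self (norm_ne_zero_iff.mpr h0)]
      have hψθ : ψ (θ • y) = ((‖ψ y‖ : ℝ) : 𝕜) := by
        rw [map_smul, smul_eq_mul, hθdef, div_mul_cancel₀ _ h0]
      refine ⟨θ • y, ?_, ?_, ?_⟩
      · rw [norm_smul, hθ, one_mul]; exact hy1.le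
      · rw [hψθ, RCLike.norm_ofReal, abs_norm]
      · rw [map_smul, norm_smul, hθ, one_mul]; exact hy2
  choose x hx1 hx2 hx3 using hex
  set r : ℕ → ℝ := fun n => ‖ψ (x n)‖ with hrdef
  have hr0 : ∀ n, 0 ≤ r n := fun n => norm_nonneg _
  have hr1 : ∀ n, r n ≤ 1 := by
    intro n
    calc r n ≤ ‖ψ‖ * ‖x n‖ := ψ.le_opNorm (x n)
      _ ≤ 1 := by rw [hψ1, one_mul]; exact hx1 n
  have hSxn : ∀ n, ‖S (x n)‖ ≤ ‖S‖ := by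
    intro n
    calc ‖S (x n)‖ ≤ ‖S‖ * ‖x n‖ := S.le_opNorm (x n)
      _ ≤ ‖S‖ * 1 := by nlinarith [hx1 n, hS0.le]
      _ = ‖S‖ := mul_one _
  -- lower bound on r n
  have hrlow : ∀ n : ℕ, 1 - ((1 + ε) * ‖S‖ + 1) / ‖S z‖ / ((n : ℝ) + 2) ≤ r n := by
    intro n
    have hub : ‖(T n - S) (x n)‖ ≤ ((n : ℝ) + 2) * r n * ‖S z‖ + ‖S‖ := by
      calc ‖(T n - S) (x n)‖ = ‖T n (x n) - S (x n)‖ := by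
            rw [ContinuousLinearMap.sub_apply]
        _ ≤ ‖T n (x n)‖ + ‖S (x n)‖ := norm_sub_le _ _
        _ ≤ ((n : ℝ) + 2) * r n * ‖S z‖ + ‖S‖ := by
            refine add_le_add ?_ (hSxn n)
            rw [hTapp, norm_smul, norm_mul, hNnorm]
    have hn2 : (0 : ℝ) < (n : ℝ) + 2 := by positivity
    have hinv : 1 / ((n : ℝ) + 2) ≤ 1 :=
      div_le_one_of_le₀ (by linarith) hn2.le
    have h3 := (hx3 n).le.trans hub
    have hpos : (0 : ℝ) < ‖S z‖ * ((n : ℝ) + 2) := by positivity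
    have hmain : (1 - r n) * (‖S z‖ * ((n : ℝ) + 2)) ≤ (1 + ε) * ‖S‖ + 1 := by
      nlinarith [h3, hinv, hSz0]
    have h4 : 1 - r n ≤ ((1 + ε) * ‖S‖ + 1) / (‖S z‖ * ((n : ℝ) + 2)) :=
      (le_div_iff₀ hpos).mpr hmain
    rw [div_div]
    linarith [h4]
  -- r n → 1
  have hrT : Tendsto r atTop (𝓝 1) := by
    have hC : Tendsto (fun n : ℕ => 1 - ((1 + ε) * ‖S‖ + 1) / ‖S z‖ / ((n : ℝ) + 2))
        atTop (𝓝 1) := by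
      have h1 : Tendsto (fun n : ℕ => ((1 + ε) * ‖S‖ + 1) / ‖S z‖ / ((n : ℝ) + 2))
          atTop (𝓝 0) := by
        have h2 := (tendsto_const_div_atTop_nhds_zero_nat
          (((1 + ε) * ‖S‖ + 1) / ‖S z‖)).comp (tendsto_add_atTop_nat 2)
        have heq : (fun n : ℕ => ((1 + ε) * ‖S‖ + 1) / ‖S z‖ / ((n : ℝ) + 2)) =
            (fun n : ℕ => ((1 + ε) * ‖S‖ + 1) / ‖S z‖ / (n : ℝ)) ∘ (· + 2) := by
          funext n
          simp only [Function.comp_apply]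
          norm_cast
        rw [heq]
        exact h2
      have h3 := ((tendsto_const_nhds :
        Tendsto (fun _ : ℕ => (1 : ℝ)) atTop (𝓝 1)).sub h1)
      simpa using h3
    exact tendsto_of_tendsto_of_tendsto_of_le_of_le hC tendsto_const_nhds hrlow hr1
  -- ψ (x n) → 1 in 𝕜
  have hψT : Tendsto (fun n => ψ (x n)) atTop (𝓝 (1 : 𝕜)) := by
    have h1 : Tendsto (fun n : ℕ => ((r n : ℝ) : 𝕜)) atTop (𝓝 ((1 : ℝ) : 𝕜)) :=
      (RCLike.continuous_ofReal.tendsto 1).comp hrT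
    rw [RCLike.ofReal_one] at h1
    have heq : (fun n => ψ (x n)) = fun n : ℕ => ((r n : ℝ) : 𝕜) :=
      funext fun n => hx2 n
    rw [heq]
    exact h1
  -- strong exposedness: x n → z
  have hxz : Tendsto x atTop (𝓝 z) := hψexp x hx1 hψT
  have hSxz : Tendsto (fun n => ‖S z - S (x n)‖) atTop (𝓝 0) := by
    have h1 : Tendsto (fun n => S (x n)) atTop (𝓝 (S z)) :=
      (S.continuous.tendsto z).comp hxz
    have h2 := ((tendsto_const_nhds :
      Tendsto (fun _ : ℕ => S z) atTop (𝓝 (S z))).sub h1)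
    rw [sub_self] at h2
    simpa using h2.norm
  -- final inequality per n
  have hfin : ∀ n : ℕ, ‖S z‖ - ε * ‖S‖ - 1 / ((n : ℝ) + 2) ≤ ‖S z - S (x n)‖ := by
    intro n
    have hub : ‖(T n - S) (x n)‖ ≤ ((n : ℝ) + 1) * ‖S z‖ + ‖S z - S (x n)‖ := by
      have hdec : (T n - S) (x n) =
          (((((n : ℝ) + 2) * r n - 1 : ℝ)) : 𝕜) • S z + (S z - S (x n)) := by
        rw [ContinuousLinearMap.sub_apply, hTapp, hx2 n]
        simp only [hrdef]
        push_cast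
        rw [sub_smul, one_smul]
        abel
      have habs : |((n : ℝ) + 2) * r n - 1| ≤ (n : ℝ) + 1 := by
        rw [abs_le]
        constructor
        · nlinarith [hr0 n]
        · nlinarith [hr1 n, hr0 n]
      calc ‖(T n - S) (x n)‖
          ≤ ‖(((((n : ℝ) + 2) * r n - 1 : ℝ)) : 𝕜) • S z‖ + ‖S z - S (x n)‖ := by
            rw [hdec]; exact norm_add_le _ _
        _ ≤ ((n : ℝ) + 1) * ‖S z‖ + ‖S z - S (x n)‖ := by
            refine add_le_add ?_ le_rfl
            rw [norm_smul, RCLike.norm_ofReal]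
            exact mul_le_mul_of_nonneg_right habs hSz0.le
    have := (hx3 n).le.trans hub
    nlinarith [this]
  -- take limits
  have hlim : ‖S z‖ - ε * ‖S‖ ≤ 0 := by
    have hL : Tendsto (fun n : ℕ => ‖S z‖ - ε * ‖S‖ - 1 / ((n : ℝ) + 2)) atTop
        (𝓝 (‖S z‖ - ε * ‖S‖)) := by
      have h1 : Tendsto (fun n : ℕ => 1 / ((n : ℝ) + 2)) atTop (𝓝 0) := by
        have h2 := (tendsto_const_div_atTop_nhds_zero_nat (1 : ℝ)).comp (tendsto_add_atTop_nat 2)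
        have heq : (fun n : ℕ => 1 / ((n : ℝ) + 2)) =
            (fun n : ℕ => 1 / (n : ℝ)) ∘ (· + 2) := by
          funext n
          simp only [Function.comp_apply]
          norm_cast
        rw [heq]
        exact h2
      have h3 := ((tendsto_const_nhds :
        Tendsto (fun _ : ℕ => ‖S z‖ - ε * ‖S‖) atTop (𝓝 (‖S z‖ - ε * ‖S‖))).sub h1)
      simpa using h3
    exact le_of_tendsto_of_tendsto' hL hSxz hfin
  nlinarith [hSz, hS0, hεε']
end
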